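/- arXiv:1112.2351 — 7 statements merged into one kernel-verified Lean document; each statement's English description precedes it below -/
import Mathlib

section
/- Let p, r : [0,1] → ℝ be continuous with p(x) > 0 and r(x) > 0 for all x ∈ [0,1]. Let y be a nontrivial classical solution of (p·y'')'' − r·y = 0 on [0,1] (i.e. y ∈ C²([0,1],ℝ), p·y'' ∈ C²([0,1],ℝ), not identically zero, and (p·y'')''(x) = r(x)·y(x) for all x). If for some a ∈ [0,1) one has y(a) ≥ 0, y'(a) ≥ 0, y''(a) ≥ 0 and (p·y'')'(a) ≥ 0, then y(1) > 0, y'(1) > 0, y''(1) > 0 and (p·y'')'(1) > 0. -/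
open Set intervalIntegral MeasureTheory Topology Filter Metric

section Helpers

lemma gron_fwd {α β C : ℝ} (hab : α ≤ β) {G g : ℝ → ℝ}
    (hcont : ContinuousOn G (Icc α β))
    (hG : ∀ t ∈ Icc α β, HasDerivWithinAt G (g t) (Icc α β) t)
    (hle : ∀ t ∈ Icc α β, g t ≤ C * G t) (h0 : G α ≤ 0) :
    ∀ t ∈ Icc α β, G t ≤ 0 := by
  set H : ℝ → ℝ := fun t => G t * Real.exp (-C * t) with hH
  have hHd : ∀ t ∈ Icc α β,
      HasDerivWithinAt H ((g t - C * G t) * Real.exp (-C * t)) (Icc α β) t := by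
    intro t ht
    have he : HasDerivAt (fun s : ℝ => Real.exp (-C * s)) (-C * Real.exp (-C * t)) t := by
      have := ((hasDerivAt_id t).const_mul (-C)).exp
      simpa [mul_comm] using this
    have := (hG t ht).mul he.hasDerivWithinAt
    convert this using 1
    all_goals first | rfl | ring
  have hanti : AntitoneOn H (Icc α β) := by
    apply antitoneOn_of_deriv_nonpos (convex_Icc α β)
    · exact (hcont.mul (Real.continuous_exp.comp (continuous_const.mul continuous_id)).continuousOn)
    · intro x hx
      rw [interior_Icc] at hx
      exact ((hHd x (Ioo_subset_Icc_self hx)).hasDerivAt (Icc_mem_nhds hx.1 hx.2)).differentiableAt.differentiableWithinAt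
    · intro x hx
      rw [interior_Icc] at hx
      have hd := (hHd x (Ioo_subset_Icc_self hx)).hasDerivAt (Icc_mem_nhds hx.1 hx.2)
      rw [hd.deriv]
      have := hle x (Ioo_subset_Icc_self hx)
      have := Real.exp_pos (-C * x)
      nlinarith
  intro t ht
  have := hanti (left_mem_Icc.2 hab) ht ht.1
  have he := Real.exp_pos (-C * t)
  simp only [hH] at this
  nlinarith [Real.exp_pos (-C * α)]

lemma gron_bwd {α β C : ℝ} (hab : α ≤ β) {G g : ℝ → ℝ}
    (hcont : ContinuousOn G (Icc α β))
    (hG : ∀ t ∈ Icc α β, HasDerivWithinAt G (g t) (Icc α β) t)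
    (hle : ∀ t ∈ Icc α β, -(C * G t) ≤ g t) (h0 : G β ≤ 0) :
    ∀ t ∈ Icc α β, G t ≤ 0 := by
  set H : ℝ → ℝ := fun t => G t * Real.exp (C * t) with hH
  have hHd : ∀ t ∈ Icc α β,
      HasDerivWithinAt H ((g t + C * G t) * Real.exp (C * t)) (Icc α β) t := by
    intro t ht
    have he : HasDerivAt (fun s : ℝ => Real.exp (C * s)) (C * Real.exp (C * t)) t := by
      have := ((hasDerivAt_id t).const_mul C).exp
      simpa [mul_comm] using this
    have := (hG t ht).mul he.hasDerivWithinAt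
    convert this using 1
    all_goals first | rfl | ring
  have hmono : MonotoneOn H (Icc α β) := by
    apply monotoneOn_of_deriv_nonneg (convex_Icc α β)
    · exact (hcont.mul (Real.continuous_exp.comp (continuous_const.mul continuous_id)).continuousOn)
    · intro x hx
      rw [interior_Icc] at hx
      exact ((hHd x (Ioo_subset_Icc_self hx)).hasDerivAt (Icc_mem_nhds hx.1 hx.2)).differentiableAt.differentiableWithinAt
    · intro x hx
      rw [interior_Icc] at hx
      have hd := (hHd x (Ioo_subset_Icc_self hx)).hasDerivAt (Icc_mem_nhds hx.1 hx.2)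
      rw [hd.deriv]
      have := hle x (Ioo_subset_Icc_self hx)
      have := Real.exp_pos (C * x)
      nlinarith
  intro t ht
  have := hmono ht (right_mem_Icc.2 hab) ht.2
  have he := Real.exp_pos (C * t)
  simp only [hH] at this
  nlinarith [Real.exp_pos (C * β)]

lemma ftc_sub {f f' : ℝ → ℝ} {c d : ℝ} (hc : (0:ℝ) ≤ c) (hcd : c ≤ d) (hd : d ≤ 1)
    (hcont : ContinuousOn f (Icc 0 1)) (hcont' : ContinuousOn f' (Icc 0 1))
    (hder : ∀ x ∈ Icc (0:ℝ) 1, HasDerivWithinAt f (f' x) (Icc 0 1) x) :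
    ∫ s in c..d, f' s = f d - f c := by
  have hsub : Icc c d ⊆ Icc (0:ℝ) 1 := Icc_subset_Icc hc hd
  apply integral_eq_sub_of_hasDeriv_right_of_le hcd (hcont.mono hsub)
  · intro x hx
    have hx01 : x ∈ Ioo (0:ℝ) 1 := ⟨lt_of_le_of_lt hc hx.1, lt_of_lt_of_le hx.2 hd⟩
    exact (((hder x (Ioo_subset_Icc_self hx01)).hasDerivAt
      (Icc_mem_nhds hx01.1 hx01.2)).hasDerivWithinAt)
  · exact (hcont'.mono (by rw [uIcc_of_le hcd]; exact hsub)).intervalIntegrable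

lemma ftc_deriv' {f : ℝ → ℝ} {c d b t : ℝ} (hc : (0:ℝ) ≤ c) (hd : d ≤ 1)
    (hb : b ∈ Icc c d) (ht : t ∈ Icc c d) (hcont : ContinuousOn f (Icc 0 1)) :
    HasDerivWithinAt (fun u => ∫ s in b..u, f s) (f t) (Icc c d) t := by
  haveI : Fact (t ∈ Icc c d) := ⟨ht⟩
  apply integral_hasDerivWithinAt_right
  · exact (hcont.mono (subset_trans (uIcc_subset_Icc hb ht) (Icc_subset_Icc hc hd))).intervalIntegrable
  · exact (hcont.mono (Icc_subset_Icc hc hd)).stronglyMeasurableAtFilter_nhdsWithin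
      measurableSet_Icc t
  · exact (hcont.mono (Icc_subset_Icc hc hd)).continuousWithinAt ht

lemma vanish_at {f : ℝ → ℝ} {a : ℝ} (hf : ContinuousOn f (Icc 0 1)) (ha : a ∈ Ico (0:ℝ) 1)
    (h : ∀ x ∈ Ioo a 1, f x = 0) : f a = 0 := by
  have hmem : a ∈ Icc (0:ℝ) 1 := ⟨ha.1, ha.2.le⟩
  have hne : (𝓝[Ioo a 1] a).NeBot := by
    apply mem_closure_iff_nhdsWithin_neBot.mp
    rw [closure_Ioo ha.2.ne]
    exact ⟨le_rfl, ha.2.le⟩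
  have h1 : Filter.Tendsto f (𝓝[Ioo a 1] a) (𝓝 (f a)) :=
    (hf.continuousWithinAt hmem).mono (fun x hx => ⟨le_trans ha.1 hx.1.le, hx.2.le⟩)
  have h2 : Filter.Tendsto f (𝓝[Ioo a 1] a) (𝓝 0) := by
    apply Filter.Tendsto.congr' _ tendsto_const_nhds
    filter_upwards [self_mem_nhdsWithin] with x hx
    exact (h x hx).symm
  exact tendsto_nhds_unique h1 h2

lemma pos_near {f : ℝ → ℝ} {a : ℝ} (hf : ContinuousOn f (Icc 0 1)) (ha : a ∈ Ico (0:ℝ) 1)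
    (h1 : 0 < f 1) : ∃ c ∈ Ico a 1, ∀ t ∈ Icc c 1, 0 < f t := by
  have hc1 : ContinuousWithinAt f (Icc 0 1) 1 := hf.continuousWithinAt ⟨zero_le_one, le_rfl⟩
  have hev : ∀ᶠ x in 𝓝[Icc (0:ℝ) 1] 1, 0 < f x := hc1.eventually_const_lt h1
  rw [Filter.Eventually, Metric.mem_nhdsWithin_iff] at hev
  obtain ⟨ε, hε, hball⟩ := hev
  refine ⟨max a (1 - ε / 2), ⟨le_max_left _ _, ?_⟩, ?_⟩
  · apply max_lt ha.2; linarith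
  · intro t ht
    have h1e : 1 - ε / 2 ≤ t := le_trans (le_max_right _ _) ht.1
    have ht2 : t ≤ 1 := ht.2
    have : t ∈ ball (1:ℝ) ε ∩ Icc 0 1 := by
      constructor
      · rw [mem_ball, Real.dist_eq, abs_lt]; constructor <;> linarith
      · exact ⟨le_trans ha.1 (le_trans (le_max_left _ _) ht.1), ht.2⟩
    exact hball this

lemma smono_lt {f f' : ℝ → ℝ} {c : ℝ} (hc : c ∈ Ico (0:ℝ) 1)
    (hcont : ContinuousOn f (Icc 0 1))
    (hd : ∀ x ∈ Icc (0:ℝ) 1, HasDerivWithinAt f (f' x) (Icc 0 1) x)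
    (hpos : ∀ x ∈ Ioo c 1, 0 < f' x) : f c < f 1 := by
  have hsub : Icc c 1 ⊆ Icc (0:ℝ) 1 := Icc_subset_Icc hc.1 le_rfl
  have : StrictMonoOn f (Icc c 1) := by
    apply strictMonoOn_of_deriv_pos (convex_Icc c 1) (hcont.mono hsub)
    intro x hx
    rw [interior_Icc] at hx
    have hx01 : x ∈ Ioo (0:ℝ) 1 := ⟨lt_of_le_of_lt hc.1 hx.1, hx.2⟩
    rw [((hd x (Ioo_subset_Icc_self hx01)).hasDerivAt (Icc_mem_nhds hx01.1 hx01.2)).deriv]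
    exact hpos x hx
  exact this (left_mem_Icc.2 hc.2.le) (right_mem_Icc.2 hc.2.le) hc.2

lemma mono_le {f f' : ℝ → ℝ} {c : ℝ} (hc : c ∈ Ico (0:ℝ) 1)
    (hcont : ContinuousOn f (Icc 0 1))
    (hd : ∀ x ∈ Icc (0:ℝ) 1, HasDerivWithinAt f (f' x) (Icc 0 1) x)
    (hpos : ∀ x ∈ Ioo c 1, 0 ≤ f' x) : MonotoneOn f (Icc c 1) := by
  have hsub : Icc c 1 ⊆ Icc (0:ℝ) 1 := Icc_subset_Icc hc.1 le_rfl
  apply monotoneOn_of_deriv_nonneg (convex_Icc c 1) (hcont.mono hsub)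
  · intro x hx
    rw [interior_Icc] at hx
    have hx01 : x ∈ Ioo (0:ℝ) 1 := ⟨lt_of_le_of_lt hc.1 hx.1, hx.2⟩
    exact ((hd x (Ioo_subset_Icc_self hx01)).hasDerivAt
      (Icc_mem_nhds hx01.1 hx01.2)).differentiableAt.differentiableWithinAt
  · intro x hx
    rw [interior_Icc] at hx
    have hx01 : x ∈ Ioo (0:ℝ) 1 := ⟨lt_of_le_of_lt hc.1 hx.1, hx.2⟩
    rw [((hd x (Ioo_subset_Icc_self hx01)).hasDerivAt (Icc_mem_nhds hx01.1 hx01.2)).deriv]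
    exact hpos x hx

end Helpers

/-- Derivative within the interval `[0,1]`. -/
noncomputable def Dv (y : ℝ → ℝ) : ℝ → ℝ := derivWithin y (Set.Icc 0 1)

set_option maxHeartbeats 1000000 in
theorem stmt_0 (p r y : ℝ → ℝ)
    (hpc : ContinuousOn p (Icc 0 1)) (hrc : ContinuousOn r (Icc 0 1))
    (hp : ∀ x ∈ Icc (0:ℝ) 1, 0 < p x) (hr : ∀ x ∈ Icc (0:ℝ) 1, 0 < r x)
    (hy : ContDiffOn ℝ 2 y (Icc 0 1))
    (hpy : ContDiffOn ℝ 2 (fun x => p x * Dv (Dv y) x) (Icc 0 1))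
    (heq : ∀ x ∈ Icc (0:ℝ) 1, Dv (Dv (fun t => p t * Dv (Dv y) t)) x = r x * y x)
    (hnt : ∃ x ∈ Icc (0:ℝ) 1, y x ≠ 0)
    (a : ℝ) (ha : a ∈ Ico (0:ℝ) 1)
    (h1 : 0 ≤ y a) (h2 : 0 ≤ Dv y a) (h3 : 0 ≤ Dv (Dv y) a)
    (h4 : 0 ≤ Dv (fun t => p t * Dv (Dv y) t) a) :
    0 < y 1 ∧ 0 < Dv y 1 ∧ 0 < Dv (Dv y) 1 ∧
      0 < Dv (fun t => p t * Dv (Dv y) t) 1 := by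
  have hs : UniqueDiffOn ℝ (Icc (0:ℝ) 1) := uniqueDiffOn_Icc one_pos
  have haI : a ∈ Icc (0:ℝ) 1 := ⟨ha.1, ha.2.le⟩
  have h1I : (1:ℝ) ∈ Icc (0:ℝ) 1 := ⟨zero_le_one, le_rfl⟩
  set y1 : ℝ → ℝ := Dv y with hy1def
  set y2 : ℝ → ℝ := Dv y1 with hy2def
  set u : ℝ → ℝ := fun t => p t * y2 t with hudef
  set u1 : ℝ → ℝ := Dv u with hu1def
  -- basic regularity facts
  have hyc : ContinuousOn y (Icc 0 1) := hy.continuousOn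
  have hy1C : ContDiffOn ℝ 1 y1 (Icc 0 1) := hy.derivWithin hs (by norm_num)
  have hy1c : ContinuousOn y1 (Icc 0 1) := hy1C.continuousOn
  have hy2c : ContinuousOn y2 (Icc 0 1) := by
    have h : ContDiffOn ℝ 0 (derivWithin y1 (Icc 0 1)) (Icc 0 1) :=
      hy1C.derivWithin hs (by norm_num)
    exact h.continuousOn
  have huc : ContinuousOn u (Icc 0 1) := hpy.continuousOn
  have hu1C : ContDiffOn ℝ 1 u1 (Icc 0 1) := hpy.derivWithin hs (by norm_num)
  have hu1c : ContinuousOn u1 (Icc 0 1) := hu1C.continuousOn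
  have hyd : ∀ x ∈ Icc (0:ℝ) 1, HasDerivWithinAt y (y1 x) (Icc 0 1) x :=
    fun x hx => ((hy.differentiableOn (by norm_num)) x hx).hasDerivWithinAt
  have hy1d : ∀ x ∈ Icc (0:ℝ) 1, HasDerivWithinAt y1 (y2 x) (Icc 0 1) x :=
    fun x hx => ((hy1C.differentiableOn one_ne_zero) x hx).hasDerivWithinAt
  have hud : ∀ x ∈ Icc (0:ℝ) 1, HasDerivWithinAt u (u1 x) (Icc 0 1) x :=
    fun x hx => ((hpy.differentiableOn (by norm_num)) x hx).hasDerivWithinAt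
  have hu1d : ∀ x ∈ Icc (0:ℝ) 1, HasDerivWithinAt u1 (r x * y x) (Icc 0 1) x := by
    intro x hx
    have h := ((hu1C.differentiableOn one_ne_zero) x hx).hasDerivWithinAt
    rwa [show derivWithin u1 (Icc 0 1) x = r x * y x from heq x hx] at h
  have hy2u : ∀ x ∈ Icc (0:ℝ) 1, y2 x = u x / p x := by
    intro x hx
    have hpx := (hp x hx).ne'
    rw [hudef]
    field_simp
  -- the bound K
  obtain ⟨K1, hK1⟩ := isCompact_Icc.exists_bound_of_continuousOn hrc
  obtain ⟨K2, hK2⟩ := isCompact_Icc.exists_bound_of_continuousOn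
    (hpc.inv₀ (fun x hx => (hp x hx).ne'))
  set K : ℝ := max 1 (max K1 K2) with hKdef
  have hK1le : (1:ℝ) ≤ K := le_max_left _ _
  have hK0 : (0:ℝ) < K := lt_of_lt_of_le one_pos hK1le
  have hKr : ∀ x ∈ Icc (0:ℝ) 1, r x ≤ K ∧ |r x| ≤ K := by
    intro x hx
    have := hK1 x hx
    rw [Real.norm_eq_abs] at this
    have h2 : |r x| ≤ K := le_trans this (le_trans (le_max_left _ _) (le_max_right _ _))
    exact ⟨le_trans (le_abs_self _) h2, h2⟩
  have hKp : ∀ x ∈ Icc (0:ℝ) 1, (p x)⁻¹ ≤ K := by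
    intro x hx
    have := hK2 x hx
    rw [Real.norm_eq_abs] at this
    exact le_trans (le_abs_self _)
      (le_trans this (le_trans (le_max_right _ _) (le_max_right _ _)))
  -- Step 1 : nonnegativity on [a,1]
  set N : ℝ → ℝ := fun t => (|y t| - y t) + (|y1 t| - y1 t) + (|u t| - u t) + (|u1 t| - u1 t)
    with hNdef
  have hNc : ContinuousOn N (Icc 0 1) :=
    (((hyc.abs.sub hyc).add (hy1c.abs.sub hy1c)).add (huc.abs.sub huc)).add (hu1c.abs.sub hu1c)
  have hNnn : ∀ t, 0 ≤ N t := by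
    intro t
    have := le_abs_self (y t); have := le_abs_self (y1 t)
    have := le_abs_self (u t); have := le_abs_self (u1 t)
    simp only [hNdef]; linarith
  set G : ℝ → ℝ := fun t => ∫ s in a..t, N s with hGdef
  have hGd : ∀ t ∈ Icc a 1, HasDerivWithinAt G (N t) (Icc a 1) t :=
    fun t ht => ftc_deriv' ha.1 le_rfl (left_mem_Icc.2 ha.2.le) ht hNc
  have hGc : ContinuousOn G (Icc a 1) := fun t ht => (hGd t ht).continuousWithinAt
  have hGnn : ∀ t ∈ Icc a 1, 0 ≤ G t :=
    fun t ht => intervalIntegral.integral_nonneg ht.1 (fun s _ => hNnn s)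
  have hNsum : ∀ s, |y s| - y s ≤ N s ∧ |y1 s| - y1 s ≤ N s ∧ |u s| - u s ≤ N s ∧
      |u1 s| - u1 s ≤ N s := by
    intro s
    have a1 := le_abs_self (y s); have a2 := le_abs_self (y1 s)
    have a3 := le_abs_self (u s); have a4 := le_abs_self (u1 s)
    simp only [hNdef]
    refine ⟨by linarith, by linarith, by linarith, by linarith⟩
  have key : ∀ t ∈ Icc a 1, N t ≤ (8 * K) * G t := by
    intro t ht
    have htI : t ∈ Icc (0:ℝ) 1 := ⟨le_trans ha.1 ht.1, ht.2⟩
    have hsubt : Icc a t ⊆ Icc (0:ℝ) 1 := Icc_subset_Icc ha.1 ht.2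
    have hGt0 : 0 ≤ G t := hGnn t ht
    have hKG0 : 0 ≤ K * G t := mul_nonneg hK0.le hGt0
    have hintN : IntervalIntegrable (fun s => -(K * N s)) volume a t :=
      (((continuous_const.continuousOn (s := Icc a t)).mul
        ((hNc.mono hsubt))).neg).intervalIntegrable_of_Icc ht.1
    -- generic component estimate
    have comp : ∀ z z' : ℝ → ℝ, ContinuousOn z (Icc 0 1) → ContinuousOn z' (Icc 0 1) →
        (∀ x ∈ Icc (0:ℝ) 1, HasDerivWithinAt z (z' x) (Icc 0 1) x) → 0 ≤ z a →
        (∀ s ∈ Icc a t, -(K * N s) ≤ z' s) → |z t| - z t ≤ 2 * (K * G t) := by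
      intro z z' hzc hz'c hzd hza hbd
      have hft : ∫ s in a..t, z' s = z t - z a := ftc_sub ha.1 ht.1 htI.2 hzc hz'c hzd
      have hintz : IntervalIntegrable z' volume a t :=
        ((hz'c.mono hsubt)).intervalIntegrable_of_Icc ht.1
      have hmono := intervalIntegral.integral_mono_on ht.1 hintN hintz hbd
      have hval : ∫ s in a..t, -(K * N s) = -(K * G t) := by
        rw [intervalIntegral.integral_neg, intervalIntegral.integral_const_mul]
      rw [hval, hft] at hmono
      have hzt : -(z t) ≤ K * G t := by linarith
      rcases abs_cases (z t) with ⟨he, hz0⟩ | ⟨he, hz0⟩ <;> rw [he] <;> linarith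
    -- derivative lower bounds
    have b1 : ∀ s ∈ Icc a t, -(K * N s) ≤ y1 s := by
      intro s hsx
      have h := (hNsum s).2.1
      have := abs_nonneg (y1 s)
      have hN := hNnn s
      nlinarith
    have b3 : ∀ s ∈ Icc a t, -(K * N s) ≤ u1 s := by
      intro s hsx
      have h := (hNsum s).2.2.2
      have := abs_nonneg (u1 s)
      have hN := hNnn s
      nlinarith
    have b2 : ∀ s ∈ Icc a t, -(K * N s) ≤ y2 s := by
      intro s hsx
      have hsI : s ∈ Icc (0:ℝ) 1 := hsubt hsx
      have hps := hp s hsI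
      have hinv := hKp s hsI
      have hinv0 : 0 < (p s)⁻¹ := inv_pos.2 hps
      have hN := hNnn s
      have hu' : -(N s) ≤ u s := by
        have h := (hNsum s).2.2.1
        have := abs_nonneg (u s)
        linarith
      rw [hy2u s hsI, div_eq_mul_inv]
      have hKN : 0 ≤ K * N s := mul_nonneg hK0.le hN
      rcases le_or_gt 0 (u s) with h | h
      · exact le_trans (neg_nonpos.mpr hKN) (mul_nonneg h hinv0.le)
      · have h1' : u s * K ≤ u s * (p s)⁻¹ := mul_le_mul_of_nonpos_left hinv h.le
        have h2' : K * (-N s) ≤ K * u s := mul_le_mul_of_nonneg_left hu' hK0.le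
        calc -(K * N s) = K * (-N s) := by ring
          _ ≤ K * u s := h2'
          _ = u s * K := mul_comm _ _
          _ ≤ u s * (p s)⁻¹ := h1'
    have b4 : ∀ s ∈ Icc a t, -(K * N s) ≤ r s * y s := by
      intro s hsx
      have hsI : s ∈ Icc (0:ℝ) 1 := hsubt hsx
      have hrs := hr s hsI
      have hrK := (hKr s hsI).1
      have hN := hNnn s
      have hy' : -(N s) ≤ y s := by
        have h := (hNsum s).1
        have := abs_nonneg (y s)
        linarith
      rcases le_or_gt 0 (y s) with h | h
      · nlinarith
      · nlinarith
    have c1 := comp y y1 hyc hy1c hyd h1 b1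
    have c2 := comp y1 y2 hy1c hy2c hy1d h2 b2
    have c3 := comp u u1 huc hu1c hud
      (by simp only [hudef]; exact mul_nonneg (hp a haI).le h3) b3
    have c4 := comp u1 (fun x => r x * y x) hu1c (hrc.mul hyc) hu1d h4 b4
    simp only [hNdef]
    linarith
  have hG0 : G a ≤ 0 := by simp [hGdef]
  have hGle := gron_fwd ha.2.le hGc hGd key hG0
  have step1 : ∀ t ∈ Icc a 1, 0 ≤ y t ∧ 0 ≤ y1 t ∧ 0 ≤ u t ∧ 0 ≤ u1 t := by
    intro t ht
    have hGt : G t = 0 := le_antisymm (hGle t ht) (hGnn t ht)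
    have hNt : N t ≤ 0 := by have := key t ht; rw [hGt] at this; linarith
    have hsum := hNsum t
    have a1 := le_abs_self (y t); have a2 := le_abs_self (y1 t)
    have a3 := le_abs_self (u t); have a4 := le_abs_self (u1 t)
    have n1 := neg_abs_le (y t); have n2 := neg_abs_le (y1 t)
    have n3 := neg_abs_le (u t); have n4 := neg_abs_le (u1 t)
    simp only [hNdef] at hNt
    exact ⟨by linarith, by linarith, by linarith, by linarith⟩
  have step1y2 : ∀ t ∈ Icc a 1, 0 ≤ y2 t := by
    intro t ht
    have htI : t ∈ Icc (0:ℝ) 1 := ⟨le_trans ha.1 ht.1, ht.2⟩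
    rw [hy2u t htI]
    exact div_nonneg (step1 t ht).2.2.1 (hp t htI).le
  -- mapping Ioo a 1 into Icc a 1 / Icc 0 1
  have hIooIcc : Ioo a 1 ⊆ Icc a 1 := Ioo_subset_Icc_self
  -- Step 2 : y 1 > 0
  have hy1pos : 0 < y 1 := by
    rcases lt_or_ge 0 (y 1) with h | h
    · exact h
    have hy1eq : y 1 = 0 := le_antisymm h (step1 1 (right_mem_Icc.2 ha.2.le)).1
    have hmonoy : MonotoneOn y (Icc a 1) :=
      mono_le ha hyc hyd (fun x hx => (step1 x (hIooIcc hx)).2.1)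
    have hy0 : ∀ t ∈ Icc a 1, y t = 0 := by
      intro t ht
      refine le_antisymm ?_ (step1 t ht).1
      have := hmonoy ht (right_mem_Icc.2 ha.2.le) ht.2
      rw [hy1eq] at this
      exact this
    -- all derived functions vanish on (a,1) and at a
    have hy1z : ∀ x ∈ Ioo a 1, y1 x = 0 := by
      intro x hx
      have hxm : Icc (0:ℝ) 1 ∈ 𝓝 x := Icc_mem_nhds (lt_of_le_of_lt ha.1 hx.1) hx.2
      have hev : y =ᶠ[𝓝 x] fun _ => 0 := by
        filter_upwards [Ioo_mem_nhds hx.1 hx.2] with z hz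
        exact hy0 z (hIooIcc hz)
      rw [hy1def, Dv, derivWithin_of_mem_nhds hxm, hev.deriv_eq, deriv_const]
    have hy1a : y1 a = 0 := vanish_at hy1c ha hy1z
    have hy2z : ∀ x ∈ Ioo a 1, y2 x = 0 := by
      intro x hx
      have hxm : Icc (0:ℝ) 1 ∈ 𝓝 x := Icc_mem_nhds (lt_of_le_of_lt ha.1 hx.1) hx.2
      have hev : y1 =ᶠ[𝓝 x] fun _ => 0 := by
        filter_upwards [Ioo_mem_nhds hx.1 hx.2] with z hz
        exact hy1z z hz
      rw [hy2def, Dv, derivWithin_of_mem_nhds hxm, hev.deriv_eq, deriv_const]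
    have huz : ∀ x ∈ Ioo a 1, u x = 0 := by
      intro x hx
      simp only [hudef, hy2z x hx, mul_zero]
    have hua : u a = 0 := vanish_at huc ha huz
    have hu1z : ∀ x ∈ Ioo a 1, u1 x = 0 := by
      intro x hx
      have hxm : Icc (0:ℝ) 1 ∈ 𝓝 x := Icc_mem_nhds (lt_of_le_of_lt ha.1 hx.1) hx.2
      have hev : u =ᶠ[𝓝 x] fun _ => 0 := by
        filter_upwards [Ioo_mem_nhds hx.1 hx.2] with z hz
        exact huz z hz
      rw [hu1def, Dv, derivWithin_of_mem_nhds hxm, hev.deriv_eq, deriv_const]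
    have hu1a : u1 a = 0 := vanish_at hu1c ha hu1z
    have hya : y a = 0 := hy0 a (left_mem_Icc.2 ha.2.le)
    -- backward Gronwall on [0,a]
    set M : ℝ → ℝ := fun t => |y t| + |y1 t| + |u t| + |u1 t| with hMdef
    have hMc : ContinuousOn M (Icc 0 1) := ((hyc.abs.add hy1c.abs).add huc.abs).add hu1c.abs
    have hMnn : ∀ t, 0 ≤ M t := by
      intro t
      have := abs_nonneg (y t); have := abs_nonneg (y1 t)
      have := abs_nonneg (u t); have := abs_nonneg (u1 t)
      simp only [hMdef]; linarith
    set Gb : ℝ → ℝ := fun t => ∫ s in t..a, M s with hGbdef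
    have hGbF : ∀ t, Gb t = -∫ s in a..t, M s := fun t => intervalIntegral.integral_symm a t
    have hGbd : ∀ t ∈ Icc (0:ℝ) a, HasDerivWithinAt Gb (-(M t)) (Icc 0 a) t := by
      intro t ht
      have := (ftc_deriv' le_rfl ha.2.le (right_mem_Icc.2 ha.1) ht hMc).neg
      exact this.congr (fun z _ => hGbF z) (hGbF t)
    have hGbc : ContinuousOn Gb (Icc 0 a) := fun t ht => (hGbd t ht).continuousWithinAt
    have hGbnn : ∀ t ∈ Icc (0:ℝ) a, 0 ≤ Gb t :=
      fun t ht => intervalIntegral.integral_nonneg ht.2 (fun s _ => hMnn s)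
    have keyb : ∀ t ∈ Icc (0:ℝ) a, M t ≤ (4 * K) * Gb t := by
      intro t ht
      have hta : t ≤ a := ht.2
      have hsubt : Icc t a ⊆ Icc (0:ℝ) 1 := Icc_subset_Icc ht.1 ha.2.le
      have hintKM : IntervalIntegrable (fun s => K * M s) volume t a :=
        ((continuous_const.continuousOn (s := Icc t a)).mul
          (hMc.mono hsubt)).intervalIntegrable_of_Icc hta
      have hKGb : ∫ s in t..a, K * M s = K * Gb t := by
        rw [intervalIntegral.integral_const_mul]
      have compb : ∀ z z' : ℝ → ℝ, ContinuousOn z (Icc 0 1) → ContinuousOn z' (Icc 0 1) →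
          (∀ x ∈ Icc (0:ℝ) 1, HasDerivWithinAt z (z' x) (Icc 0 1) x) → z a = 0 →
          (∀ s ∈ Icc t a, |z' s| ≤ K * M s) → |z t| ≤ K * Gb t := by
        intro z z' hzc hz'c hzd hza hbd
        have hft : ∫ s in t..a, z' s = z a - z t := ftc_sub ht.1 hta ha.2.le hzc hz'c hzd
        have habs : |∫ s in t..a, z' s| ≤ ∫ s in t..a, |z' s| :=
          intervalIntegral.abs_integral_le_integral_abs hta
        have hintz : IntervalIntegrable (fun s => |z' s|) volume t a :=
          ((hz'c.mono hsubt).abs).intervalIntegrable_of_Icc hta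
        have hmono := intervalIntegral.integral_mono_on hta hintz hintKM hbd
        rw [hKGb] at hmono
        rw [hft, hza, zero_sub, abs_neg] at habs
        linarith
      have hMle : ∀ s, |y s| ≤ M s ∧ |y1 s| ≤ M s ∧ |u s| ≤ M s ∧ |u1 s| ≤ M s := by
        intro s
        have := abs_nonneg (y s); have := abs_nonneg (y1 s)
        have := abs_nonneg (u s); have := abs_nonneg (u1 s)
        simp only [hMdef]
        refine ⟨by linarith, by linarith, by linarith, by linarith⟩
      have d1 : ∀ s ∈ Icc t a, |y1 s| ≤ K * M s := by
        intro s hsx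
        have := (hMle s).2.1
        have := hMnn s
        nlinarith
      have d3 : ∀ s ∈ Icc t a, |u1 s| ≤ K * M s := by
        intro s hsx
        have := (hMle s).2.2.2
        have := hMnn s
        nlinarith
      have d2 : ∀ s ∈ Icc t a, |y2 s| ≤ K * M s := by
        intro s hsx
        have hsI : s ∈ Icc (0:ℝ) 1 := hsubt hsx
        have hps := hp s hsI
        have hinv := hKp s hsI
        have hinv0 : 0 < (p s)⁻¹ := inv_pos.2 hps
        rw [hy2u s hsI, div_eq_mul_inv, abs_mul, abs_of_pos hinv0]
        have hMu := (hMle s).2.2.1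
        have := mul_le_mul hMu hinv hinv0.le (hMnn s)
        linarith
      have d4 : ∀ s ∈ Icc t a, |r s * y s| ≤ K * M s := by
        intro s hsx
        have hsI : s ∈ Icc (0:ℝ) 1 := hsubt hsx
        have hrK := (hKr s hsI).2
        have hMy := (hMle s).1
        rw [abs_mul]
        exact mul_le_mul hrK hMy (abs_nonneg _) hK0.le
      have e1 := compb y y1 hyc hy1c hyd hya d1
      have e2 := compb y1 y2 hy1c hy2c hy1d hy1a d2
      have e3 := compb u u1 huc hu1c hud hua d3
      have e4 := compb u1 (fun x => r x * y x) hu1c (hrc.mul hyc) hu1d hu1a d4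
      simp only [hMdef]
      linarith
    have hGba : Gb a ≤ 0 := by simp [hGbdef]
    have hGble := gron_bwd (C := 4 * K) ha.1 hGbc hGbd
      (fun t ht => by have := keyb t ht; linarith) hGba
    have hyzero : ∀ t ∈ Icc (0:ℝ) 1, y t = 0 := by
      intro t ht
      rcases le_or_gt t a with hta | hat
      · have htIa : t ∈ Icc (0:ℝ) a := ⟨ht.1, hta⟩
        have hGbt : Gb t = 0 := le_antisymm (hGble t htIa) (hGbnn t htIa)
        have hMt : M t ≤ 0 := by
          have := keyb t htIa; rw [hGbt] at this; linarith
        have := (abs_nonneg (y t)); have := abs_nonneg (y1 t)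
        have := abs_nonneg (u t); have := abs_nonneg (u1 t)
        have hMt' : |y t| ≤ 0 := by simp only [hMdef] at hMt; linarith
        exact abs_eq_zero.mp (le_antisymm hMt' (abs_nonneg _)) 
      · exact hy0 t ⟨hat.le, ht.2⟩
    obtain ⟨x, hx, hxne⟩ := hnt
    exact absurd (hyzero x hx) hxne
  -- Step 3: conclude positivity of the others at 1
  obtain ⟨c, hc, hcy⟩ := pos_near hyc ha hy1pos
  have hu1one : 0 < u1 1 := by
    have hlt : u1 c < u1 1 := by
      apply smono_lt ⟨le_trans ha.1 hc.1, hc.2⟩ hu1c hu1d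
      intro x hx
      have hxI : x ∈ Icc (0:ℝ) 1 := ⟨le_trans (le_trans ha.1 hc.1) hx.1.le, hx.2.le⟩
      exact mul_pos (hr x hxI) (hcy x ⟨hx.1.le, hx.2.le⟩)
    have : 0 ≤ u1 c := (step1 c ⟨hc.1, hc.2.le⟩).2.2.2
    linarith
  obtain ⟨c2, hc2, hcu1⟩ := pos_near hu1c ha hu1one
  have huone : 0 < u 1 := by
    have hlt : u c2 < u 1 := by
      apply smono_lt ⟨le_trans ha.1 hc2.1, hc2.2⟩ huc hud
      intro x hx
      exact hcu1 x ⟨hx.1.le, hx.2.le⟩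
    have : 0 ≤ u c2 := (step1 c2 ⟨?_, hc2.2.le⟩).2.2.1
    · linarith
    · exact hc2.1
  have hy2one : 0 < y2 1 := by
    rw [hy2u 1 h1I]
    exact div_pos huone (hp 1 h1I)
  have hy2cont : ∃ c3 ∈ Ico a 1, ∀ t ∈ Icc c3 1, 0 < y2 t := pos_near hy2c ha hy2one
  obtain ⟨c3, hc3, hcy2⟩ := hy2cont
  have hy1one : 0 < y1 1 := by
    have hlt : y1 c3 < y1 1 := by
      apply smono_lt ⟨le_trans ha.1 hc3.1, hc3.2⟩ hy1c hy1d
      intro x hx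
      exact hcy2 x ⟨hx.1.le, hx.2.le⟩
    have : 0 ≤ y1 c3 := (step1 c3 ⟨hc3.1, hc3.2.le⟩).2.1
    linarith
  exact ⟨hy1pos, hy1one, hy2one, hu1one⟩
end

section
/- Let p, r : [0,1] → ℝ be continuous with p(x) > 0 and r(x) > 0 for all x ∈ [0,1]. Let y be a nontrivial classical solution of (p·y'')'' − r·y = 0 on [0,1]. If for some a ∈ (0,1] one has y(a) ≥ 0, y'(a) ≤ 0, y''(a) ≥ 0 and (p·y'')'(a) ≤ 0, then y(0) > 0, y'(0) < 0, y''(0) > 0 and (p·y'')'(0) < 0. -/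
open Set

set_option maxHeartbeats 1000000 in
theorem stmt_1 (p r y : ℝ → ℝ)
    (hpc : ContinuousOn p (Icc 0 1)) (hrc : ContinuousOn r (Icc 0 1))
    (hp : ∀ x ∈ Icc (0:ℝ) 1, 0 < p x) (hr : ∀ x ∈ Icc (0:ℝ) 1, 0 < r x)
    (hy : ContDiffOn ℝ 2 y (Icc 0 1))
    (hpy : ContDiffOn ℝ 2 (fun x => p x * Dv (Dv y) x) (Icc 0 1))
    (heq : ∀ x ∈ Icc (0:ℝ) 1, Dv (Dv (fun t => p t * Dv (Dv y) t)) x = r x * y x)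
    (hnt : ∃ x ∈ Icc (0:ℝ) 1, y x ≠ 0)
    (a : ℝ) (ha : a ∈ Ioc (0:ℝ) 1)
    (h1 : 0 ≤ y a) (h2 : Dv y a ≤ 0) (h3 : 0 ≤ Dv (Dv y) a)
    (h4 : Dv (fun t => p t * Dv (Dv y) t) a ≤ 0) :
    0 < y 0 ∧ Dv y 0 < 0 ∧ 0 < Dv (Dv y) 0 ∧
      Dv (fun t => p t * Dv (Dv y) t) 0 < 0 := by
  obtain ⟨ha0, ha1⟩ := ha
  have hudiff : UniqueDiffOn ℝ (Icc (0:ℝ) 1) := uniqueDiffOn_Icc one_pos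
  set y2 : ℝ → ℝ := Dv y with hy2d
  set y3 : ℝ → ℝ := Dv y2 with hy3d
  set w : ℝ → ℝ := fun x => p x * y3 x with hwd
  set y4 : ℝ → ℝ := Dv w with hy4d
  -- basic regularity
  have hy2cd : ContDiffOn ℝ 1 y2 (Icc 0 1) := hy.derivWithin hudiff (by norm_num)
  have h2c : ContinuousOn y2 (Icc 0 1) := hy2cd.continuousOn
  have hy3cd : ContDiffOn ℝ 0 y3 (Icc 0 1) := hy2cd.derivWithin hudiff (by norm_num)
  have h3c : ContinuousOn y3 (Icc 0 1) := hy3cd.continuousOn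
  have hyc : ContinuousOn y (Icc 0 1) := hy.continuousOn
  have hwc : ContinuousOn w (Icc 0 1) := hpy.continuousOn
  have hy4cd : ContDiffOn ℝ 1 y4 (Icc 0 1) := hpy.derivWithin hudiff (by norm_num)
  have h4c : ContinuousOn y4 (Icc 0 1) := hy4cd.continuousOn
  -- derivatives within
  have hd1 : ∀ x ∈ Icc (0:ℝ) 1, HasDerivWithinAt y (y2 x) (Icc 0 1) x :=
    fun x hx => (hy.differentiableOn (by norm_num) x hx).hasDerivWithinAt
  have hd2 : ∀ x ∈ Icc (0:ℝ) 1, HasDerivWithinAt y2 (y3 x) (Icc 0 1) x :=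
    fun x hx => (hy2cd.differentiableOn (by norm_num) x hx).hasDerivWithinAt
  have hdw : ∀ x ∈ Icc (0:ℝ) 1, HasDerivWithinAt w (y4 x) (Icc 0 1) x :=
    fun x hx => (hpy.differentiableOn (by norm_num) x hx).hasDerivWithinAt
  have hd4 : ∀ x ∈ Icc (0:ℝ) 1, HasDerivWithinAt y4 (r x * y x) (Icc 0 1) x :=
    fun x hx => heq x hx ▸ (hy4cd.differentiableOn (by norm_num) x hx).hasDerivWithinAt
  have hmem : ∀ x ∈ Ioo (0:ℝ) 1, Icc (0:ℝ) 1 ∈ nhds x :=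
    fun x hx => mem_nhds_iff.mpr ⟨Ioo 0 1, Ioo_subset_Icc_self, isOpen_Ioo, hx⟩
  have hD1 : ∀ x ∈ Ioo (0:ℝ) 1, HasDerivAt y (y2 x) x :=
    fun x hx => (hd1 x (Ioo_subset_Icc_self hx)).hasDerivAt (hmem x hx)
  have hD2 : ∀ x ∈ Ioo (0:ℝ) 1, HasDerivAt y2 (y3 x) x :=
    fun x hx => (hd2 x (Ioo_subset_Icc_self hx)).hasDerivAt (hmem x hx)
  have hDw : ∀ x ∈ Ioo (0:ℝ) 1, HasDerivAt w (y4 x) x :=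
    fun x hx => (hdw x (Ioo_subset_Icc_self hx)).hasDerivAt (hmem x hx)
  have hD4 : ∀ x ∈ Ioo (0:ℝ) 1, HasDerivAt y4 (r x * y x) x :=
    fun x hx => (hd4 x (Ioo_subset_Icc_self hx)).hasDerivAt (hmem x hx)
  -- bounds on p and r
  obtain ⟨xm, hxm, hxmmin⟩ := isCompact_Icc.exists_isMinOn (nonempty_Icc.mpr zero_le_one) hpc
  set Pm : ℝ := p xm with hPmd
  have hPm : 0 < Pm := hp xm hxm
  have hPmle : ∀ x ∈ Icc (0:ℝ) 1, Pm ≤ p x := fun x hx => hxmmin hx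
  obtain ⟨xr, hxr, hxrmax⟩ := isCompact_Icc.exists_isMaxOn (nonempty_Icc.mpr zero_le_one) hrc
  set R : ℝ := r xr with hRd
  have hR : 0 < R := hr xr hxr
  have hRge : ∀ x ∈ Icc (0:ℝ) 1, r x ≤ R := fun x hx => hxrmax hx
  set K : ℝ := 2 + 1/Pm + R with hKd
  have hK1 : 1 < K := by rw [hKd]; have := one_div_pos.mpr hPm; linarith
  have hKP : 1/Pm < K := by rw [hKd]; linarith
  have hKR : R < K := by rw [hKd]; have := one_div_pos.mpr hPm; linarith
  have hK0 : 0 < K := by linarith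
  set E : ℝ → ℝ := fun x => Real.exp (K * (a - x)) with hEd
  have hEpos : ∀ x, 0 < E x := fun x => Real.exp_pos _
  have hEa : E a = 1 := by rw [hEd]; simp
  have hEderiv : ∀ x : ℝ, HasDerivAt E (-K * E x) x := by
    intro x
    have h := (((hasDerivAt_id x).const_sub a).const_mul K).exp
    rw [hEd]
    convert h using 1
    simp; ring_nf; rfl
  have hEcont : Continuous E := by
    rw [hEd]
    exact Real.continuous_exp.comp (continuous_const.mul (continuous_const.sub continuous_id))
  -- generic monotonicity helpers on subintervals of [0,1]
  have hanti : ∀ (f f' : ℝ → ℝ) (c d : ℝ), 0 ≤ c → d ≤ 1 → ContinuousOn f (Icc 0 1) →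
      (∀ x ∈ Ioo c d, HasDerivAt f (f' x) x) → (∀ x ∈ Ioo c d, f' x < 0) →
      StrictAntiOn f (Icc c d) := by
    intro f f' c d hc hd hfc hder hneg
    apply strictAntiOn_of_deriv_neg (convex_Icc c d) (hfc.mono (Icc_subset_Icc hc hd))
    intro x hx
    rw [interior_Icc] at hx
    rw [(hder x hx).deriv]
    exact hneg x hx
  have hmono : ∀ (f f' : ℝ → ℝ) (c d : ℝ), 0 ≤ c → d ≤ 1 → ContinuousOn f (Icc 0 1) →
      (∀ x ∈ Ioo c d, HasDerivAt f (f' x) x) → (∀ x ∈ Ioo c d, 0 < f' x) →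
      StrictMonoOn f (Icc c d) := by
    intro f f' c d hc hd hfc hder hpos
    apply strictMonoOn_of_deriv_pos (convex_Icc c d) (hfc.mono (Icc_subset_Icc hc hd))
    intro x hx
    rw [interior_Icc] at hx
    rw [(hder x hx).deriv]
    exact hpos x hx
  have hantiw : ∀ (f f' : ℝ → ℝ) (c d : ℝ), 0 ≤ c → d ≤ 1 → ContinuousOn f (Icc 0 1) →
      (∀ x ∈ Ioo c d, HasDerivAt f (f' x) x) → (∀ x ∈ Ioo c d, f' x ≤ 0) →
      AntitoneOn f (Icc c d) := by
    intro f f' c d hc hd hfc hder hneg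
    apply antitoneOn_of_deriv_nonpos (convex_Icc c d) (hfc.mono (Icc_subset_Icc hc hd))
    · intro x hx
      rw [interior_Icc] at hx
      exact (hder x hx).differentiableAt.differentiableWithinAt
    · intro x hx
      rw [interior_Icc] at hx
      rw [(hder x hx).deriv]
      exact hneg x hx
  have hwa0 : 0 ≤ w a := by
    rw [hwd]
    exact mul_nonneg (hp a ⟨ha0.le, ha1⟩).le h3
  -- the key perturbation lemma
  have keyε : ∀ ε : ℝ, 0 < ε → ∀ x ∈ Icc 0 a,
      0 < y x + ε * E x ∧ 0 < -y2 x + ε * E x ∧ 0 < w x + ε * E x ∧ 0 < -y4 x + ε * E x := by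
    intro ε hε
    have hsub01 : Icc (0:ℝ) a ⊆ Icc (0:ℝ) 1 := Icc_subset_Icc le_rfl ha1
    set S : Set ℝ := (Icc 0 a ∩ (fun x => y x + ε * E x) ⁻¹' Iic 0) ∪
        (Icc 0 a ∩ (fun x => -y2 x + ε * E x) ⁻¹' Iic 0) ∪
        (Icc 0 a ∩ (fun x => w x + ε * E x) ⁻¹' Iic 0) ∪
        (Icc 0 a ∩ (fun x => -y4 x + ε * E x) ⁻¹' Iic 0) with hSd
    have hEcont' : ContinuousOn (fun x => ε * E x) (Icc (0:ℝ) a) :=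
      (continuous_const.mul hEcont).continuousOn
    have hSsub : S ⊆ Icc 0 a := by
      rw [hSd]; rintro t (((h|h)|h)|h) <;> exact h.1
    have hclosed : IsClosed S := by
      rw [hSd]
      refine IsClosed.union (IsClosed.union (IsClosed.union ?_ ?_) ?_) ?_
      · exact ContinuousOn.preimage_isClosed_of_isClosed
          (((hyc.mono hsub01).add hEcont')) isClosed_Icc isClosed_Iic
      · exact ContinuousOn.preimage_isClosed_of_isClosed
          ((((h2c.mono hsub01).neg).add hEcont')) isClosed_Icc isClosed_Iic
      · exact ContinuousOn.preimage_isClosed_of_isClosed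
          (((hwc.mono hsub01).add hEcont')) isClosed_Icc isClosed_Iic
      · exact ContinuousOn.preimage_isClosed_of_isClosed
          ((((h4c.mono hsub01).neg).add hEcont')) isClosed_Icc isClosed_Iic
    have hSempty : ∀ t, t ∉ S := by
      by_contra hne
      push_neg at hne
      obtain ⟨t0, ht0⟩ := hne
      obtain ⟨c, hcS, hcmax⟩ :=
        (isCompact_Icc.of_isClosed_subset hclosed hSsub).exists_isGreatest ⟨t0, ht0⟩
      have hcIcc : c ∈ Icc 0 a := hSsub hcS
      have hanotS : a ∉ S := by
        rw [hSd]
        rintro (((h|h)|h)|h) <;>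
          · have hh := mem_preimage.mp h.2
            simp only [mem_Iic, hEa, mul_one] at hh
            linarith
      have hca : c < a := lt_of_le_of_ne hcIcc.2 (fun h => hanotS (h ▸ hcS))
      have hpos : ∀ x ∈ Ioc c a, 0 < y x + ε * E x ∧ 0 < -y2 x + ε * E x ∧
          0 < w x + ε * E x ∧ 0 < -y4 x + ε * E x := by
        intro x hx
        have hxI : x ∈ Icc 0 a := ⟨hcIcc.1.trans hx.1.le, hx.2⟩
        have hxS : x ∉ S := fun hxS => absurd (hcmax hxS) (not_le.mpr hx.1)
        rw [hSd] at hxS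
        simp only [mem_union, mem_inter_iff, mem_preimage, mem_Iic, not_or, not_and,
          not_le] at hxS
        exact ⟨hxS.1.1.1 hxI, hxS.1.1.2 hxI, hxS.1.2 hxI, hxS.2 hxI⟩
      have hIoo : Ioo c a ⊆ Ioo (0:ℝ) 1 :=
        fun x hx => ⟨lt_of_le_of_lt hcIcc.1 hx.1, lt_of_lt_of_le hx.2 ha1⟩
      have hAanti : StrictAntiOn (fun x => y x + ε * E x) (Icc c a) := by
        apply hanti _ (fun x => y2 x + ε * (-K * E x)) c a hcIcc.1 ha1
          (hyc.add (continuous_const.mul hEcont).continuousOn)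
        · intro x hx; exact (hD1 x (hIoo hx)).add ((hEderiv x).const_mul ε)
        · intro x hx
          have hb := (hpos x ⟨hx.1, hx.2.le⟩).2.1
          have hEx := hEpos x
          nlinarith [mul_pos hε hEx, mul_pos (mul_pos hε hEx) (sub_pos.mpr hK1)]
      have hBanti : StrictAntiOn (fun x => -y2 x + ε * E x) (Icc c a) := by
        apply hanti _ (fun x => -y3 x + ε * (-K * E x)) c a hcIcc.1 ha1
          (h2c.neg.add (continuous_const.mul hEcont).continuousOn)
        · intro x hx; exact ((hD2 x (hIoo hx)).neg).add ((hEderiv x).const_mul ε)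
        · intro x hx
          have hEx := hEpos x
          have hx01 : x ∈ Icc (0:ℝ) 1 := Ioo_subset_Icc_self (hIoo hx)
          have hwx : w x = p x * y3 x := by rw [hwd]
          have hpx := hPmle x hx01
          have hcc := (hpos x ⟨hx.1, hx.2.le⟩).2.2.1
          have hlb : -(ε * E x) ≤ Pm * y3 x := by
            rcases le_or_gt 0 (y3 x) with h' | h'
            · nlinarith [mul_nonneg hPm.le h', mul_pos hε hEx]
            · have h2' : p x * y3 x ≤ Pm * y3 x := mul_le_mul_of_nonpos_right hpx h'.le
              nlinarith
          have hKPm : 1 < K * Pm := (div_lt_iff₀ hPm).mp hKP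
          nlinarith [mul_pos (mul_pos hε hEx) (sub_pos.mpr hKPm), hPm]
      have hCanti : StrictAntiOn (fun x => w x + ε * E x) (Icc c a) := by
        apply hanti _ (fun x => y4 x + ε * (-K * E x)) c a hcIcc.1 ha1
          (hwc.add (continuous_const.mul hEcont).continuousOn)
        · intro x hx; exact (hDw x (hIoo hx)).add ((hEderiv x).const_mul ε)
        · intro x hx
          have hb := (hpos x ⟨hx.1, hx.2.le⟩).2.2.2
          have hEx := hEpos x
          nlinarith [mul_pos hε hEx, mul_pos (mul_pos hε hEx) (sub_pos.mpr hK1)]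
      have hDanti : StrictAntiOn (fun x => -y4 x + ε * E x) (Icc c a) := by
        apply hanti _ (fun x => -(r x * y x) + ε * (-K * E x)) c a hcIcc.1 ha1
          (h4c.neg.add (continuous_const.mul hEcont).continuousOn)
        · intro x hx; exact ((hD4 x (hIoo hx)).neg).add ((hEderiv x).const_mul ε)
        · intro x hx
          have hEx := hEpos x
          have hx01 : x ∈ Icc (0:ℝ) 1 := Ioo_subset_Icc_self (hIoo hx)
          have hrx := hr x hx01
          have hrR := hRge x hx01
          have hy' := (hpos x ⟨hx.1, hx.2.le⟩).1
          have hlb : -(ε * E x) * R ≤ r x * y x := by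
            rcases le_or_gt 0 (y x) with h' | h'
            · nlinarith [mul_nonneg hrx.le h', mul_pos (mul_pos hε hEx) hR]
            · have h2' : R * y x ≤ r x * y x := mul_le_mul_of_nonpos_right hrR h'.le
              nlinarith [mul_lt_mul_of_pos_left (show -(ε * E x) < y x by linarith) hR]
          nlinarith [mul_pos (mul_pos hε hEx) (sub_pos.mpr hKR)]
      have hcmem : c ∈ Icc c a := left_mem_Icc.mpr hcIcc.2
      have hamem : a ∈ Icc c a := right_mem_Icc.mpr hcIcc.2
      rw [hSd] at hcS
      rcases hcS with (((h|h)|h)|h)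
      · have hle : y c + ε * E c ≤ 0 := mem_preimage.mp h.2
        have hlt := hAanti hcmem hamem hca
        simp only [hEa, mul_one] at hlt
        linarith
      · have hle : -y2 c + ε * E c ≤ 0 := mem_preimage.mp h.2
        have hlt := hBanti hcmem hamem hca
        simp only [hEa, mul_one] at hlt
        linarith
      · have hle : w c + ε * E c ≤ 0 := mem_preimage.mp h.2
        have hlt := hCanti hcmem hamem hca
        simp only [hEa, mul_one] at hlt
        linarith
      · have hle : -y4 c + ε * E c ≤ 0 := mem_preimage.mp h.2
        have hlt := hDanti hcmem hamem hca
        simp only [hEa, mul_one] at hlt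
        linarith
    intro x hx
    refine ⟨?_, ?_, ?_, ?_⟩
    · by_contra hcon; push_neg at hcon
      exact hSempty x (by rw [hSd]; exact Or.inl (Or.inl (Or.inl ⟨hx, hcon⟩)))
    · by_contra hcon; push_neg at hcon
      exact hSempty x (by rw [hSd]; exact Or.inl (Or.inl (Or.inr ⟨hx, hcon⟩)))
    · by_contra hcon; push_neg at hcon
      exact hSempty x (by rw [hSd]; exact Or.inl (Or.inr ⟨hx, hcon⟩))
    · by_contra hcon; push_neg at hcon
      exact hSempty x (by rw [hSd]; exact Or.inr ⟨hx, hcon⟩)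
  -- pass to the limit ε → 0
  have hε0 : ∀ v e : ℝ, 0 < e → (∀ ε : ℝ, 0 < ε → 0 < v + ε * e) → 0 ≤ v := by
    intro v e he h
    by_contra hv
    push_neg at hv
    have h2' := h (-v / (2 * e)) (div_pos (by linarith) (by linarith))
    have heq' : -v / (2 * e) * e = -v / 2 := by field_simp
    rw [heq'] at h2'
    linarith
  have hy0 : ∀ t ∈ Icc 0 a, 0 ≤ y t :=
    fun t ht => hε0 _ _ (hEpos t) (fun ε hε => (keyε ε hε t ht).1)
  have h2le : ∀ t ∈ Icc 0 a, y2 t ≤ 0 := fun t ht => by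
    have := hε0 _ _ (hEpos t) (fun ε hε => (keyε ε hε t ht).2.1); linarith
  have hw0 : ∀ t ∈ Icc 0 a, 0 ≤ w t :=
    fun t ht => hε0 _ _ (hEpos t) (fun ε hε => (keyε ε hε t ht).2.2.1)
  have h4le : ∀ t ∈ Icc 0 a, y4 t ≤ 0 := fun t ht => by
    have := hε0 _ _ (hEpos t) (fun ε hε => (keyε ε hε t ht).2.2.2); linarith
  have hIooa : Ioo (0:ℝ) a ⊆ Ioo (0:ℝ) 1 := Ioo_subset_Ioo le_rfl ha1
  -- small positive-neighbourhood extractor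
  have hδ : ∀ f : ℝ → ℝ, ContinuousOn f (Icc 0 1) → 0 < f 0 →
      ∃ δ, 0 < δ ∧ δ ≤ a ∧ ∀ t ∈ Icc 0 δ, 0 < f t := by
    intro f hc h0
    have hcw : ContinuousWithinAt f (Icc 0 1) 0 := hc 0 ⟨le_rfl, zero_le_one⟩
    have hmem' : f ⁻¹' Ioi 0 ∈ nhdsWithin 0 (Icc 0 1) := hcw (Ioi_mem_nhds h0)
    rw [Metric.mem_nhdsWithin_iff] at hmem'
    obtain ⟨η, hη, hball⟩ := hmem'
    refine ⟨min (η/2) a, lt_min (by linarith) ha0, min_le_right _ _, ?_⟩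
    intro t ht
    have ht1 : t ∈ Icc (0:ℝ) 1 := ⟨ht.1, le_trans ht.2 (le_trans (min_le_right _ _) ha1)⟩
    have htb : t ∈ Metric.ball (0:ℝ) η := by
      rw [Metric.mem_ball, Real.dist_eq, sub_zero, abs_of_nonneg ht.1]
      have := le_trans ht.2 (min_le_left _ _)
      linarith
    exact hball ⟨htb, ht1⟩
  by_cases hcase : ∀ t ∈ Icc 0 a, y t = 0
  · -- degenerate case: y ≡ 0 on [0,a]; contradict nontriviality via Gronwall
    exfalso
    have derivzero : ∀ (f g : ℝ → ℝ), (∀ x ∈ Ioo 0 a, HasDerivAt f (g x) x) →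
        (∀ t ∈ Ioo 0 a, f t = 0) → ∀ x ∈ Ioo 0 a, g x = 0 := by
      intro f g hder hz x hx
      have hev : f =ᶠ[nhds x] (fun _ => (0:ℝ)) :=
        Filter.eventuallyEq_of_mem (isOpen_Ioo.mem_nhds hx) hz
      have h0 : HasDerivAt f 0 x := (hasDerivAt_const x (0:ℝ)).congr_of_eventuallyEq hev
      exact (hder x hx).unique h0
    have bdryzero : ∀ f : ℝ → ℝ, ContinuousOn f (Icc 0 1) → (∀ t ∈ Ioo 0 a, f t = 0) →
        f a = 0 := by
      intro f hc hz
      have haI : a ∈ Icc (0:ℝ) 1 := ⟨ha0.le, ha1⟩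
      have h1' : Filter.Tendsto f (nhdsWithin a (Ioo 0 a)) (nhds (f a)) :=
        (hc a haI).mono_left
          (nhdsWithin_mono a (fun t ht => ⟨ht.1.le, ht.2.le.trans ha1⟩))
      have hNB : (nhdsWithin a (Ioo 0 a)).NeBot := by
        apply mem_closure_iff_nhdsWithin_neBot.mp
        rw [closure_Ioo (ne_of_lt ha0)]
        exact ⟨ha0.le, le_rfl⟩
      have h2' : Filter.Tendsto f (nhdsWithin a (Ioo 0 a)) (nhds 0) := by
        apply Filter.Tendsto.congr' _ tendsto_const_nhds
        filter_upwards [self_mem_nhdsWithin] with t ht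
        exact (hz t ht).symm
      exact tendsto_nhds_unique h1' h2'
    have hzy : ∀ t ∈ Ioo 0 a, y t = 0 := fun t ht => hcase t (Ioo_subset_Icc_self ht)
    have hzy2 : ∀ x ∈ Ioo 0 a, y2 x = 0 := derivzero y y2 (fun x hx => hD1 x (hIooa hx)) hzy
    have hzy3 : ∀ x ∈ Ioo 0 a, y3 x = 0 := derivzero y2 y3 (fun x hx => hD2 x (hIooa hx)) hzy2
    have hzw : ∀ x ∈ Ioo 0 a, w x = 0 := by
      intro x hx; rw [hwd]; simp [hzy3 x hx]
    have hzy4 : ∀ x ∈ Ioo 0 a, y4 x = 0 := derivzero w y4 (fun x hx => hDw x (hIooa hx)) hzw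
    have hya : y a = 0 := hcase a ⟨ha0.le, le_rfl⟩
    have hy2a : y2 a = 0 := bdryzero y2 h2c hzy2
    have hwa : w a = 0 := bdryzero w hwc hzw
    have hy4a : y4 a = 0 := bdryzero y4 h4c hzy4
    -- Gronwall on [a,1]
    set F : ℝ → ℝ × ℝ × ℝ × ℝ := fun x => (y x, y2 x, w x, y4 x) with hFd
    set F' : ℝ → ℝ × ℝ × ℝ × ℝ := fun x => (y2 x, w x / p x, y4 x, r x * y x) with hF'd
    have hFx : ∀ x, F x = (y x, y2 x, w x, y4 x) := fun x => by rw [hFd]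
    have hF'x : ∀ x, F' x = (y2 x, w x / p x, y4 x, r x * y x) := fun x => by rw [hF'd]
    have hcomp : ∀ x : ℝ, |y x| ≤ ‖F x‖ ∧ |y2 x| ≤ ‖F x‖ ∧ |w x| ≤ ‖F x‖ ∧
        |y4 x| ≤ ‖F x‖ := by
      intro x
      have hsnd : ‖((y2 x, w x, y4 x) : ℝ × ℝ × ℝ)‖ ≤ ‖F x‖ := by
        rw [hFx]; exact norm_snd_le ((y x, y2 x, w x, y4 x) : ℝ × ℝ × ℝ × ℝ)
      have hsnd2 : ‖((w x, y4 x) : ℝ × ℝ)‖ ≤ ‖F x‖ :=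
        le_trans (norm_snd_le ((y2 x, w x, y4 x) : ℝ × ℝ × ℝ)) hsnd
      refine ⟨?_, ?_, ?_, ?_⟩
      · rw [hFx]; simpa using norm_fst_le (y x, y2 x, w x, y4 x)
      · exact le_trans (by simpa using norm_fst_le (y2 x, w x, y4 x)) hsnd
      · exact le_trans (by simpa using norm_fst_le (w x, y4 x)) hsnd2
      · exact le_trans (by simpa using norm_snd_le (w x, y4 x)) hsnd2
    have hsubA : Icc a 1 ⊆ Icc (0:ℝ) 1 := Icc_subset_Icc ha0.le le_rfl
    have hFc : ContinuousOn F (Icc a 1) :=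
      (hyc.mono hsubA).prodMk
        ((h2c.mono hsubA).prodMk ((hwc.mono hsubA).prodMk (h4c.mono hsubA)))
    have hFder : ∀ x ∈ Ico a 1, HasDerivWithinAt F (F' x) (Ici x) x := by
      intro x hx
      have hx01 : x ∈ Ioo (0:ℝ) 1 := ⟨lt_of_lt_of_le ha0 hx.1, hx.2⟩
      have hxI : x ∈ Icc (0:ℝ) 1 := Ioo_subset_Icc_self hx01
      have h3' : HasDerivAt y2 (w x / p x) x := by
        have hpx := (hp x hxI).ne'
        have hq : w x / p x = y3 x := by rw [hwd]; field_simp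
        rw [hq]; exact hD2 x hx01
      have := (hD1 x hx01).prodMk (h3'.prodMk ((hDw x hx01).prodMk (hD4 x hx01)))
      rw [hFd, hF'd]
      exact this.hasDerivWithinAt
    have hFa : ‖F a‖ ≤ 0 := by
      have hz : F a = 0 := by
        rw [hFx, hya, hy2a, hwa, hy4a]; rfl
      rw [hz, norm_zero]
    have hKPm : 1 < K * Pm := (div_lt_iff₀ hPm).mp hKP
    have hbound : ∀ x ∈ Ico a 1, ‖F' x‖ ≤ K * ‖F x‖ + 0 := by
      intro x hx
      have hxI : x ∈ Icc (0:ℝ) 1 := ⟨ha0.le.trans hx.1, hx.2.le⟩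
      have hN0 : 0 ≤ ‖F x‖ := norm_nonneg _
      obtain ⟨hb1, hb2, hb3, hb4⟩ := hcomp x
      rw [add_zero, hF'x]
      rw [Prod.norm_def, Prod.norm_def, Prod.norm_def]
      simp only [Real.norm_eq_abs]
      refine max_le ?_ (max_le ?_ (max_le ?_ ?_))
      · nlinarith
      · have hpos := hp x hxI
        have hdle : |w x| / p x ≤ ‖F x‖ / Pm :=
          div_le_div₀ hN0 hb3 hPm (hPmle x hxI)
        have h2' : ‖F x‖ / Pm ≤ K * ‖F x‖ := by
          rw [div_le_iff₀ hPm]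
          nlinarith [mul_nonneg hN0 (sub_pos.mpr hKPm).le]
        calc |w x / p x| = |w x| / p x := by rw [abs_div, abs_of_pos hpos]
          _ ≤ ‖F x‖ / Pm := hdle
          _ ≤ K * ‖F x‖ := h2'
      · nlinarith
      · have hrpos := hr x hxI
        calc |r x * y x| = r x * |y x| := by rw [abs_mul, abs_of_pos hrpos]
          _ ≤ R * ‖F x‖ := mul_le_mul (hRge x hxI) hb1 (abs_nonneg _) hR.le
          _ ≤ K * ‖F x‖ := mul_le_mul_of_nonneg_right hKR.le hN0
    have hgron := norm_le_gronwallBound_of_norm_deriv_right_le hFc hFder hFa hbound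
    have hyz1 : ∀ x ∈ Icc a 1, y x = 0 := by
      intro x hx
      have hg := hgron x hx
      rw [gronwallBound_ε0, zero_mul] at hg
      have hb1 := (hcomp x).1
      have h0 : |y x| = 0 := le_antisymm (le_trans hb1 hg) (abs_nonneg _)
      exact abs_eq_zero.mp h0
    obtain ⟨x0, hx0, hx0ne⟩ := hnt
    rcases le_total x0 a with h | h
    · exact hx0ne (hcase x0 ⟨hx0.1, h⟩)
    · exact hx0ne (hyz1 x0 ⟨h, hx0.2⟩)
  · -- main case
    push_neg at hcase
    obtain ⟨t0, ht0, ht0ne⟩ := hcase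
    have ht0pos : 0 < y t0 := lt_of_le_of_ne (hy0 t0 ht0) (Ne.symm ht0ne)
    have hyanti : AntitoneOn y (Icc 0 a) := by
      apply hantiw y y2 0 a le_rfl ha1 hyc
      · intro x hx; exact hD1 x (hIooa hx)
      · intro x hx; exact h2le x (Ioo_subset_Icc_self hx)
    have hy0pos : 0 < y 0 :=
      lt_of_lt_of_le ht0pos (hyanti (left_mem_Icc.mpr ha0.le) ht0 ht0.1)
    -- y4 0 < 0
    obtain ⟨δ1, hδ1, hδ1a, hδ1pos⟩ := hδ y hyc hy0pos
    have hy4mono : StrictMonoOn y4 (Icc 0 δ1) := by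
      apply hmono y4 (fun x => r x * y x) 0 δ1 le_rfl (hδ1a.trans ha1) h4c
      · intro x hx; exact hD4 x (hIooa ⟨hx.1, lt_of_lt_of_le hx.2 hδ1a⟩)
      · intro x hx
        have hx01 : x ∈ Icc (0:ℝ) 1 :=
          ⟨hx.1.le, le_trans hx.2.le (hδ1a.trans ha1)⟩
        exact mul_pos (hr x hx01) (hδ1pos x (Ioo_subset_Icc_self hx))
    have hy4neg : y4 0 < 0 :=
      lt_of_lt_of_le (hy4mono (left_mem_Icc.mpr hδ1.le) (right_mem_Icc.mpr hδ1.le) hδ1)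
        (h4le δ1 ⟨hδ1.le, hδ1a⟩)
    -- w 0 > 0
    obtain ⟨δ2, hδ2, hδ2a, hδ2pos⟩ := hδ (fun t => -y4 t) h4c.neg (by simpa using hy4neg)
    have hwanti : StrictAntiOn w (Icc 0 δ2) := by
      apply hanti w y4 0 δ2 le_rfl (hδ2a.trans ha1) hwc
      · intro x hx; exact hDw x (hIooa ⟨hx.1, lt_of_lt_of_le hx.2 hδ2a⟩)
      · intro x hx
        have := hδ2pos x (Ioo_subset_Icc_self hx)
        simpa using this
    have hwpos : 0 < w 0 :=
      lt_of_le_of_lt (hw0 δ2 ⟨hδ2.le, hδ2a⟩)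
        (hwanti (left_mem_Icc.mpr hδ2.le) (right_mem_Icc.mpr hδ2.le) hδ2)
    have hy3pos : 0 < y3 0 := by
      have hw0' : w 0 = p 0 * y3 0 := by rw [hwd]
      have hp0 := hp 0 ⟨le_rfl, zero_le_one⟩
      nlinarith
    -- y2 0 < 0
    obtain ⟨δ3, hδ3, hδ3a, hδ3pos⟩ := hδ y3 h3c hy3pos
    have hy2mono : StrictMonoOn y2 (Icc 0 δ3) := by
      apply hmono y2 y3 0 δ3 le_rfl (hδ3a.trans ha1) h2c
      · intro x hx; exact hD2 x (hIooa ⟨hx.1, lt_of_lt_of_le hx.2 hδ3a⟩)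
      · intro x hx; exact hδ3pos x (Ioo_subset_Icc_self hx)
    have hy2neg : y2 0 < 0 :=
      lt_of_lt_of_le (hy2mono (left_mem_Icc.mpr hδ3.le) (right_mem_Icc.mpr hδ3.le) hδ3)
        (h2le δ3 ⟨hδ3.le, hδ3a⟩)
    exact ⟨hy0pos, hy2neg, hy3pos, hy4neg⟩
end

section
/- Let p, r : [0,1] → ℝ be continuous with p(x) > 0 and r(x) > 0 for all x ∈ [0,1], and let c, α ∈ ℝ. Suppose λ ∈ ℂ and y : [0,1] → ℂ is a nontrivial function with y ∈ C²([0,1],ℂ), p·y'' ∈ C²([0,1],ℂ), satisfying (p·y'')''(x) − λ·(−y''(x) + c·r(x)·y(x)) = 0 for all x ∈ [0,1] together with either the boundary conditions y(0) = y'(0) = y(1) = y'(1) = 0, or the boundary conditions y(0) = y'(0) = y'(1) = 0 and (p·y'')'(1) + λ·α·y(1) = 0. Then λ is real. -/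
open Set

/-- Derivative within the interval `[0,1]` for complex-valued functions of a real variable. -/
noncomputable def DvC (y : ℝ → ℂ) : ℝ → ℂ := derivWithin y (Set.Icc 0 1)

section Helpers

open MeasureTheory intervalIntegral


lemma myIntInt {f : ℝ → ℂ} (hf : ContinuousOn f (Icc 0 1)) :
    IntervalIntegrable f volume 0 1 :=
  (by rwa [uIcc_of_le zero_le_one] : ContinuousOn f (uIcc 0 1)).intervalIntegrable

lemma myIBP (f g f' g' : ℝ → ℂ)
    (hf : ∀ x ∈ Icc (0:ℝ) 1, HasDerivWithinAt f (f' x) (Icc 0 1) x)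
    (hg : ∀ x ∈ Icc (0:ℝ) 1, HasDerivWithinAt g (g' x) (Icc 0 1) x)
    (hf' : ContinuousOn f' (Icc 0 1)) (hg' : ContinuousOn g' (Icc 0 1)) :
    (∫ x in (0:ℝ)..1, f' x * g x)
      = f 1 * g 1 - f 0 * g 0 - ∫ x in (0:ℝ)..1, f x * g' x := by
  have hfc : ContinuousOn f (Icc 0 1) := fun x hx => (hf x hx).continuousWithinAt
  have hgc : ContinuousOn g (Icc 0 1) := fun x hx => (hg x hx).continuousWithinAt
  have hi1 : IntervalIntegrable (fun x => f' x * g x) volume 0 1 := myIntInt (hf'.mul hgc)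
  have hi2 : IntervalIntegrable (fun x => f x * g' x) volume 0 1 := myIntInt (hfc.mul hg')
  have key : (∫ x in (0:ℝ)..1, (f' x * g x + f x * g' x)) = f 1 * g 1 - f 0 * g 0 := by
    apply integral_eq_sub_of_hasDeriv_right_of_le zero_le_one (hfc.mul hgc)
    · intro x hx
      have hx' : x ∈ Icc (0:ℝ) 1 := Ioo_subset_Icc_self hx
      exact (((hf x hx').mul (hg x hx')).hasDerivAt
        (Icc_mem_nhds hx.1 hx.2)).hasDerivWithinAt
    · exact hi1.add hi2
  rw [integral_add hi1 hi2] at key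
  linear_combination key

lemma myFTC (f f' : ℝ → ℂ)
    (hf : ∀ x ∈ Icc (0:ℝ) 1, HasDerivWithinAt f (f' x) (Icc 0 1) x)
    (hf' : ContinuousOn f' (Icc 0 1)) {b : ℝ} (hb : b ∈ Icc (0:ℝ) 1) :
    (∫ x in (0:ℝ)..b, f' x) = f b - f 0 := by
  have hsub : Icc (0:ℝ) b ⊆ Icc 0 1 := Icc_subset_Icc le_rfl hb.2
  apply integral_eq_sub_of_hasDeriv_right_of_le hb.1
    (ContinuousOn.mono (fun x hx => (hf x hx).continuousWithinAt) hsub)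
  · intro x hx
    have hx' : x ∈ Icc (0:ℝ) 1 := ⟨hx.1.le, hx.2.le.trans hb.2⟩
    exact ((hf x hx').hasDerivAt (Icc_mem_nhds hx.1 (lt_of_lt_of_le hx.2 hb.2))).hasDerivWithinAt
  · exact (myIntInt hf').mono_set
      (uIcc_subset_uIcc (by rw [uIcc_of_le zero_le_one]; exact ⟨le_rfl, zero_le_one⟩)
        (by rw [uIcc_of_le zero_le_one]; exact hb))

lemma myZero (g : ℝ → ℝ) (hg : ContinuousOn g (Icc 0 1))
    (hnn : ∀ x ∈ Icc (0:ℝ) 1, 0 ≤ g x)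
    (hz : (∫ x in (0:ℝ)..1, g x) = 0) : ∀ x ∈ Icc (0:ℝ) 1, g x = 0 := by
  by_contra h
  push_neg at h
  obtain ⟨x₀, hx₀, hgx₀⟩ := h
  have hpos : 0 < g x₀ := lt_of_le_of_ne (hnn x₀ hx₀) (Ne.symm hgx₀)
  have hev : ∀ᶠ x in nhdsWithin x₀ (Icc 0 1), g x₀ / 2 < g x :=
    (hg x₀ hx₀).eventually (eventually_gt_nhds (half_lt_self hpos))
  obtain ⟨δ, hδ, hball⟩ := Metric.eventually_nhds_iff.mp (eventually_nhdsWithin_iff.mp hev)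
  set a := max 0 (x₀ - δ/2) with ha
  set b := min 1 (x₀ + δ/2) with hb
  have hx₀1 : (0:ℝ) ≤ x₀ := hx₀.1
  have hx₀2 : x₀ ≤ 1 := hx₀.2
  have hab : a < b := max_lt (lt_min one_pos (by linarith)) (lt_min (by linarith) (by linarith))
  have hsub : Icc a b ⊆ Icc 0 1 := Icc_subset_Icc (le_max_left _ _) (min_le_left _ _)
  have h0a : (0:ℝ) ≤ a := le_max_left _ _
  have hb1 : b ≤ 1 := min_le_left _ _
  have hgpos : ∀ x ∈ Ioo a b, 0 < g x := by
    intro x hx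
    have hx' : x ∈ Icc 0 1 := hsub (Ioo_subset_Icc_self hx)
    have h1 : x₀ - δ/2 ≤ a := le_max_right _ _
    have h2 : b ≤ x₀ + δ/2 := min_le_right _ _
    have hd : dist x x₀ < δ := by
      rw [Real.dist_eq, abs_lt]
      constructor <;> [linarith [hx.1]; linarith [hx.2]]
    exact lt_trans (half_pos hpos) (hball hd hx')
  have hgi : IntervalIntegrable g volume 0 1 :=
    (by rwa [uIcc_of_le zero_le_one] : ContinuousOn g (uIcc 0 1)).intervalIntegrable
  have hmem : ∀ t (_ : (0:ℝ) ≤ t) (_ : t ≤ 1), t ∈ uIcc (0:ℝ) 1 := by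
    intro t h1 h2; rw [uIcc_of_le zero_le_one]; exact ⟨h1, h2⟩
  have hgi1 : IntervalIntegrable g volume 0 a :=
    hgi.mono_set (uIcc_subset_uIcc (hmem 0 le_rfl zero_le_one) (hmem a h0a (hab.le.trans hb1)))
  have hgi2 : IntervalIntegrable g volume a b :=
    hgi.mono_set (uIcc_subset_uIcc (hmem a h0a (hab.le.trans hb1)) (hmem b (h0a.trans hab.le) hb1))
  have hgi3 : IntervalIntegrable g volume b 1 :=
    hgi.mono_set (uIcc_subset_uIcc (hmem b (h0a.trans hab.le) hb1) (hmem 1 zero_le_one le_rfl))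
  have hsplit : (∫ x in (0:ℝ)..a, g x) + (∫ x in a..b, g x) + (∫ x in b..1, g x) = 0 := by
    rw [integral_add_adjacent_intervals hgi1 hgi2,
      integral_add_adjacent_intervals (hgi1.trans hgi2) hgi3]
    exact hz
  have h1nn : 0 ≤ ∫ x in (0:ℝ)..a, g x :=
    integral_nonneg h0a (fun u hu => hnn u ⟨hu.1, hu.2.trans (hab.le.trans hb1)⟩)
  have h3nn : 0 ≤ ∫ x in b..(1:ℝ), g x :=
    integral_nonneg hb1 (fun u hu => hnn u ⟨(h0a.trans hab.le).trans hu.1, hu.2⟩)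
  have h2pos : 0 < ∫ x in a..b, g x := intervalIntegral_pos_of_pos_on hgi2 hgpos hab
  linarith

end Helpers

theorem stmt_2 (p r : ℝ → ℝ) (c alpha : ℝ) (lam : ℂ) (y : ℝ → ℂ)
    (hpc : ContinuousOn p (Icc 0 1)) (hrc : ContinuousOn r (Icc 0 1))
    (hp : ∀ x ∈ Icc (0:ℝ) 1, 0 < p x) (hr : ∀ x ∈ Icc (0:ℝ) 1, 0 < r x)
    (hy : ContDiffOn ℝ 2 y (Icc 0 1))
    (hpy : ContDiffOn ℝ 2 (fun x => (p x : ℂ) * DvC (DvC y) x) (Icc 0 1))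
    (heq : ∀ x ∈ Icc (0:ℝ) 1,
      DvC (DvC (fun t => (p t : ℂ) * DvC (DvC y) t)) x
        - lam * (-(DvC (DvC y) x) + (c : ℂ) * (r x : ℂ) * y x) = 0)
    (hnt : ∃ x ∈ Icc (0:ℝ) 1, y x ≠ 0)
    (hbc : (y 0 = 0 ∧ DvC y 0 = 0 ∧ y 1 = 0 ∧ DvC y 1 = 0) ∨
      (y 0 = 0 ∧ DvC y 0 = 0 ∧ DvC y 1 = 0 ∧
        DvC (fun t => (p t : ℂ) * DvC (DvC y) t) 1 + lam * (alpha : ℂ) * y 1 = 0)) :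
    lam.im = 0 := by
  have hUD : UniqueDiffOn ℝ (Icc (0:ℝ) 1) := uniqueDiffOn_Icc one_pos
  simp only [DvC] at hpy heq hbc
  set y1 : ℝ → ℂ := derivWithin y (Icc 0 1) with hy1def
  set y2 : ℝ → ℂ := derivWithin y1 (Icc 0 1) with hy2def
  set u : ℝ → ℂ := fun t => (p t : ℂ) * y2 t with hudef
  set u1 : ℝ → ℂ := derivWithin u (Icc 0 1) with hu1def
  set u2 : ℝ → ℂ := derivWithin u1 (Icc 0 1) with hu2def
  -- differentiability and continuity facts
  have hy_d : ∀ x ∈ Icc (0:ℝ) 1, HasDerivWithinAt y (y1 x) (Icc 0 1) x :=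
    fun x hx => ((hy.differentiableOn (by norm_num)) x hx).hasDerivWithinAt
  have hy1_cd : ContDiffOn ℝ 1 y1 (Icc 0 1) := hy.derivWithin hUD (by norm_num)
  have hy1_d : ∀ x ∈ Icc (0:ℝ) 1, HasDerivWithinAt y1 (y2 x) (Icc 0 1) x :=
    fun x hx => ((hy1_cd.differentiableOn one_ne_zero) x hx).hasDerivWithinAt
  have hy2_c : ContinuousOn y2 (Icc 0 1) :=
    (hy1_cd.derivWithin (m := 0) hUD (by norm_num)).continuousOn
  have hy_c : ContinuousOn y (Icc 0 1) := hy.continuousOn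
  have hy1_c : ContinuousOn y1 (Icc 0 1) := hy1_cd.continuousOn
  have hu_d : ∀ x ∈ Icc (0:ℝ) 1, HasDerivWithinAt u (u1 x) (Icc 0 1) x :=
    fun x hx => ((hpy.differentiableOn (by norm_num)) x hx).hasDerivWithinAt
  have hu1_cd : ContDiffOn ℝ 1 u1 (Icc 0 1) := hpy.derivWithin hUD (by norm_num)
  have hu1_d : ∀ x ∈ Icc (0:ℝ) 1, HasDerivWithinAt u1 (u2 x) (Icc 0 1) x :=
    fun x hx => ((hu1_cd.differentiableOn one_ne_zero) x hx).hasDerivWithinAt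
  have hu2_c : ContinuousOn u2 (Icc 0 1) :=
    (hu1_cd.derivWithin (m := 0) hUD (by norm_num)).continuousOn
  have hu_c : ContinuousOn u (Icc 0 1) := hpy.continuousOn
  have hu1_c : ContinuousOn u1 (Icc 0 1) := hu1_cd.continuousOn
  -- real integrals
  set Areal : ℝ := ∫ x in (0:ℝ)..1, p x * Complex.normSq (y2 x) with hAdef
  set Breal : ℝ := ∫ x in (0:ℝ)..1, Complex.normSq (y1 x) with hBdef
  set Creal : ℝ := ∫ x in (0:ℝ)..1, r x * Complex.normSq (y x) with hCdef
  -- integration by parts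
  have hIBP1 : (∫ x in (0:ℝ)..1, u2 x * star (y x))
      = u1 1 * star (y 1) - u1 0 * star (y 0) - ∫ x in (0:ℝ)..1, u1 x * star (y1 x) :=
    myIBP u1 (fun t => star (y t)) u2 (fun t => star (y1 t)) hu1_d
      (fun x hx => (hy_d x hx).star) hu2_c (continuous_star.comp_continuousOn hy1_c)
  have hIBP2 : (∫ x in (0:ℝ)..1, u1 x * star (y1 x))
      = u 1 * star (y1 1) - u 0 * star (y1 0) - ∫ x in (0:ℝ)..1, u x * star (y2 x) :=
    myIBP u (fun t => star (y1 t)) u1 (fun t => star (y2 t)) hu_d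
      (fun x hx => (hy1_d x hx).star) hu1_c (continuous_star.comp_continuousOn hy2_c)
  have hIBP3 : (∫ x in (0:ℝ)..1, y2 x * star (y x))
      = y1 1 * star (y 1) - y1 0 * star (y 0) - ∫ x in (0:ℝ)..1, y1 x * star (y1 x) :=
    myIBP y1 (fun t => star (y t)) y2 (fun t => star (y1 t)) hy1_d
      (fun x hx => (hy_d x hx).star) hy2_c (continuous_star.comp_continuousOn hy1_c)
  have hsq : ∀ z : ℂ, z * star z = (Complex.normSq z : ℂ) := fun z => by
    rw [Complex.star_def]; exact Complex.mul_conj z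
  -- convert to real integrals
  have hA : (∫ x in (0:ℝ)..1, u x * star (y2 x)) = (Areal : ℂ) := by
    rw [hAdef, ← intervalIntegral.integral_ofReal]
    apply intervalIntegral.integral_congr
    intro x _
    simp only [hudef, Complex.ofReal_mul, mul_assoc, hsq]
  have hB : (∫ x in (0:ℝ)..1, y1 x * star (y1 x)) = (Breal : ℂ) := by
    rw [hBdef, ← intervalIntegral.integral_ofReal]
    apply intervalIntegral.integral_congr
    intro x _
    simp only [hsq]
  have hC : (∫ x in (0:ℝ)..1, (r x : ℂ) * (y x * star (y x))) = (Creal : ℂ) := by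
    rw [hCdef, ← intervalIntegral.integral_ofReal]
    apply intervalIntegral.integral_congr
    intro x _
    simp only [Complex.ofReal_mul, hsq]
  -- use the equation
  have heq' : ∀ x ∈ Icc (0:ℝ) 1, u2 x = lam * (-y2 x + (c:ℂ) * (r x:ℂ) * y x) :=
    fun x hx => sub_eq_zero.mp (heq x hx)
  have hstep : (∫ x in (0:ℝ)..1, u2 x * star (y x))
      = lam * (-(∫ x in (0:ℝ)..1, y2 x * star (y x))
          + (c:ℂ) * ∫ x in (0:ℝ)..1, (r x:ℂ) * (y x * star (y x))) := by
    have hcong : (∫ x in (0:ℝ)..1, u2 x * star (y x))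
        = ∫ x in (0:ℝ)..1, lam * (-(y2 x * star (y x))
            + (c:ℂ) * ((r x:ℂ) * (y x * star (y x)))) := by
      apply intervalIntegral.integral_congr
      intro x hx
      rw [uIcc_of_le zero_le_one] at hx
      show u2 x * star (y x) = _
      rw [heq' x hx]; ring
    rw [hcong, intervalIntegral.integral_const_mul]
    congr 1
    have hi1 : IntervalIntegrable (fun x => -(y2 x * star (y x))) MeasureTheory.volume 0 1 :=
      myIntInt ((hy2_c.mul (continuous_star.comp_continuousOn hy_c)).neg)
    have hi2 : IntervalIntegrable (fun x => (r x:ℂ) * (y x * star (y x))) MeasureTheory.volume 0 1 :=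
      myIntInt ((Complex.continuous_ofReal.comp_continuousOn hrc).mul
        (hy_c.mul (continuous_star.comp_continuousOn hy_c)))
    rw [intervalIntegral.integral_add hi1 (hi2.const_mul _),
      intervalIntegral.integral_neg, intervalIntegral.integral_const_mul]
  -- key identity
  set D : ℝ := Complex.normSq (y 1) with hDdef
  have hkey : (Areal : ℂ) = lam * ((Breal + c * Creal + alpha * D : ℝ) : ℂ) := by
    rcases hbc with ⟨h0, h0', h1, h1'⟩ | ⟨h0, h0', h1', h1⟩
    · have hD0 : D = 0 := by rw [hDdef, h1]; simp
      rw [hIBP1, hIBP2, hIBP3, hA, hB, hC] at hstep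
      rw [h0, h1, h0', h1'] at hstep
      simp only [star_zero, mul_zero, zero_mul, sub_zero, zero_sub, neg_neg] at hstep
      rw [hD0]
      push_cast
      linear_combination hstep
    · have hu1 : u1 1 = -(lam * (alpha:ℂ) * y 1) := by linear_combination h1
      rw [hIBP1, hIBP2, hIBP3, hA, hB, hC] at hstep
      rw [h0, h0', h1', hu1] at hstep
      simp only [star_zero, mul_zero, zero_mul, sub_zero, zero_sub, neg_neg] at hstep
      have hyy : y 1 * star (y 1) = (D:ℂ) := hsq (y 1)
      push_cast
      linear_combination hstep + lam * (alpha:ℂ) * hyy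
  -- take imaginary and real parts
  set Q : ℝ := Breal + c * Creal + alpha * D with hQdef
  have him : lam.im * Q = 0 := by
    have := congrArg Complex.im hkey
    simpa [Complex.mul_im] using this.symm
  have hre : Areal = lam.re * Q := by
    have := congrArg Complex.re hkey
    simpa [Complex.mul_re] using this
  by_cases hQ : Q = 0
  · exfalso
    have hA0 : Areal = 0 := by rw [hre, hQ, mul_zero]
    -- p * |y2|^2 has zero integral, so y2 = 0 on Icc
    have hg : ∀ x ∈ Icc (0:ℝ) 1, p x * Complex.normSq (y2 x) = 0 := by
      apply myZero
      · exact hpc.mul (Complex.continuous_normSq.comp_continuousOn hy2_c)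
      · exact fun x hx => mul_nonneg (hp x hx).le (Complex.normSq_nonneg _)
      · exact hA0 ▸ hAdef.symm
    have hy2_0 : ∀ x ∈ Icc (0:ℝ) 1, y2 x = 0 := by
      intro x hx
      have := hg x hx
      have hpx := (hp x hx).ne'
      have : Complex.normSq (y2 x) = 0 := by
        rcases mul_eq_zero.mp this with h | h
        · exact absurd h hpx
        · exact h
      exact Complex.normSq_eq_zero.mp this
    have h00 : y 0 = 0 := by rcases hbc with ⟨h, _, _, _⟩ | ⟨h, _, _, _⟩ <;> exact h
    have h0d : y1 0 = 0 := by rcases hbc with ⟨_, h, _, _⟩ | ⟨_, h, _, _⟩ <;> exact h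
    have hy1_0 : ∀ x ∈ Icc (0:ℝ) 1, y1 x = 0 := by
      intro x hx
      have hftc := myFTC y1 y2 hy1_d hy2_c hx
      have hz : (∫ t in (0:ℝ)..x, y2 t) = 0 := by
        have hEq : EqOn y2 (fun _ => (0:ℂ)) (uIcc 0 x) := by
          intro t ht
          rw [uIcc_of_le hx.1] at ht
          exact hy2_0 t ⟨ht.1, ht.2.trans hx.2⟩
        rw [intervalIntegral.integral_congr hEq]
        simp
      rw [hz, h0d, sub_zero] at hftc
      exact hftc.symm
    have hy_0 : ∀ x ∈ Icc (0:ℝ) 1, y x = 0 := by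
      intro x hx
      have hftc := myFTC y y1 hy_d hy1_c hx
      have hz : (∫ t in (0:ℝ)..x, y1 t) = 0 := by
        have hEq : EqOn y1 (fun _ => (0:ℂ)) (uIcc 0 x) := by
          intro t ht
          rw [uIcc_of_le hx.1] at ht
          exact hy1_0 t ⟨ht.1, ht.2.trans hx.2⟩
        rw [intervalIntegral.integral_congr hEq]
        simp
      rw [hz, h00, sub_zero] at hftc
      exact hftc.symm
    obtain ⟨x, hx, hxne⟩ := hnt
    exact hxne (hy_0 x hx)
  · exact (mul_eq_zero.mp him).resolve_right hQ
end

section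
/- Let p, r : [0,1] → ℝ be continuous with p(x) > 0 and r(x) > 0 for all x ∈ [0,1], and let λ > 0. If y₁ and y₂ are nontrivial classical solutions of (p·y'')'' = λ·r·y on [0,1] both satisfying y(0) = y'(0) = y(1) = y'(1) = 0, then y₁ and y₂ are linearly dependent (i.e. the positive eigenvalue λ has geometric multiplicity 1). -/
open Set Topology Filter

/-- `y` is not identically zero on `[0,1]`. -/
def Nontriv (y : ℝ → ℝ) : Prop := ∃ x ∈ Set.Icc (0:ℝ) 1, y x ≠ 0

/-- `y` is a classical solution of `(p y'')'' = lam * r * y` on `[0,1]`. -/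
def SolS (p r : ℝ → ℝ) (lam : ℝ) (y : ℝ → ℝ) : Prop :=
  ContDiffOn ℝ 2 y (Set.Icc 0 1) ∧
  ContDiffOn ℝ 2 (fun x => p x * Dv (Dv y) x) (Set.Icc 0 1) ∧
  ∀ x ∈ Set.Icc (0:ℝ) 1,
    Dv (Dv (fun t => p t * Dv (Dv y) t)) x = lam * (r x * y x)

/-- Clamped boundary conditions `y(0) = y'(0) = y(1) = y'(1) = 0`. -/
def BC1 (y : ℝ → ℝ) : Prop := y 0 = 0 ∧ Dv y 0 = 0 ∧ y 1 = 0 ∧ Dv y 1 = 0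

/-- Boundary conditions `y(0) = y'(0) = y'(1) = 0`, `(p y'')'(1) + lam * alpha * y(1) = 0`. -/
def BC2S (p : ℝ → ℝ) (lam alpha : ℝ) (y : ℝ → ℝ) : Prop :=
  y 0 = 0 ∧ Dv y 0 = 0 ∧ Dv y 1 = 0 ∧
  Dv (fun t => p t * Dv (Dv y) t) 1 + lam * alpha * y 1 = 0

/-- Linear dependence of two functions on `[0,1]`. -/
def LinDep (y₁ y₂ : ℝ → ℝ) : Prop :=
  ∃ a b : ℝ, (a ≠ 0 ∨ b ≠ 0) ∧ ∀ x ∈ Set.Icc (0:ℝ) 1, a * y₁ x + b * y₂ x = 0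

private lemma UD : UniqueDiffOn ℝ (Icc (0:ℝ) 1) := uniqueDiffOn_Icc one_pos

private lemma diffOn_of_c2 {u : ℝ → ℝ} (hu : ContDiffOn ℝ 2 u (Icc 0 1)) :
    DifferentiableOn ℝ u (Icc 0 1) := hu.differentiableOn (by norm_num)

private lemma c1_Dv {u : ℝ → ℝ} (hu : ContDiffOn ℝ 2 u (Icc 0 1)) :
    ContDiffOn ℝ 1 (Dv u) (Icc 0 1) := hu.derivWithin UD (by norm_num)

private lemma mono_Dv {f : ℝ → ℝ} (hf : ContDiffOn ℝ 1 f (Icc 0 1)) {a b : ℝ}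
    (ha : 0 ≤ a) (hb : b ≤ 1)
    (h : ∀ x ∈ Ioo a b, 0 ≤ Dv f x) : MonotoneOn f (Icc a b) := by
  apply monotoneOn_of_deriv_nonneg (convex_Icc a b)
    (hf.continuousOn.mono (Icc_subset_Icc ha hb))
  · intro x hx
    rw [interior_Icc] at hx
    have hx' : x ∈ Ioo (0:ℝ) 1 := ⟨lt_of_le_of_lt ha hx.1, lt_of_lt_of_le hx.2 hb⟩
    exact ((hf.differentiableOn one_ne_zero x (Ioo_subset_Icc_self hx')).differentiableAt
      (Icc_mem_nhds hx'.1 hx'.2)).differentiableWithinAt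
  · intro x hx
    rw [interior_Icc] at hx
    have hx' : x ∈ Ioo (0:ℝ) 1 := ⟨lt_of_le_of_lt ha hx.1, lt_of_lt_of_le hx.2 hb⟩
    rw [← derivWithin_of_mem_nhds (Icc_mem_nhds hx'.1 hx'.2)]
    exact h x hx

private lemma strict_Dv {f : ℝ → ℝ} (hf : ContinuousOn f (Icc 0 1)) {a b : ℝ}
    (ha : 0 ≤ a) (hb : b ≤ 1)
    (h : ∀ x ∈ Ioo a b, 0 < Dv f x) : StrictMonoOn f (Icc a b) := by
  apply strictMonoOn_of_deriv_pos (convex_Icc a b) (hf.mono (Icc_subset_Icc ha hb))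
  intro x hx
  rw [interior_Icc] at hx
  have hx' : x ∈ Ioo (0:ℝ) 1 := ⟨lt_of_le_of_lt ha hx.1, lt_of_lt_of_le hx.2 hb⟩
  rw [← derivWithin_of_mem_nhds (Icc_mem_nhds hx'.1 hx'.2)]
  exact h x hx

private lemma pos_lemma (p r : ℝ → ℝ) (lam : ℝ)
    (hp : ∀ x ∈ Icc (0:ℝ) 1, 0 < p x) (hr : ∀ x ∈ Icc (0:ℝ) 1, 0 < r x)
    (hlam : 0 < lam) (u : ℝ → ℝ)
    (hu : SolS p r lam u) (h0 : u 0 = 0) (h1 : Dv u 0 = 0) (h2 : Dv (Dv u) 0 = 0)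
    (hc : 0 < Dv (fun t => p t * Dv (Dv u) t) 0) : 0 < u 1 := by
  obtain ⟨huc, hzc, heq⟩ := hu
  set z : ℝ → ℝ := fun t => p t * Dv (Dv u) t with hzdef
  have hz0 : z 0 = 0 := by simp [hzdef, h2]
  have hucont : ContinuousOn u (Icc 0 1) := huc.continuousOn
  have hu'c1 : ContDiffOn ℝ 1 (Dv u) (Icc 0 1) := c1_Dv huc
  have hu'cont := hu'c1.continuousOn
  have hzcont : ContinuousOn z (Icc 0 1) := hzc.continuousOn
  have hz'c1 : ContDiffOn ℝ 1 (Dv z) (Icc 0 1) := c1_Dv hzc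
  have hz'cont := hz'c1.continuousOn
  -- the bootstrap chain giving nonnegativity of u from nonnegativity of z'
  have chain : ∀ b : ℝ, 0 < b → b ≤ 1 → (∀ x ∈ Ioo (0:ℝ) b, 0 ≤ Dv z x) →
      ∀ s ∈ Icc (0:ℝ) b, 0 ≤ u s := by
    intro b hb0 hb1 hzd s hs
    have hzmono := mono_Dv (hzc.of_le (by norm_num)) le_rfl hb1 hzd
    have hznn : ∀ x ∈ Ioo (0:ℝ) b, 0 ≤ Dv (Dv u) x := by
      intro x hx
      have hzx : 0 ≤ z x := by
        have := hzmono ⟨le_rfl, hb0.le⟩ ⟨hx.1.le, hx.2.le⟩ hx.1.le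
        rwa [hz0] at this
      have hpx := hp x ⟨hx.1.le, hx.2.le.trans hb1⟩
      have hzz : z x = p x * Dv (Dv u) x := rfl
      nlinarith
    have hu'mono := mono_Dv hu'c1 le_rfl hb1 hznn
    have hu'nn : ∀ x ∈ Ioo (0:ℝ) b, 0 ≤ Dv u x := by
      intro x hx
      have := hu'mono ⟨le_rfl, hb0.le⟩ ⟨hx.1.le, hx.2.le⟩ hx.1.le
      rwa [h1] at this
    have humono := mono_Dv (huc.of_le (by norm_num)) le_rfl hb1 hu'nn
    have := humono ⟨le_rfl, hb0.le⟩ hs hs.1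
    rwa [h0] at this
  -- core positivity
  have core : ∀ T : ℝ, 0 < T → T ≤ 1 → (∀ s ∈ Icc (0:ℝ) T, 0 ≤ u s) → 0 < u T := by
    intro T hT0 hT1 hpos
    have hz'mono : MonotoneOn (Dv z) (Icc 0 T) := by
      apply mono_Dv hz'c1 le_rfl hT1
      intro x hx
      have hx1 : x ∈ Icc (0:ℝ) 1 := ⟨hx.1.le, hx.2.le.trans hT1⟩
      have := heq x hx1
      have hrx := hr x hx1
      have hux := hpos x ⟨hx.1.le, hx.2.le⟩
      rw [this]
      positivity
    have hz'pos : ∀ s ∈ Icc (0:ℝ) T, 0 < Dv z s := by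
      intro s hs
      exact lt_of_lt_of_le hc (hz'mono ⟨le_rfl, hT0.le⟩ hs hs.1)
    have hzpos : ∀ s, 0 < s → s ≤ T → 0 < z s := by
      intro s hs0 hsT
      have hsm := strict_Dv hzcont le_rfl hT1
        (fun x hx => hz'pos x ⟨hx.1.le, hx.2.le⟩) ⟨le_rfl, hT0.le⟩ ⟨hs0.le, hsT⟩ hs0
      rwa [hz0] at hsm
    have hu''pos : ∀ x ∈ Ioo (0:ℝ) T, 0 < Dv (Dv u) x := by
      intro x hx
      have hx1 : x ∈ Icc (0:ℝ) 1 := ⟨hx.1.le, hx.2.le.trans hT1⟩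
      have hzx := hzpos x hx.1 hx.2.le
      have hpx := hp x hx1
      have hzz : z x = p x * Dv (Dv u) x := rfl
      nlinarith
    have hu'pos : ∀ x ∈ Ioo (0:ℝ) T, 0 < Dv u x := by
      intro x hx
      have := strict_Dv hu'cont le_rfl hT1 hu''pos ⟨le_rfl, hT0.le⟩ ⟨hx.1.le, hx.2.le⟩ hx.1
      rwa [h1] at this
    have := strict_Dv hucont le_rfl hT1 hu'pos ⟨le_rfl, hT0.le⟩ ⟨hT0.le, le_rfl⟩ hT0
    rwa [h0] at this
  -- the set A
  set A : Set ℝ := {t | t ∈ Icc (0:ℝ) 1 ∧ ∀ s ∈ Icc (0:ℝ) t, 0 ≤ u s} with hA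
  have hδ : ∃ δ, 0 < δ ∧ δ ∈ A := by
    have hcw : ContinuousWithinAt (Dv z) (Icc 0 1) 0 := hz'cont 0 ⟨le_rfl, zero_le_one⟩
    have hmem : (Dv z) ⁻¹' (Ioi 0) ∈ 𝓝[Icc (0:ℝ) 1] 0 := hcw (Ioi_mem_nhds hc)
    rw [Metric.mem_nhdsWithin_iff] at hmem
    obtain ⟨ε, hε0, hball⟩ := hmem
    refine ⟨min (ε/2) 1, by positivity, ⟨le_of_lt (by positivity), min_le_right _ _⟩, ?_⟩
    apply chain _ (by positivity) (min_le_right _ _)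
    intro x hx
    have hx1 : x ∈ Icc (0:ℝ) 1 := ⟨hx.1.le, hx.2.le.trans (min_le_right _ _)⟩
    have hxb : x ∈ Metric.ball (0:ℝ) ε := by
      rw [Metric.mem_ball, Real.dist_eq, sub_zero, abs_of_pos hx.1]
      exact lt_of_lt_of_le hx.2 ((min_le_left _ _).trans (by linarith))
    exact le_of_lt (hball ⟨hxb, hx1⟩)
  obtain ⟨δ, hδ0, hδA⟩ := hδ
  have hAne : A.Nonempty := ⟨δ, hδA⟩
  have hAbdd : BddAbove A := ⟨1, fun t ht => ht.1.2⟩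
  set m := sSup A with hm
  have hδm : δ ≤ m := le_csSup hAbdd hδA
  have hm0 : 0 < m := lt_of_lt_of_le hδ0 hδm
  have hm1 : m ≤ 1 := csSup_le hAne (fun t ht => ht.1.2)
  have hmlt : ∀ s, 0 ≤ s → s < m → 0 ≤ u s := by
    intro s hs0 hsm
    obtain ⟨t, htA, hst⟩ := exists_lt_of_lt_csSup hAne hsm
    exact htA.2 s ⟨hs0, hst.le⟩
  have hum : 0 ≤ u m := by
    have hclo : m ∈ closure (Ico (0:ℝ) m) := by
      rw [closure_Ico hm0.ne]; exact ⟨hm0.le, le_rfl⟩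
    have hcw : ContinuousWithinAt u (Ico 0 m) m :=
      (hucont m ⟨hm0.le, hm1⟩).mono (fun x hx => ⟨hx.1, hx.2.le.trans hm1⟩)
    haveI : (𝓝[Ico (0:ℝ) m] m).NeBot := mem_closure_iff_nhdsWithin_neBot.mp hclo
    exact ge_of_tendsto hcw (eventually_nhdsWithin_of_forall (fun s hs => hmlt s hs.1 hs.2))
  have hmA : m ∈ A := by
    refine ⟨⟨hm0.le, hm1⟩, fun s hs => ?_⟩
    rcases lt_or_eq_of_le hs.2 with h | h
    · exact hmlt s hs.1 h
    · rw [h]; exact hum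
  have humpos : 0 < u m := core m hm0 hm1 hmA.2
  by_cases hmeq : m = 1
  · rwa [hmeq] at humpos
  · exfalso
    have hmlt1 : m < 1 := lt_of_le_of_ne hm1 hmeq
    have hcw : ContinuousWithinAt u (Icc 0 1) m := hucont m ⟨hm0.le, hm1⟩
    have hmem : u ⁻¹' (Ioi 0) ∈ 𝓝[Icc (0:ℝ) 1] m := hcw (Ioi_mem_nhds humpos)
    rw [Metric.mem_nhdsWithin_iff] at hmem
    obtain ⟨ε, hε0, hball⟩ := hmem
    set m' := min (m + ε/2) 1 with hm'
    have hmm' : m < m' := lt_min (by linarith) hmlt1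
    have hm'1 : m' ≤ 1 := min_le_right _ _
    have hm'A : m' ∈ A := by
      refine ⟨⟨le_trans hm0.le hmm'.le, hm'1⟩, ?_⟩
      intro s hs
      rcases le_or_gt s m with h | h
      · exact hmA.2 s ⟨hs.1, h⟩
      · have hs1 : s ∈ Icc (0:ℝ) 1 := ⟨hs.1, hs.2.trans hm'1⟩
        have hsball : s ∈ Metric.ball m ε := by
          rw [Metric.mem_ball, Real.dist_eq, abs_of_pos (by linarith)]
          have : s ≤ m + ε/2 := hs.2.trans (min_le_left _ _)
          linarith
        exact le_of_lt (hball ⟨hsball, hs1⟩)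
    exact absurd (le_csSup hAbdd hm'A) (not_le.mpr hmm')

private lemma zero_lemma (p r : ℝ → ℝ) (lam : ℝ)
    (hpc : ContinuousOn p (Icc 0 1)) (hrc : ContinuousOn r (Icc 0 1))
    (hp : ∀ x ∈ Icc (0:ℝ) 1, 0 < p x) (hr : ∀ x ∈ Icc (0:ℝ) 1, 0 < r x)
    (hlam : 0 < lam) (u : ℝ → ℝ)
    (hu : SolS p r lam u) (h0 : u 0 = 0) (h1 : Dv u 0 = 0) (h2 : Dv (Dv u) 0 = 0)
    (hc : Dv (fun t => p t * Dv (Dv u) t) 0 = 0) : ∀ x ∈ Icc (0:ℝ) 1, u x = 0 := by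
  obtain ⟨huc, hzc, heq⟩ := hu
  set z : ℝ → ℝ := fun t => p t * Dv (Dv u) t with hzdef
  have hz0 : z 0 = 0 := by simp [hzdef, h2]
  obtain ⟨x₀, hx₀, hx₀min⟩ := isCompact_Icc.exists_isMinOn (nonempty_Icc.mpr zero_le_one) hpc
  obtain ⟨x₁, hx₁, hx₁max⟩ := isCompact_Icc.exists_isMaxOn (nonempty_Icc.mpr zero_le_one) hrc
  have hpm : 0 < p x₀ := hp x₀ hx₀
  have hrM : 0 < r x₁ := hr x₁ hx₁
  set K := max 1 (max (1 / p x₀) (lam * r x₁)) with hK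
  have hK1 : (1:ℝ) ≤ K := le_max_left _ _
  have hKp : 1 / p x₀ ≤ K := le_trans (le_max_left _ _) (le_max_right _ _)
  have hKr : lam * r x₁ ≤ K := le_trans (le_max_right _ _) (le_max_right _ _)
  set F : ℝ → ℝ × ℝ × ℝ × ℝ := fun t => (u t, Dv u t, z t, Dv z t) with hF
  set F' : ℝ → ℝ × ℝ × ℝ × ℝ := fun t => (Dv u t, z t / p t, Dv z t, lam * (r t * u t)) with hF'
  -- component norms
  have hcomp : ∀ t, |u t| ≤ ‖F t‖ ∧ |Dv u t| ≤ ‖F t‖ ∧ |z t| ≤ ‖F t‖ ∧ |Dv z t| ≤ ‖F t‖ := by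
    intro t
    simp only [hF, Prod.norm_def, Real.norm_eq_abs]
    refine ⟨le_max_left _ _, ?_, ?_, ?_⟩
    · exact le_trans (le_max_left _ _) (le_max_right _ _)
    · exact le_trans (le_trans (le_max_left _ _) (le_max_right _ _)) (le_max_right _ _)
    · exact le_trans (le_trans (le_max_right _ _) (le_max_right _ _)) (le_max_right _ _)
  have hFcont : ContinuousOn F (Icc 0 1) :=
    (huc.continuousOn.prodMk ((c1_Dv huc).continuousOn.prodMk
      (hzc.continuousOn.prodMk (c1_Dv hzc).continuousOn)))
  have hIci : ∀ t ∈ Ico (0:ℝ) 1, Icc (0:ℝ) 1 ∈ 𝓝[Ici t] t := by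
    intro t ht
    have hA : Iic (1:ℝ) ∈ 𝓝[Ici t] t := mem_nhdsWithin_of_mem_nhds (Iic_mem_nhds ht.2)
    have hB : Ici t ∈ 𝓝[Ici t] t := self_mem_nhdsWithin
    filter_upwards [hA, hB] with x hx1 hx2
    exact ⟨le_trans ht.1 hx2, hx1⟩
  have hder : ∀ t ∈ Ico (0:ℝ) 1, HasDerivWithinAt F (F' t) (Ici t) t := by
    intro t ht
    have ht1 : t ∈ Icc (0:ℝ) 1 := ⟨ht.1, ht.2.le⟩
    have d1 : HasDerivWithinAt u (Dv u t) (Icc 0 1) t :=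
      ((diffOn_of_c2 huc) t ht1).hasDerivWithinAt
    have d2 : HasDerivWithinAt (Dv u) (z t / p t) (Icc 0 1) t := by
      have : z t / p t = Dv (Dv u) t := by
        show p t * Dv (Dv u) t / p t = _
        rw [mul_div_cancel_left₀ _ (hp t ht1).ne']
      rw [this]
      exact (((c1_Dv huc).differentiableOn one_ne_zero) t ht1).hasDerivWithinAt
    have d3 : HasDerivWithinAt z (Dv z t) (Icc 0 1) t :=
      ((diffOn_of_c2 hzc) t ht1).hasDerivWithinAt
    have d4 : HasDerivWithinAt (Dv z) (lam * (r t * u t)) (Icc 0 1) t := by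
      rw [← heq t ht1]
      exact (((c1_Dv hzc).differentiableOn one_ne_zero) t ht1).hasDerivWithinAt
    exact ((d1.prodMk (d2.prodMk (d3.prodMk d4))).mono_of_mem_nhdsWithin (hIci t ht))
  have hbound : ∀ t ∈ Ico (0:ℝ) 1, ‖F' t‖ ≤ K * ‖F t‖ + 0 := by
    intro t ht
    have ht1 : t ∈ Icc (0:ℝ) 1 := ⟨ht.1, ht.2.le⟩
    obtain ⟨c1, c2, c3, c4⟩ := hcomp t
    have hFn : 0 ≤ ‖F t‖ := norm_nonneg _
    have hpt := hp t ht1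
    have hrt := hr t ht1
    have hptm : p x₀ ≤ p t := hx₀min ht1
    have hrtM : r t ≤ r x₁ := hx₁max ht1
    rw [add_zero]
    have e1 : |Dv u t| ≤ K * ‖F t‖ := le_trans c2 (le_mul_of_one_le_left hFn hK1)
    have e2 : |z t / p t| ≤ K * ‖F t‖ := by
      rw [abs_div, abs_of_pos hpt]
      calc |z t| / p t ≤ ‖F t‖ / p x₀ := by gcongr
        _ = (1 / p x₀) * ‖F t‖ := by ring
        _ ≤ K * ‖F t‖ := mul_le_mul_of_nonneg_right hKp hFn
    have e3 : |Dv z t| ≤ K * ‖F t‖ := le_trans c4 (le_mul_of_one_le_left hFn hK1)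
    have e4 : |lam * (r t * u t)| ≤ K * ‖F t‖ := by
      rw [abs_mul, abs_mul, abs_of_pos hlam, abs_of_pos hrt]
      calc lam * (r t * |u t|) ≤ lam * (r x₁ * ‖F t‖) := by gcongr
        _ = (lam * r x₁) * ‖F t‖ := by ring
        _ ≤ K * ‖F t‖ := mul_le_mul_of_nonneg_right hKr hFn
    simp only [hF', Prod.norm_def, Real.norm_eq_abs]
    exact max_le e1 (max_le e2 (max_le e3 e4))
  have hF0 : ‖F 0‖ ≤ 0 := by
    have : F 0 = 0 := by
      simp [hF, h0, h1, hz0, hc, Prod.mk_eq_zero]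
    rw [this, norm_zero]
  have hres := norm_le_gronwallBound_of_norm_deriv_right_le hFcont hder hF0 hbound
  intro x hx
  have := hres x hx
  rw [gronwallBound_ε0_δ0] at this
  have hux : |u x| ≤ 0 := le_trans (hcomp x).1 this
  exact abs_eq_zero.mp (le_antisymm hux (abs_nonneg _))

private lemma dv_comb {f g : ℝ → ℝ} (hf : DifferentiableOn ℝ f (Icc 0 1))
    (hg : DifferentiableOn ℝ g (Icc 0 1)) (a b : ℝ) :
    ∀ x ∈ Icc (0:ℝ) 1, Dv (fun t => a * f t + b * g t) x = a * Dv f x + b * Dv g x := by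
  intro x hx
  unfold Dv
  rw [derivWithin_fun_add ((hf x hx).const_mul a) ((hg x hx).const_mul b),
      derivWithin_const_mul a (hf x hx), derivWithin_const_mul b (hg x hx)]

private lemma solS_comb {p r : ℝ → ℝ} {lam : ℝ} {y₁ y₂ : ℝ → ℝ}
    (h₁ : SolS p r lam y₁) (h₂ : SolS p r lam y₂) (a b : ℝ) :
    SolS p r lam (fun x => a * y₁ x + b * y₂ x) ∧
    (∀ x ∈ Icc (0:ℝ) 1, Dv (fun t => a * y₁ t + b * y₂ t) x = a * Dv y₁ x + b * Dv y₂ x) ∧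
    (∀ x ∈ Icc (0:ℝ) 1,
      Dv (Dv (fun t => a * y₁ t + b * y₂ t)) x = a * Dv (Dv y₁) x + b * Dv (Dv y₂) x) ∧
    (∀ x ∈ Icc (0:ℝ) 1,
      Dv (fun t => p t * Dv (Dv (fun s => a * y₁ s + b * y₂ s)) t) x
        = a * Dv (fun t => p t * Dv (Dv y₁) t) x + b * Dv (fun t => p t * Dv (Dv y₂) t) x) := by
  obtain ⟨h1c, h1z, h1e⟩ := h₁
  obtain ⟨h2c, h2z, h2e⟩ := h₂
  set u : ℝ → ℝ := fun x => a * y₁ x + b * y₂ x with hu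
  have huc : ContDiffOn ℝ 2 u (Icc 0 1) :=
    (contDiffOn_const.mul h1c).add (contDiffOn_const.mul h2c)
  have e1 : ∀ x ∈ Icc (0:ℝ) 1, Dv u x = a * Dv y₁ x + b * Dv y₂ x :=
    dv_comb (diffOn_of_c2 h1c) (diffOn_of_c2 h2c) a b
  have e2 : ∀ x ∈ Icc (0:ℝ) 1, Dv (Dv u) x = a * Dv (Dv y₁) x + b * Dv (Dv y₂) x := by
    intro x hx
    have : Dv (Dv u) x = Dv (fun t => a * Dv y₁ t + b * Dv y₂ t) x := by
      unfold Dv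
      exact derivWithin_congr (fun t ht => e1 t ht) (e1 x hx)
    rw [this]
    exact dv_comb ((c1_Dv h1c).differentiableOn one_ne_zero)
      ((c1_Dv h2c).differentiableOn one_ne_zero) a b x hx
  have ez : EqOn (fun t => p t * Dv (Dv u) t)
      (fun t => a * (p t * Dv (Dv y₁) t) + b * (p t * Dv (Dv y₂) t)) (Icc 0 1) := by
    intro t ht
    simp only
    rw [e2 t ht]; ring
  have hzc : ContDiffOn ℝ 2 (fun t => p t * Dv (Dv u) t) (Icc 0 1) :=
    (((contDiffOn_const.mul h1z).add (contDiffOn_const.mul h2z)).congr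
      (fun x hx => ez hx))
  have ez' : ∀ x ∈ Icc (0:ℝ) 1,
      Dv (fun t => p t * Dv (Dv u) t) x
        = a * Dv (fun t => p t * Dv (Dv y₁) t) x + b * Dv (fun t => p t * Dv (Dv y₂) t) x := by
    intro x hx
    have : Dv (fun t => p t * Dv (Dv u) t) x
        = Dv (fun t => a * (p t * Dv (Dv y₁) t) + b * (p t * Dv (Dv y₂) t)) x := by
      unfold Dv
      exact derivWithin_congr ez (ez hx)
    rw [this]
    exact dv_comb (diffOn_of_c2 h1z) (diffOn_of_c2 h2z) a b x hx
  have ez'' : ∀ x ∈ Icc (0:ℝ) 1,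
      Dv (Dv (fun t => p t * Dv (Dv u) t)) x = lam * (r x * u x) := by
    intro x hx
    have step1 : Dv (Dv (fun t => p t * Dv (Dv u) t)) x
        = Dv (fun t => a * Dv (fun s => p s * Dv (Dv y₁) s) t
              + b * Dv (fun s => p s * Dv (Dv y₂) s) t) x := by
      unfold Dv
      refine derivWithin_congr (fun t ht => ?_) (ez' x hx)
      exact ez' t ht
    rw [step1, dv_comb ((c1_Dv h1z).differentiableOn one_ne_zero)
      ((c1_Dv h2z).differentiableOn one_ne_zero) a b x hx, h1e x hx, h2e x hx]
    simp only [hu]; ring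
  exact ⟨⟨huc, hzc, ez''⟩, e1, e2, ez'⟩

private lemma key (p r : ℝ → ℝ) (lam : ℝ)
    (hpc : ContinuousOn p (Icc 0 1)) (hrc : ContinuousOn r (Icc 0 1))
    (hp : ∀ x ∈ Icc (0:ℝ) 1, 0 < p x) (hr : ∀ x ∈ Icc (0:ℝ) 1, 0 < r x)
    (hlam : 0 < lam) (u : ℝ → ℝ)
    (hu : SolS p r lam u) (h0 : u 0 = 0) (h1 : Dv u 0 = 0) (h2 : Dv (Dv u) 0 = 0)
    (h3 : u 1 = 0) : ∀ x ∈ Icc (0:ℝ) 1, u x = 0 := by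
  have h0' : (0:ℝ) ∈ Icc (0:ℝ) 1 := ⟨le_rfl, zero_le_one⟩
  rcases lt_trichotomy (Dv (fun t => p t * Dv (Dv u) t) 0) 0 with hc | hc | hc
  · exfalso
    obtain ⟨hv, hv1, hv2, hv3⟩ := solS_comb hu hu (-1) 0
    have hv0 : (fun x => (-1:ℝ) * u x + 0 * u x) 0 = 0 := by simp [h0]
    have hvd0 : Dv (fun x => (-1:ℝ) * u x + 0 * u x) 0 = 0 := by
      rw [hv1 0 h0', h1]; ring
    have hvd2 : Dv (Dv (fun x => (-1:ℝ) * u x + 0 * u x)) 0 = 0 := by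
      rw [hv2 0 h0', h2]; ring
    have hvc : 0 < Dv (fun t => p t * Dv (Dv (fun x => (-1:ℝ) * u x + 0 * u x)) t) 0 := by
      rw [hv3 0 h0']; nlinarith
    have := pos_lemma p r lam hp hr hlam _ hv hv0 hvd0 hvd2 hvc
    simp only [h3] at this
    nlinarith
  · exact zero_lemma p r lam hpc hrc hp hr hlam u hu h0 h1 h2 hc
  · exfalso
    have := pos_lemma p r lam hp hr hlam u hu h0 h1 h2 hc
    rw [h3] at this
    exact lt_irrefl 0 this


theorem stmt_3 (p r : ℝ → ℝ) (lam : ℝ)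
    (hpc : ContinuousOn p (Icc 0 1)) (hrc : ContinuousOn r (Icc 0 1))
    (hp : ∀ x ∈ Icc (0:ℝ) 1, 0 < p x) (hr : ∀ x ∈ Icc (0:ℝ) 1, 0 < r x)
    (hlam : 0 < lam) (y₁ y₂ : ℝ → ℝ)
    (hy₁ : SolS p r lam y₁) (hnt₁ : Nontriv y₁) (hbc₁ : BC1 y₁)
    (hy₂ : SolS p r lam y₂) (hnt₂ : Nontriv y₂) (hbc₂ : BC1 y₂) :
    LinDep y₁ y₂ := by
  obtain ⟨hb10, hb11, hb12, hb13⟩ := hbc₁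
  obtain ⟨hb20, hb21, hb22, hb23⟩ := hbc₂
  have h0' : (0:ℝ) ∈ Icc (0:ℝ) 1 := ⟨le_rfl, zero_le_one⟩
  by_cases h : Dv (Dv y₂) 0 = 0
  · refine ⟨0, 1, Or.inr one_ne_zero, ?_⟩
    obtain ⟨hv, hv1, hv2, hv3⟩ := solS_comb hy₁ hy₂ 0 1
    exact key p r lam hpc hrc hp hr hlam _ hv
      (by simp [hb20]) (by rw [hv1 0 h0', hb11, hb21]; ring)
      (by rw [hv2 0 h0', h]; ring) (by simp [hb22])
  · refine ⟨Dv (Dv y₂) 0, -(Dv (Dv y₁) 0), Or.inl h, ?_⟩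
    obtain ⟨hv, hv1, hv2, hv3⟩ := solS_comb hy₁ hy₂ (Dv (Dv y₂) 0) (-(Dv (Dv y₁) 0))
    exact key p r lam hpc hrc hp hr hlam _ hv
      (by simp [hb10, hb20]) (by rw [hv1 0 h0', hb11, hb21]; ring)
      (by rw [hv2 0 h0']; ring) (by simp [hb12, hb22])
end

section
/- Let p, r : [0,1] → ℝ be continuous with p(x) > 0 and r(x) > 0 for all x ∈ [0,1], let α ∈ ℝ, and let λ > 0. If y₁ and y₂ are nontrivial classical solutions of (p·y'')'' = λ·r·y on [0,1] both satisfying y(0) = y'(0) = y'(1) = 0 and (p·y'')'(1) + λ·α·y(1) = 0, then y₁ and y₂ are linearly dependent (i.e. the positive eigenvalue λ has geometric multiplicity 1). -/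
open Set

section Aux

open Filter Topology

/-- First-order system associated to `(p z'')'' = lam * r * z` on `[0,1]`:
`z1 = z'`, `z2 = z''`, `q = p * z''`, `q1 = q'`. -/
structure Sys (p r : ℝ → ℝ) (lam : ℝ) (z z1 z2 q q1 : ℝ → ℝ) : Prop where
  hz : ∀ t ∈ Icc (0:ℝ) 1, HasDerivWithinAt z (z1 t) (Icc 0 1) t
  hz1 : ∀ t ∈ Icc (0:ℝ) 1, HasDerivWithinAt z1 (z2 t) (Icc 0 1) t
  hpq : ∀ t ∈ Icc (0:ℝ) 1, q t = p t * z2 t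
  hq : ∀ t ∈ Icc (0:ℝ) 1, HasDerivWithinAt q (q1 t) (Icc 0 1) t
  hq1 : ∀ t ∈ Icc (0:ℝ) 1, HasDerivWithinAt q1 (lam * (r t * z t)) (Icc 0 1) t

lemma sysOfSol {p r : ℝ → ℝ} {lam : ℝ} {y : ℝ → ℝ} (h : SolS p r lam y) :
    Sys p r lam y (Dv y) (Dv (Dv y)) (fun x => p x * Dv (Dv y) x)
      (Dv (fun x => p x * Dv (Dv y) x)) := by
  obtain ⟨h1, h2, h3⟩ := h
  have uD : UniqueDiffOn ℝ (Icc (0:ℝ) 1) := uniqueDiffOn_Icc one_pos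
  have hd1 : ContDiffOn ℝ 1 (Dv y) (Icc 0 1) := h1.derivWithin uD (by norm_num)
  have hd2 : ContDiffOn ℝ 1 (Dv (fun x => p x * Dv (Dv y) x)) (Icc 0 1) :=
    h2.derivWithin uD (by norm_num)
  refine ⟨?_, ?_, fun t ht => rfl, ?_, ?_⟩
  · exact fun t ht => ((h1.differentiableOn (by norm_num)) t ht).hasDerivWithinAt
  · exact fun t ht => ((hd1.differentiableOn (by norm_num)) t ht).hasDerivWithinAt
  · exact fun t ht => ((h2.differentiableOn (by norm_num)) t ht).hasDerivWithinAt
  · intro t ht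
    have h4 := ((hd2.differentiableOn (by norm_num)) t ht).hasDerivWithinAt
    have h5 : derivWithin (Dv (fun x => p x * Dv (Dv y) x)) (Icc 0 1) t
        = lam * (r t * y t) := h3 t ht
    rwa [h5] at h4

lemma Sys.combo {p r : ℝ → ℝ} {lam : ℝ} {z z1 z2 q q1 w w1 w2 u u1 : ℝ → ℝ}
    (S : Sys p r lam z z1 z2 q q1) (T : Sys p r lam w w1 w2 u u1) (a b : ℝ) :
    Sys p r lam (fun x => a * z x + b * w x) (fun x => a * z1 x + b * w1 x)
      (fun x => a * z2 x + b * w2 x) (fun x => a * q x + b * u x)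
      (fun x => a * q1 x + b * u1 x) := by
  refine ⟨fun t ht => ?_, fun t ht => ?_, fun t ht => ?_, fun t ht => ?_, fun t ht => ?_⟩
  · exact ((S.hz t ht).const_mul a).add ((T.hz t ht).const_mul b)
  · exact ((S.hz1 t ht).const_mul a).add ((T.hz1 t ht).const_mul b)
  · rw [S.hpq t ht, T.hpq t ht]; ring
  · exact ((S.hq t ht).const_mul a).add ((T.hq t ht).const_mul b)
  · have h := ((S.hq1 t ht).const_mul a).add ((T.hq1 t ht).const_mul b)
    convert h using 1 <;> first | rfl | ring

lemma strictMonoOn_aux {f f' : ℝ → ℝ} {a b : ℝ} (ha : 0 ≤ a) (hb : b ≤ 1)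
    (hf : ∀ t ∈ Icc (0:ℝ) 1, HasDerivWithinAt f (f' t) (Icc 0 1) t)
    (hpos : ∀ t ∈ Ioo a b, 0 < f' t) : StrictMonoOn f (Icc a b) := by
  have hsub : Icc a b ⊆ Icc (0:ℝ) 1 := Icc_subset_Icc ha hb
  have hsub2 : Ioo a b ⊆ Icc (0:ℝ) 1 := fun x hx => hsub (Ioo_subset_Icc_self hx)
  apply strictMonoOn_of_hasDerivWithinAt_pos (convex_Icc a b)
    (fun t ht => ((hf t (hsub ht)).continuousWithinAt).mono hsub)
  · intro x hx
    rw [interior_Icc] at hx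
    exact (hf x (hsub2 hx)).mono (by rw [interior_Icc]; exact hsub2)
  · intro x hx
    rw [interior_Icc] at hx
    exact hpos x hx

lemma monotoneOn_aux {f f' : ℝ → ℝ} {a b : ℝ} (ha : 0 ≤ a) (hb : b ≤ 1)
    (hf : ∀ t ∈ Icc (0:ℝ) 1, HasDerivWithinAt f (f' t) (Icc 0 1) t)
    (hpos : ∀ t ∈ Ioo a b, 0 ≤ f' t) : MonotoneOn f (Icc a b) := by
  have hsub : Icc a b ⊆ Icc (0:ℝ) 1 := Icc_subset_Icc ha hb
  have hsub2 : Ioo a b ⊆ Icc (0:ℝ) 1 := fun x hx => hsub (Ioo_subset_Icc_self hx)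
  apply monotoneOn_of_hasDerivWithinAt_nonneg (convex_Icc a b)
    (fun t ht => ((hf t (hsub ht)).continuousWithinAt).mono hsub)
  · intro x hx
    rw [interior_Icc] at hx
    exact (hf x (hsub2 hx)).mono (by rw [interior_Icc]; exact hsub2)
  · intro x hx
    rw [interior_Icc] at hx
    exact hpos x hx

lemma eventually_gt_right {f : ℝ → ℝ} {d τ : ℝ} (hτ0 : 0 ≤ τ) (hτ1 : τ < 1)
    (hf : HasDerivWithinAt f d (Icc 0 1) τ) (hd : 0 < d) :
    ∃ u, τ < u ∧ u ≤ 1 ∧ ∀ s ∈ Ioc τ u, f τ < f s := by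
  have hsub : Ioc τ 1 ⊆ Icc (0:ℝ) 1 := fun s hs => ⟨hτ0.trans hs.1.le, hs.2⟩
  have h1 : HasDerivWithinAt f d (Ioc τ 1) τ := hf.mono hsub
  rw [hasDerivWithinAt_iff_tendsto_slope] at h1
  have hset : Ioc τ 1 \ {τ} = Ioc τ 1 :=
    diff_singleton_eq_self (fun h => lt_irrefl τ h.1)
  rw [hset] at h1
  have hev : ∀ᶠ s in 𝓝[Ioc τ 1] τ, 0 < slope f τ s := h1.eventually (eventually_gt_nhds hd)
  rw [nhdsWithin_Ioc_eq_nhdsGT hτ1] at hev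
  obtain ⟨u, hu, hsubu⟩ := mem_nhdsGT_iff_exists_Ioc_subset.1 hev
  refine ⟨min u 1, lt_min hu hτ1, min_le_right _ _, ?_⟩
  intro s hs
  have hs' : s ∈ Ioc τ u := ⟨hs.1, hs.2.trans (min_le_left _ _)⟩
  have hslope : 0 < slope f τ s := hsubu hs'
  rw [slope_def_field] at hslope
  have hB : 0 < s - τ := sub_pos.2 hs.1
  have := mul_pos hslope hB
  rwa [div_mul_cancel₀ _ (ne_of_gt hB), sub_pos] at this

lemma boot {p r : ℝ → ℝ} {lam : ℝ} {z z1 z2 q q1 : ℝ → ℝ}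
    (S : Sys p r lam z z1 z2 q q1) (hp : ∀ x ∈ Icc (0:ℝ) 1, 0 < p x)
    {τ : ℝ} (hτ0 : 0 < τ) (hτ1 : τ ≤ 1)
    (hz0 : z 0 = 0) (hz10 : z1 0 = 0)
    (hqpos : ∀ s ∈ Ioc (0:ℝ) τ, 0 < q s) :
    (∀ s ∈ Ioc (0:ℝ) τ, 0 < z s) ∧ 0 < z1 τ := by
  have hz2pos : ∀ s ∈ Ioo (0:ℝ) τ, 0 < z2 s := by
    intro s hs
    have hmem : s ∈ Icc (0:ℝ) 1 := ⟨hs.1.le, hs.2.le.trans hτ1⟩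
    have h1 := S.hpq s hmem
    have h2 := hqpos s ⟨hs.1, hs.2.le⟩
    have h3 := hp s hmem
    nlinarith
  have hz1mono : StrictMonoOn z1 (Icc 0 τ) :=
    strictMonoOn_aux le_rfl hτ1 S.hz1 hz2pos
  have hz1pos : ∀ s ∈ Ioc (0:ℝ) τ, 0 < z1 s := by
    intro s hs
    have h := hz1mono (left_mem_Icc.2 hτ0.le) ⟨hs.1.le, hs.2⟩ hs.1
    rwa [hz10] at h
  have hzmono : StrictMonoOn z (Icc 0 τ) :=
    strictMonoOn_aux le_rfl hτ1 S.hz (fun t ht => hz1pos t ⟨ht.1, ht.2.le⟩)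
  refine ⟨fun s hs => ?_, hz1pos τ ⟨hτ0, le_rfl⟩⟩
  have h := hzmono (left_mem_Icc.2 hτ0.le) ⟨hs.1.le, hs.2⟩ hs.1
  rwa [hz0] at h

lemma qpos_of_znn {p r : ℝ → ℝ} {lam : ℝ} {z z1 z2 q q1 : ℝ → ℝ}
    (S : Sys p r lam z z1 z2 q q1)
    (hr : ∀ x ∈ Icc (0:ℝ) 1, 0 ≤ r x) (hlam : 0 ≤ lam)
    {τ : ℝ} (hτ0 : 0 < τ) (hτ1 : τ ≤ 1)
    (hz20 : z2 0 = 0) (hq10 : 0 < q1 0)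
    (hznn : ∀ s ∈ Icc (0:ℝ) τ, 0 ≤ z s) :
    ∀ s ∈ Ioc (0:ℝ) τ, 0 < q s := by
  have hq1mono : MonotoneOn q1 (Icc 0 τ) := by
    apply monotoneOn_aux le_rfl hτ1 S.hq1
    intro t ht
    have hmem : t ∈ Icc (0:ℝ) 1 := ⟨ht.1.le, ht.2.le.trans hτ1⟩
    exact mul_nonneg hlam (mul_nonneg (hr t hmem) (hznn t ⟨ht.1.le, ht.2.le⟩))
  have hq1pos : ∀ s ∈ Icc (0:ℝ) τ, 0 < q1 s := fun s hs =>
    lt_of_lt_of_le hq10 (hq1mono (left_mem_Icc.2 hτ0.le) hs hs.1)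
  have hq0 : q 0 = 0 := by
    have h := S.hpq 0 (left_mem_Icc.2 one_pos.le)
    rwa [hz20, mul_zero] at h
  have hqmono : StrictMonoOn q (Icc 0 τ) :=
    strictMonoOn_aux le_rfl hτ1 S.hq (fun t ht => hq1pos t ⟨ht.1.le, ht.2.le⟩)
  intro s hs
  have h := hqmono (left_mem_Icc.2 hτ0.le) ⟨hs.1.le, hs.2⟩ hs.1
  rwa [hq0] at h

lemma pos_main {p r : ℝ → ℝ} {lam : ℝ} {z z1 z2 q q1 : ℝ → ℝ}
    (S : Sys p r lam z z1 z2 q q1)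
    (hp : ∀ x ∈ Icc (0:ℝ) 1, 0 < p x) (hr : ∀ x ∈ Icc (0:ℝ) 1, 0 ≤ r x) (hlam : 0 ≤ lam)
    (h0 : z 0 = 0) (h1 : z1 0 = 0) (h2 : z2 0 = 0) (h3 : 0 < q1 0) :
    0 < z1 1 := by
  have h0mem : (0:ℝ) ∈ Icc (0:ℝ) 1 := left_mem_Icc.2 one_pos.le
  have hq0 : q 0 = 0 := by
    have h := S.hpq 0 h0mem
    rwa [h2, mul_zero] at h
  have hznn : ∀ s ∈ Icc (0:ℝ) 1, 0 ≤ z s := by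
    by_contra hcon
    push_neg at hcon
    obtain ⟨s₀, hs₀, hneg⟩ := hcon
    set Z := {s : ℝ | s ∈ Icc (0:ℝ) 1 ∧ z s < 0} with hZ
    have hZne : Z.Nonempty := ⟨s₀, hs₀, hneg⟩
    have hZbdd : BddBelow Z := ⟨0, fun x hx => hx.1.1⟩
    set τ := sInf Z with hτdef
    have hτ0 : 0 ≤ τ := le_csInf hZne fun x hx => hx.1.1
    have hτmem : τ ∈ Icc (0:ℝ) 1 := ⟨hτ0, (csInf_le hZbdd ⟨hs₀, hneg⟩).trans hs₀.2⟩
    have hzτ : z τ ≤ 0 := by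
      have hcz : ContinuousOn z (Icc 0 1) := fun t ht => (S.hz t ht).continuousWithinAt
      have hC : IsClosed {x : ℝ | x ∈ Icc (0:ℝ) 1 ∧ z x ≤ 0} :=
        hcz.preimage_isClosed_of_isClosed isClosed_Icc isClosed_Iic
      have hsubC : Z ⊆ {x : ℝ | x ∈ Icc (0:ℝ) 1 ∧ z x ≤ 0} := fun x hx => ⟨hx.1, hx.2.le⟩
      exact (closure_minimal hsubC hC (csInf_mem_closure hZne hZbdd)).2
    have hlow : ∀ s, 0 ≤ s → s < τ → 0 ≤ z s := by
      intro s hs0 hsτ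
      by_contra hneg2
      push_neg at hneg2
      have hsZ : s ∈ Z := ⟨⟨hs0, hsτ.le.trans hτmem.2⟩, hneg2⟩
      exact absurd (csInf_le hZbdd hsZ) (not_le.2 hsτ)
    rcases eq_or_lt_of_le hτ0 with heq | hτpos
    · -- τ = 0 : use q1 0 > 0 to get q > 0 just right of 0
      obtain ⟨u, hu0, hu1, hq⟩ := eventually_gt_right le_rfl one_pos (S.hq 0 h0mem) h3
      have hqpos : ∀ s ∈ Ioc (0:ℝ) u, 0 < q s := by
        intro s hs
        have h := hq s hs
        rwa [hq0] at h
      obtain ⟨hzpos, -⟩ := boot S hp hu0 hu1 h0 h1 hqpos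
      obtain ⟨x, hxZ, hxu⟩ := (csInf_lt_iff hZbdd hZne).1 (show τ < u by rw [← heq]; exact hu0)
      have hx0 : 0 < x := by
        rcases eq_or_lt_of_le hxZ.1.1 with h | h
        · exfalso
          have hzx := hxZ.2
          rw [← h, h0] at hzx
          exact lt_irrefl 0 hzx
        · exact h
      exact absurd (hzpos x ⟨hx0, hxu.le⟩) (not_lt.2 hxZ.2.le)
    · -- τ > 0
      have hzτge : 0 ≤ z τ := by
        have hne : (𝓝[Ico (0:ℝ) τ] τ).NeBot := by
          apply mem_closure_iff_nhdsWithin_neBot.1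
          rw [closure_Ico (ne_of_lt hτpos)]
          exact ⟨hτpos.le, le_rfl⟩
        have hct : ContinuousWithinAt z (Ico 0 τ) τ :=
          ((S.hz τ hτmem).continuousWithinAt).mono
            (fun x hx => ⟨hx.1, hx.2.le.trans hτmem.2⟩)
        exact ge_of_tendsto hct
          (eventually_mem_nhdsWithin.mono (fun s hs => hlow s hs.1 hs.2))
      have hznnτ : ∀ s ∈ Icc (0:ℝ) τ, 0 ≤ z s := by
        intro s hs
        rcases eq_or_lt_of_le hs.2 with h | h
        · rw [h]; exact hzτge
        · exact hlow s hs.1 h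
      have hqpos := qpos_of_znn S hr hlam hτpos hτmem.2 h2 h3 hznnτ
      obtain ⟨hzpos, -⟩ := boot S hp hτpos hτmem.2 h0 h1 hqpos
      have hf := hzpos τ ⟨hτpos, le_rfl⟩
      linarith
  have hqpos := qpos_of_znn S hr hlam one_pos le_rfl h2 h3 hznn
  exact (boot S hp one_pos le_rfl h0 h1 hqpos).2

lemma uniq {p r : ℝ → ℝ} {lam : ℝ} {z z1 z2 q q1 : ℝ → ℝ}
    (S : Sys p r lam z z1 z2 q q1)
    (hpc : ContinuousOn p (Icc 0 1)) (hrc : ContinuousOn r (Icc 0 1))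
    (hp : ∀ x ∈ Icc (0:ℝ) 1, 0 < p x) (hr : ∀ x ∈ Icc (0:ℝ) 1, 0 ≤ r x) (hlam : 0 ≤ lam)
    (h0 : z 0 = 0) (h1 : z1 0 = 0) (h2 : z2 0 = 0) (h3 : q1 0 = 0) :
    ∀ t ∈ Icc (0:ℝ) 1, z t = 0 := by
  have h0mem : (0:ℝ) ∈ Icc (0:ℝ) 1 := left_mem_Icc.2 one_pos.le
  have hq0 : q 0 = 0 := by
    have h := S.hpq 0 h0mem
    rwa [h2, mul_zero] at h
  obtain ⟨xp, hxp, hpmin⟩ := isCompact_Icc.exists_isMinOn (nonempty_Icc.2 one_pos.le) hpc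
  obtain ⟨xr, hxr, hrmax⟩ := isCompact_Icc.exists_isMaxOn (nonempty_Icc.2 one_pos.le) hrc
  have hm0 : 0 < p xp := hp xp hxp
  have hM0 : 0 ≤ r xr := hr xr hxr
  set m := p xp with hm
  set M := r xr with hM
  set K := max 1 (max (1 / m) (lam * M)) with hK
  have hK1 : (1:ℝ) ≤ K := le_max_left _ _
  have hKm : 1 / m ≤ K := le_trans (le_max_left _ _) (le_max_right _ _)
  have hKlM : lam * M ≤ K := le_trans (le_max_right _ _) (le_max_right _ _)
  set f : ℝ → ℝ × ℝ × ℝ × ℝ := fun t => (z t, z1 t, q t, q1 t) with hfdef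
  set f' : ℝ → ℝ × ℝ × ℝ × ℝ := fun t => (z1 t, z2 t, q1 t, lam * (r t * z t)) with hf'def
  have hder : ∀ t ∈ Icc (0:ℝ) 1, HasDerivWithinAt f (f' t) (Icc 0 1) t := fun t ht =>
    (S.hz t ht).prodMk ((S.hz1 t ht).prodMk ((S.hq t ht).prodMk (S.hq1 t ht)))
  have hcont : ContinuousOn f (Icc 0 1) := fun t ht => (hder t ht).continuousWithinAt
  have hIci : ∀ t ∈ Ico (0:ℝ) 1, HasDerivWithinAt f (f' t) (Ici t) t := by
    intro t ht
    have h := (hder t ⟨ht.1, ht.2.le⟩).mono (Icc_subset_Icc ht.1 le_rfl)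
    apply h.mono_of_mem_nhdsWithin
    rw [← Ici_inter_Iic]
    exact inter_mem_nhdsWithin _ (Iic_mem_nhds ht.2)
  have hbound : ∀ t ∈ Ico (0:ℝ) 1, ‖f' t‖ ≤ K * ‖f t‖ + 0 := by
    intro t ht
    have htm : t ∈ Icc (0:ℝ) 1 := ⟨ht.1, ht.2.le⟩
    have hn0 : (0:ℝ) ≤ ‖f t‖ := norm_nonneg _
    have e1 : ‖z t‖ ≤ ‖f t‖ := norm_fst_le (f t)
    have e2 : ‖z1 t‖ ≤ ‖f t‖ := le_trans (norm_fst_le ((f t).2)) (norm_snd_le (f t))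
    have e3 : ‖q t‖ ≤ ‖f t‖ :=
      le_trans (le_trans (norm_fst_le ((f t).2.2)) (norm_snd_le ((f t).2))) (norm_snd_le (f t))
    have e4 : ‖q1 t‖ ≤ ‖f t‖ :=
      le_trans (le_trans (norm_snd_le ((f t).2.2)) (norm_snd_le ((f t).2))) (norm_snd_le (f t))
    rw [add_zero]
    have hnorm : ‖f' t‖ = max ‖z1 t‖ (max ‖z2 t‖ (max ‖q1 t‖ ‖lam * (r t * z t)‖)) := rfl
    rw [hnorm]
    have c1 : ‖z1 t‖ ≤ K * ‖f t‖ := le_trans e2 (by nlinarith)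
    have c2 : ‖z2 t‖ ≤ K * ‖f t‖ := by
      have hpq := S.hpq t htm
      have hpt := hp t htm
      have hmt : m ≤ p t := isMinOn_iff.1 hpmin t htm
      have hqn : ‖q t‖ = p t * ‖z2 t‖ := by
        rw [hpq, norm_mul, Real.norm_eq_abs (p t), abs_of_pos hpt]
      have h5 : m * ‖z2 t‖ ≤ ‖f t‖ := by nlinarith [norm_nonneg (z2 t)]
      have h6 : ‖z2 t‖ ≤ 1 / m * ‖f t‖ := by
        rw [div_mul_eq_mul_div, one_mul, le_div_iff₀ hm0]
        nlinarith
      exact h6.trans (mul_le_mul_of_nonneg_right hKm hn0)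
    have c3 : ‖q1 t‖ ≤ K * ‖f t‖ := le_trans e4 (by nlinarith)
    have c4 : ‖lam * (r t * z t)‖ ≤ K * ‖f t‖ := by
      have hrt := hr t htm
      have hrM : r t ≤ M := isMaxOn_iff.1 hrmax t htm
      rw [norm_mul, norm_mul, Real.norm_eq_abs lam, Real.norm_eq_abs (r t),
        abs_of_nonneg hlam, abs_of_nonneg hrt]
      calc lam * (r t * ‖z t‖) ≤ lam * (M * ‖f t‖) :=
            mul_le_mul_of_nonneg_left
              (mul_le_mul hrM e1 (norm_nonneg _) hM0) hlam
        _ = lam * M * ‖f t‖ := by ring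
        _ ≤ K * ‖f t‖ := mul_le_mul_of_nonneg_right hKlM hn0
    exact max_le c1 (max_le c2 (max_le c3 c4))
  have hz0' : ‖f 0‖ ≤ 0 := by
    have hfz : f 0 = ((0:ℝ), (0:ℝ), (0:ℝ), (0:ℝ)) := by
      simp only [hfdef, h0, h1, hq0, h3]
    rw [hfz]
    simp [Prod.norm_def]
  have hgron := norm_le_gronwallBound_of_norm_deriv_right_le hcont hIci hz0' hbound
  intro t ht
  have hle := hgron t ht
  rw [gronwallBound_ε0_δ0] at hle
  have hz : ‖z t‖ ≤ 0 := le_trans (norm_fst_le (f t)) hle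
  exact norm_le_zero_iff.1 hz

lemma vanish {p r : ℝ → ℝ} {lam : ℝ} {z z1 z2 q q1 : ℝ → ℝ}
    (S : Sys p r lam z z1 z2 q q1)
    (hpc : ContinuousOn p (Icc 0 1)) (hrc : ContinuousOn r (Icc 0 1))
    (hp : ∀ x ∈ Icc (0:ℝ) 1, 0 < p x) (hr : ∀ x ∈ Icc (0:ℝ) 1, 0 ≤ r x) (hlam : 0 ≤ lam)
    (h0 : z 0 = 0) (h1 : z1 0 = 0) (h2 : z2 0 = 0) (h11 : z1 1 = 0) :
    ∀ t ∈ Icc (0:ℝ) 1, z t = 0 := by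
  rcases lt_trichotomy (q1 0) 0 with h | h | h
  · exfalso
    have Sneg := S.combo S (-1) 0
    have hpos := pos_main Sneg hp hr hlam (by simp [h0]) (by simp [h1]) (by simp [h2])
      (by show (0:ℝ) < -1 * q1 0 + 0 * q1 0; linarith)
    simp only [h11] at hpos
    norm_num at hpos
  · exact uniq S hpc hrc hp hr hlam h0 h1 h2 h
  · exfalso
    have hpos := pos_main S hp hr hlam h0 h1 h2 h
    rw [h11] at hpos
    exact lt_irrefl 0 hpos

end Aux

theorem stmt_4 (p r : ℝ → ℝ) (alpha lam : ℝ)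
    (hpc : ContinuousOn p (Icc 0 1)) (hrc : ContinuousOn r (Icc 0 1))
    (hp : ∀ x ∈ Icc (0:ℝ) 1, 0 < p x) (hr : ∀ x ∈ Icc (0:ℝ) 1, 0 < r x)
    (hlam : 0 < lam) (y₁ y₂ : ℝ → ℝ)
    (hy₁ : SolS p r lam y₁) (hnt₁ : Nontriv y₁) (hbc₁ : BC2S p lam alpha y₁)
    (hy₂ : SolS p r lam y₂) (hnt₂ : Nontriv y₂) (hbc₂ : BC2S p lam alpha y₂) :
    LinDep y₁ y₂ := by
  have hr' : ∀ x ∈ Icc (0:ℝ) 1, 0 ≤ r x := fun x hx => (hr x hx).le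
  have hlam' : 0 ≤ lam := hlam.le
  have S₁ := sysOfSol hy₁
  have S₂ := sysOfSol hy₂
  obtain ⟨hb10, hb11, hb12, -⟩ := hbc₁
  obtain ⟨hb20, hb21, hb22, -⟩ := hbc₂
  have hc₁ : Dv (Dv y₁) 0 ≠ 0 := by
    intro hc
    obtain ⟨x, hx, hxne⟩ := hnt₁
    exact hxne (vanish S₁ hpc hrc hp hr' hlam' hb10 hb11 hc hb12 x hx)
  have hc₂ : Dv (Dv y₂) 0 ≠ 0 := by
    intro hc
    obtain ⟨x, hx, hxne⟩ := hnt₂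
    exact hxne (vanish S₂ hpc hrc hp hr' hlam' hb20 hb21 hc hb22 x hx)
  have S₃ := S₁.combo S₂ (Dv (Dv y₂) 0) (-(Dv (Dv y₁) 0))
  have hvan := vanish S₃ hpc hrc hp hr' hlam'
    (by show Dv (Dv y₂) 0 * y₁ 0 + -Dv (Dv y₁) 0 * y₂ 0 = 0; rw [hb10, hb20]; ring)
    (by show Dv (Dv y₂) 0 * Dv y₁ 0 + -Dv (Dv y₁) 0 * Dv y₂ 0 = 0; rw [hb11, hb21]; ring)
    (by show Dv (Dv y₂) 0 * Dv (Dv y₁) 0 + -Dv (Dv y₁) 0 * Dv (Dv y₂) 0 = 0; ring)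
    (by show Dv (Dv y₂) 0 * Dv y₁ 1 + -Dv (Dv y₁) 0 * Dv y₂ 1 = 0; rw [hb12, hb22]; ring)
  exact ⟨Dv (Dv y₂) 0, -(Dv (Dv y₁) 0), Or.inl hc₂, fun x hx => hvan x hx⟩
end

section
/- Let p, r : [0,1] → ℝ be continuous with p(x) > 0 and r(x) > 0 for all x ∈ [0,1], and let λ > 0. Let y be a nontrivial classical solution of (p·y'')'' = λ·r·y on [0,1] satisfying y(0) = y'(0) = y'(1) = 0. Then every zero of y in the open interval (0,1) is simple: if a ∈ (0,1) and y(a) = 0, then y'(a) ≠ 0. -/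
open Set

namespace Stmt5Aux

/-- Monotonicity from a nonnegative within-derivative. -/
lemma mono_aux {α β u v : ℝ} {f f' : ℝ → ℝ} (hαu : α ≤ u) (hvβ : v ≤ β)
    (hf : ∀ t ∈ Icc α β, HasDerivWithinAt f (f' t) (Icc α β) t)
    (h0 : ∀ t ∈ Ioo u v, 0 ≤ f' t) : MonotoneOn f (Icc u v) := by
  have hsub : Icc u v ⊆ Icc α β := Icc_subset_Icc hαu hvβ
  have key : ∀ t ∈ Ioo u v, HasDerivAt f (f' t) t := by
    intro t ht
    exact (hf t (hsub (Ioo_subset_Icc_self ht))).hasDerivAt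
      (Icc_mem_nhds (lt_of_le_of_lt hαu ht.1) (lt_of_lt_of_le ht.2 hvβ))
  apply monotoneOn_of_deriv_nonneg (convex_Icc u v)
    (fun t ht => ((hf t (hsub ht)).continuousWithinAt).mono hsub)
  · intro t ht
    rw [interior_Icc] at ht
    exact (key t ht).differentiableAt.differentiableWithinAt
  · intro t ht
    rw [interior_Icc] at ht
    rw [(key t ht).deriv]
    exact h0 t ht

/-- Strict monotonicity from a positive within-derivative. -/
lemma strict_aux {α β u v : ℝ} {f f' : ℝ → ℝ} (hαu : α ≤ u) (hvβ : v ≤ β)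
    (hf : ∀ t ∈ Icc α β, HasDerivWithinAt f (f' t) (Icc α β) t)
    (h0 : ∀ t ∈ Ioo u v, 0 < f' t) : StrictMonoOn f (Icc u v) := by
  have hsub : Icc u v ⊆ Icc α β := Icc_subset_Icc hαu hvβ
  apply strictMonoOn_of_deriv_pos (convex_Icc u v)
    (fun t ht => ((hf t (hsub ht)).continuousWithinAt).mono hsub)
  intro t ht
  rw [interior_Icc] at ht
  rw [((hf t (hsub (Ioo_subset_Icc_self ht))).hasDerivAt
      (Icc_mem_nhds (lt_of_le_of_lt hαu ht.1) (lt_of_lt_of_le ht.2 hvβ))).deriv]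
  exact h0 t ht

/-- Reversing time in a within-derivative statement. -/
lemma reverse_deriv {f g : ℝ → ℝ} {a u v u' v' : ℝ}
    (hu' : u' = a - v) (hv' : v' = a - u)
    (hf : ∀ x ∈ Icc u v, HasDerivWithinAt f (g x) (Icc u v) x) :
    ∀ s ∈ Icc u' v', HasDerivWithinAt (fun t => f (a - t)) (-g (a - s)) (Icc u' v') s := by
  subst hu' hv'
  intro s hs
  have hmaps : MapsTo (fun t => a - t) (Icc (a - v) (a - u)) (Icc u v) := by
    intro t ht
    simp only [mem_Icc] at ht ⊢
    constructor <;> linarith [ht.1, ht.2]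
  have hinner : HasDerivWithinAt (fun t : ℝ => a - t) (-1) (Icc (a - v) (a - u)) s :=
    (hasDerivWithinAt_id s _).const_sub a
  have h := (hf (a - s) (hmaps hs)).comp s hinner hmaps
  have h2 : g (a - s) * (-1) = -g (a - s) := by ring
  rw [h2] at h
  exact h


/-- The key positivity propagation lemma for the cooperative system
`Y' = Y₁`, `Y₁' = Z/P`, `Z' = Z₁`, `Z₁' = Q·Y`. -/
lemma pos_lemma {P Q Y Y₁ Z Z₁ : ℝ → ℝ} {α β : ℝ}
    (hP : ∀ x ∈ Icc α β, 0 < P x) (hQ : ∀ x ∈ Icc α β, 0 ≤ Q x)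
    (hY : ∀ x ∈ Icc α β, HasDerivWithinAt Y (Y₁ x) (Icc α β) x)
    (hY₁ : ∀ x ∈ Icc α β, HasDerivWithinAt Y₁ (Z x / P x) (Icc α β) x)
    (hZ : ∀ x ∈ Icc α β, HasDerivWithinAt Z (Z₁ x) (Icc α β) x)
    (hZ₁ : ∀ x ∈ Icc α β, HasDerivWithinAt Z₁ (Q x * Y x) (Icc α β) x)
    {c : ℝ} (hcα : α ≤ c) (hcβ : c < β)
    (hYc : Y c = 0) (hY₁c : Y₁ c = 0) (hZc : 0 ≤ Z c) (hZ₁c : 0 ≤ Z₁ c)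
    (hstr : 0 < Z c ∨ 0 < Z₁ c) :
    ∀ x ∈ Ioc c β, 0 < Y x ∧ 0 < Y₁ x := by
  have hcI : c ∈ Icc α β := ⟨hcα, hcβ.le⟩
  set s : Set ℝ := {x | ∀ t ∈ Icc c x, 0 ≤ Y t ∧ 0 ≤ Y₁ t ∧ 0 ≤ Z t ∧ 0 ≤ Z₁ t} with hs_def
  have cY : ContinuousOn Y (Icc α β) := fun t ht => (hY t ht).continuousWithinAt
  have cY₁ : ContinuousOn Y₁ (Icc α β) := fun t ht => (hY₁ t ht).continuousWithinAt
  have cZ : ContinuousOn Z (Icc α β) := fun t ht => (hZ t ht).continuousWithinAt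
  have cZ₁ : ContinuousOn Z₁ (Icc α β) := fun t ht => (hZ₁ t ht).continuousWithinAt
  have hC : IsClosed {x ∈ Icc α β | 0 ≤ Y x ∧ 0 ≤ Y₁ x ∧ 0 ≤ Z x ∧ 0 ≤ Z₁ x} := by
    have h1 : IsClosed (Icc α β ∩ Y ⁻¹' Ici 0) :=
      cY.preimage_isClosed_of_isClosed isClosed_Icc isClosed_Ici
    have h2 : IsClosed (Icc α β ∩ Y₁ ⁻¹' Ici 0) :=
      cY₁.preimage_isClosed_of_isClosed isClosed_Icc isClosed_Ici
    have h3 : IsClosed (Icc α β ∩ Z ⁻¹' Ici 0) :=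
      cZ.preimage_isClosed_of_isClosed isClosed_Icc isClosed_Ici
    have h4 : IsClosed (Icc α β ∩ Z₁ ⁻¹' Ici 0) :=
      cZ₁.preimage_isClosed_of_isClosed isClosed_Icc isClosed_Ici
    have heq : {x ∈ Icc α β | 0 ≤ Y x ∧ 0 ≤ Y₁ x ∧ 0 ≤ Z x ∧ 0 ≤ Z₁ x}
        = (Icc α β ∩ Y ⁻¹' Ici 0) ∩ ((Icc α β ∩ Y₁ ⁻¹' Ici 0) ∩
          ((Icc α β ∩ Z ⁻¹' Ici 0) ∩ (Icc α β ∩ Z₁ ⁻¹' Ici 0))) := by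
      ext t
      simp only [mem_setOf_eq, mem_inter_iff, mem_preimage, mem_Ici]
      tauto
    rw [heq]
    exact h1.inter (h2.inter (h3.inter h4))
  have hmemsC : s ∩ Icc c β ⊆ {x ∈ Icc α β | 0 ≤ Y x ∧ 0 ≤ Y₁ x ∧ 0 ≤ Z x ∧ 0 ≤ Z₁ x} := by
    rintro x ⟨hxs, hx⟩
    exact ⟨⟨hcα.trans hx.1, hx.2⟩, hxs x ⟨hx.1, le_refl x⟩⟩
  have hclosed : IsClosed (s ∩ Icc c β) := by
    apply isClosed_of_closure_subset
    intro x hx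
    have hxIcc : x ∈ Icc c β :=
      isClosed_Icc.closure_subset (closure_mono inter_subset_right hx)
    refine ⟨?_, hxIcc⟩
    intro t ht
    rcases eq_or_lt_of_le ht.2 with heq | hlt
    · have := (hC.closure_subset (closure_mono hmemsC hx)).2
      rw [heq]
      exact this
    · rcases Metric.mem_closure_iff.1 hx (x - t) (by linarith) with ⟨x', hx', hd⟩
      have hxx' : |x - x'| < x - t := by rwa [Real.dist_eq] at hd
      have htx' : t ≤ x' := by
        have := abs_lt.1 hxx'
        linarith [this.1, this.2]
      exact hx'.1 t ⟨ht.1, htx'⟩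
  have hcs : c ∈ s := by
    intro t ht
    obtain rfl := le_antisymm ht.2 ht.1
    exact ⟨hYc.ge, hY₁c.ge, hZc, hZ₁c⟩
  have hgt : ∀ x ∈ s ∩ Ico c β, ∀ y' ∈ Ioi x, (s ∩ Ioc x y').Nonempty := by
    rintro x ⟨hxs, hxc, hxβ⟩ y' hy'
    have hxI : x ∈ Icc α β := ⟨hcα.trans hxc, hxβ.le⟩
    have hnn : ∀ t ∈ Icc c x, 0 ≤ Y t ∧ 0 ≤ Y₁ t ∧ 0 ≤ Z t ∧ 0 ≤ Z₁ t := hxs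
    have hYx : 0 ≤ Y x := (hnn x ⟨hxc, le_rfl⟩).1
    have hY₁x : 0 ≤ Y₁ x := (hnn x ⟨hxc, le_rfl⟩).2.1
    have hZx : 0 ≤ Z x := (hnn x ⟨hxc, le_rfl⟩).2.2.1
    have hZ₁x : 0 ≤ Z₁ x := (hnn x ⟨hxc, le_rfl⟩).2.2.2
    have hkey : 0 < Z x ∨ 0 < Z₁ x := by
      rcases eq_or_lt_of_le hxc with heq | hcx
      · rw [← heq]
        exact hstr
      · rcases hstr with h | h
        · left
          have hMZ : MonotoneOn Z (Icc c x) :=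
            mono_aux hcα hxβ.le hZ (fun t ht => (hnn t ⟨ht.1.le, ht.2.le⟩).2.2.2)
          exact h.trans_le (hMZ ⟨le_rfl, hcx.le⟩ ⟨hcx.le, le_rfl⟩ hcx.le)
        · right
          have hMZ₁ : MonotoneOn Z₁ (Icc c x) :=
            mono_aux hcα hxβ.le hZ₁ (fun t ht => mul_nonneg
              (hQ t ⟨hcα.trans ht.1.le, ht.2.le.trans hxβ.le⟩)
              (hnn t ⟨ht.1.le, ht.2.le⟩).1)
          exact h.trans_le (hMZ₁ ⟨le_rfl, hcx.le⟩ ⟨hcx.le, le_rfl⟩ hcx.le)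
    have hband : ∀ F : ℝ → ℝ, ContinuousOn F (Icc α β) → 0 < F x →
        ∃ ε > 0, ∀ t ∈ Icc α β, |t - x| < ε → 0 < F t := by
      intro F hF hFx
      have hev : ∀ᶠ t in nhdsWithin x (Icc α β), 0 < F t :=
        (hF x hxI).eventually (eventually_gt_nhds hFx)
      rcases Metric.mem_nhdsWithin_iff.1 hev with ⟨ε, hε, hball⟩
      refine ⟨ε, hε, fun t ht hd => ?_⟩
      exact hball ⟨Metric.mem_ball.2 (by rwa [Real.dist_eq]), ht⟩
    rcases hkey with hpos | hpos
    · rcases hband Z cZ hpos with ⟨ε, hε, hb⟩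
      set m := min (x + ε / 2) β with hm
      have hxm : x < m := lt_min (by linarith) hxβ
      have hmβ : m ≤ β := min_le_right _ _
      have hZpos : ∀ t ∈ Icc x m, 0 < Z t := by
        intro t ht
        have htI : t ∈ Icc α β := ⟨hxI.1.trans ht.1, ht.2.trans hmβ⟩
        refine hb t htI ?_
        rw [abs_of_nonneg (by linarith [ht.1])]
        have := ht.2.trans (min_le_left (x + ε / 2) β)
        linarith
      have hMY₁ : MonotoneOn Y₁ (Icc x m) :=
        mono_aux hxI.1 hmβ hY₁ (fun t ht =>
          div_nonneg (hZpos t (Ioo_subset_Icc_self ht)).le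
            (hP t ⟨hxI.1.trans ht.1.le, ht.2.le.trans hmβ⟩).le)
      have hY₁nn : ∀ t ∈ Icc x m, 0 ≤ Y₁ t := fun t ht =>
        hY₁x.trans (hMY₁ ⟨le_rfl, hxm.le⟩ ht ht.1)
      have hMY : MonotoneOn Y (Icc x m) :=
        mono_aux hxI.1 hmβ hY (fun t ht => hY₁nn t (Ioo_subset_Icc_self ht))
      have hYnn : ∀ t ∈ Icc x m, 0 ≤ Y t := fun t ht =>
        hYx.trans (hMY ⟨le_rfl, hxm.le⟩ ht ht.1)
      have hMZ₁ : MonotoneOn Z₁ (Icc x m) :=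
        mono_aux hxI.1 hmβ hZ₁ (fun t ht => mul_nonneg
          (hQ t ⟨hxI.1.trans ht.1.le, ht.2.le.trans hmβ⟩)
          (hYnn t (Ioo_subset_Icc_self ht)))
      have hZ₁nn : ∀ t ∈ Icc x m, 0 ≤ Z₁ t := fun t ht =>
        hZ₁x.trans (hMZ₁ ⟨le_rfl, hxm.le⟩ ht ht.1)
      refine ⟨min m y', ?_, lt_min hxm hy', min_le_right _ _⟩
      intro t ht
      rcases le_or_gt t x with h | h
      · exact hnn t ⟨ht.1, h⟩
      · have htm : t ∈ Icc x m := ⟨h.le, ht.2.trans (min_le_left _ _)⟩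
        exact ⟨hYnn t htm, hY₁nn t htm, (hZpos t htm).le, hZ₁nn t htm⟩
    · rcases hband Z₁ cZ₁ hpos with ⟨ε, hε, hb⟩
      set m := min (x + ε / 2) β with hm
      have hxm : x < m := lt_min (by linarith) hxβ
      have hmβ : m ≤ β := min_le_right _ _
      have hZ₁pos : ∀ t ∈ Icc x m, 0 < Z₁ t := by
        intro t ht
        have htI : t ∈ Icc α β := ⟨hxI.1.trans ht.1, ht.2.trans hmβ⟩
        refine hb t htI ?_
        rw [abs_of_nonneg (by linarith [ht.1])]
        have := ht.2.trans (min_le_left (x + ε / 2) β)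
        linarith
      have hMZ : MonotoneOn Z (Icc x m) :=
        mono_aux hxI.1 hmβ hZ (fun t ht => (hZ₁pos t (Ioo_subset_Icc_self ht)).le)
      have hZnn : ∀ t ∈ Icc x m, 0 ≤ Z t := fun t ht =>
        hZx.trans (hMZ ⟨le_rfl, hxm.le⟩ ht ht.1)
      have hMY₁ : MonotoneOn Y₁ (Icc x m) :=
        mono_aux hxI.1 hmβ hY₁ (fun t ht =>
          div_nonneg (hZnn t (Ioo_subset_Icc_self ht))
            (hP t ⟨hxI.1.trans ht.1.le, ht.2.le.trans hmβ⟩).le)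
      have hY₁nn : ∀ t ∈ Icc x m, 0 ≤ Y₁ t := fun t ht =>
        hY₁x.trans (hMY₁ ⟨le_rfl, hxm.le⟩ ht ht.1)
      have hMY : MonotoneOn Y (Icc x m) :=
        mono_aux hxI.1 hmβ hY (fun t ht => hY₁nn t (Ioo_subset_Icc_self ht))
      have hYnn : ∀ t ∈ Icc x m, 0 ≤ Y t := fun t ht =>
        hYx.trans (hMY ⟨le_rfl, hxm.le⟩ ht ht.1)
      refine ⟨min m y', ?_, lt_min hxm hy', min_le_right _ _⟩
      intro t ht
      rcases le_or_gt t x with h | h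
      · exact hnn t ⟨ht.1, h⟩
      · have htm : t ∈ Icc x m := ⟨h.le, ht.2.trans (min_le_left _ _)⟩
        exact ⟨hYnn t htm, hY₁nn t htm, hZnn t htm, (hZ₁pos t htm).le⟩
  have hsubs : Icc c β ⊆ s := hclosed.Icc_subset_of_forall_exists_gt hcs hgt
  have hnnAll : ∀ t ∈ Icc c β, 0 ≤ Y t ∧ 0 ≤ Y₁ t ∧ 0 ≤ Z t ∧ 0 ≤ Z₁ t :=
    fun t ht => hsubs ht t ⟨ht.1, le_rfl⟩
  have hZpos : ∀ t ∈ Ioc c β, 0 < Z t := by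
    rcases hstr with h | h
    · intro t ht
      have hMZ : MonotoneOn Z (Icc c β) := mono_aux hcα le_rfl hZ
        (fun u hu => (hnnAll u ⟨hu.1.le, hu.2.le⟩).2.2.2)
      exact h.trans_le (hMZ ⟨le_rfl, hcβ.le⟩ ⟨ht.1.le, ht.2⟩ ht.1.le)
    · have hMZ₁ : MonotoneOn Z₁ (Icc c β) := mono_aux hcα le_rfl hZ₁
        (fun u hu => mul_nonneg (hQ u ⟨hcα.trans hu.1.le, hu.2.le⟩)
          (hnnAll u ⟨hu.1.le, hu.2.le⟩).1)
      have hSZ : StrictMonoOn Z (Icc c β) := strict_aux hcα le_rfl hZ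
        (fun u hu => h.trans_le (hMZ₁ ⟨le_rfl, hcβ.le⟩ ⟨hu.1.le, hu.2.le⟩ hu.1.le))
      intro t ht
      have := hSZ ⟨le_rfl, hcβ.le⟩ ⟨ht.1.le, ht.2⟩ ht.1
      linarith
  have hSY₁ : StrictMonoOn Y₁ (Icc c β) := strict_aux hcα le_rfl hY₁
    (fun u hu => div_pos (hZpos u ⟨hu.1, hu.2.le⟩) (hP u ⟨hcα.trans hu.1.le, hu.2.le⟩))
  have hY₁pos : ∀ t ∈ Ioc c β, 0 < Y₁ t := by
    intro t ht
    have := hSY₁ ⟨le_rfl, hcβ.le⟩ ⟨ht.1.le, ht.2⟩ ht.1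
    rwa [hY₁c] at this
  have hSY : StrictMonoOn Y (Icc c β) := strict_aux hcα le_rfl hY
    (fun u hu => hY₁pos u ⟨hu.1, hu.2.le⟩)
  intro t ht
  refine ⟨?_, hY₁pos t ht⟩
  have := hSY ⟨le_rfl, hcβ.le⟩ ⟨ht.1.le, ht.2⟩ ht.1
  rwa [hYc] at this


/-- Uniqueness (vanishing) via Grönwall for the cooperative system. -/
lemma zero_lemma {P Q Y Y₁ Z Z₁ : ℝ → ℝ} {α β pδ qM : ℝ}
    (hpδ : 0 < pδ)
    (hPb : ∀ x ∈ Icc α β, pδ ≤ P x) (hQb : ∀ x ∈ Icc α β, |Q x| ≤ qM)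
    (hY : ∀ x ∈ Icc α β, HasDerivWithinAt Y (Y₁ x) (Icc α β) x)
    (hY₁ : ∀ x ∈ Icc α β, HasDerivWithinAt Y₁ (Z x / P x) (Icc α β) x)
    (hZ : ∀ x ∈ Icc α β, HasDerivWithinAt Z (Z₁ x) (Icc α β) x)
    (hZ₁ : ∀ x ∈ Icc α β, HasDerivWithinAt Z₁ (Q x * Y x) (Icc α β) x)
    (hY0 : Y α = 0) (hY₁0 : Y₁ α = 0) (hZ0 : Z α = 0) (hZ₁0 : Z₁ α = 0) :
    ∀ x ∈ Icc α β, Y x = 0 := by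
  set K : ℝ := max (max 1 pδ⁻¹) qM with hK
  have hK1 : (1 : ℝ) ≤ K := le_max_of_le_left (le_max_left _ _)
  have hKp : pδ⁻¹ ≤ K := le_max_of_le_left (le_max_right _ _)
  have hKq : qM ≤ K := le_max_right _ _
  have hK0 : (0 : ℝ) ≤ K := le_trans zero_le_one hK1
  have cY : ContinuousOn Y (Icc α β) := fun t ht => (hY t ht).continuousWithinAt
  have cY₁ : ContinuousOn Y₁ (Icc α β) := fun t ht => (hY₁ t ht).continuousWithinAt
  have cZ : ContinuousOn Z (Icc α β) := fun t ht => (hZ t ht).continuousWithinAt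
  have cZ₁ : ContinuousOn Z₁ (Icc α β) := fun t ht => (hZ₁ t ht).continuousWithinAt
  have hcont : ContinuousOn (fun x => (((Y x, Y₁ x), (Z x, Z₁ x)) : (ℝ × ℝ) × ℝ × ℝ)) (Icc α β) :=
    (cY.prodMk cY₁).prodMk (cZ.prodMk cZ₁)
  have hderiv : ∀ x ∈ Ico α β,
      HasDerivWithinAt (fun x => (((Y x, Y₁ x), (Z x, Z₁ x)) : (ℝ × ℝ) × ℝ × ℝ))
        (((Y₁ x, Z x / P x), (Z₁ x, Q x * Y x)) : (ℝ × ℝ) × ℝ × ℝ) (Ici x) x := by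
    intro x hx
    have hxI : x ∈ Icc α β := ⟨hx.1, hx.2.le⟩
    have hmem : Icc α β ∈ nhdsWithin x (Ici x) := by
      rw [mem_nhdsWithin]
      exact ⟨Iio β, isOpen_Iio, hx.2, fun t ht => ⟨hx.1.trans ht.2, ht.1.le⟩⟩
    exact (((hY x hxI).mono_of_mem_nhdsWithin hmem).prodMk
        ((hY₁ x hxI).mono_of_mem_nhdsWithin hmem)).prodMk
      (((hZ x hxI).mono_of_mem_nhdsWithin hmem).prodMk
        ((hZ₁ x hxI).mono_of_mem_nhdsWithin hmem))
  have hbound : ∀ x ∈ Ico α β,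
      ‖(((Y₁ x, Z x / P x), (Z₁ x, Q x * Y x)) : (ℝ × ℝ) × ℝ × ℝ)‖ ≤
        K * ‖(((Y x, Y₁ x), (Z x, Z₁ x)) : (ℝ × ℝ) × ℝ × ℝ)‖ + 0 := by
    intro x hx
    have hxI : x ∈ Icc α β := ⟨hx.1, hx.2.le⟩
    have hNeq : ‖(((Y x, Y₁ x), (Z x, Z₁ x)) : (ℝ × ℝ) × ℝ × ℝ)‖
        = max (max |Y x| |Y₁ x|) (max |Z x| |Z₁ x|) := by
      simp [Prod.norm_def, Real.norm_eq_abs]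
    have hN0 : 0 ≤ ‖(((Y x, Y₁ x), (Z x, Z₁ x)) : (ℝ × ℝ) × ℝ × ℝ)‖ := norm_nonneg _
    set N := ‖(((Y x, Y₁ x), (Z x, Z₁ x)) : (ℝ × ℝ) × ℝ × ℝ)‖ with hNdef
    have hYN : |Y x| ≤ N := by rw [hNeq]; exact le_max_of_le_left (le_max_left _ _)
    have hY₁N : |Y₁ x| ≤ N := by rw [hNeq]; exact le_max_of_le_left (le_max_right _ _)
    have hZN : |Z x| ≤ N := by rw [hNeq]; exact le_max_of_le_right (le_max_left _ _)
    have hZ₁N : |Z₁ x| ≤ N := by rw [hNeq]; exact le_max_of_le_right (le_max_right _ _)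
    have hPx : 0 < P x := hpδ.trans_le (hPb x hxI)
    have b1 : |Y₁ x| ≤ K * N := hY₁N.trans (le_mul_of_one_le_left hN0 hK1)
    have b3 : |Z₁ x| ≤ K * N := hZ₁N.trans (le_mul_of_one_le_left hN0 hK1)
    have b2 : |Z x / P x| ≤ K * N := by
      have : |Z x / P x| = |Z x| / P x := by rw [abs_div, abs_of_pos hPx]
      rw [this]
      calc |Z x| / P x ≤ |Z x| / pδ :=
            div_le_div_of_nonneg_left (abs_nonneg _) hpδ (hPb x hxI)
        _ = |Z x| * pδ⁻¹ := div_eq_mul_inv _ _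
        _ ≤ N * K := mul_le_mul hZN hKp (inv_nonneg.2 hpδ.le) hN0
        _ = K * N := mul_comm _ _
    have b4 : |Q x * Y x| ≤ K * N := by
      rw [abs_mul]
      exact mul_le_mul ((hQb x hxI).trans hKq) hYN (abs_nonneg _) hK0
    have hN'eq : ‖(((Y₁ x, Z x / P x), (Z₁ x, Q x * Y x)) : (ℝ × ℝ) × ℝ × ℝ)‖
        = max (max |Y₁ x| |Z x / P x|) (max |Z₁ x| |Q x * Y x|) := by
      simp [Prod.norm_def, Real.norm_eq_abs, abs_div, abs_mul]
    rw [hN'eq, add_zero]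
    exact max_le (max_le b1 b2) (max_le b3 b4)
  have hstart : ‖(((Y α, Y₁ α), (Z α, Z₁ α)) : (ℝ × ℝ) × ℝ × ℝ)‖ ≤ 0 := by
    rw [hY0, hY₁0, hZ0, hZ₁0]
    simp [Prod.norm_def]
  have key := norm_le_gronwallBound_of_norm_deriv_right_le hcont hderiv hstart hbound
  intro x hx
  have h1 := key x hx
  rw [gronwallBound_ε0_δ0] at h1
  have hNeq : ‖(((Y x, Y₁ x), (Z x, Z₁ x)) : (ℝ × ℝ) × ℝ × ℝ)‖
      = max (max |Y x| |Y₁ x|) (max |Z x| |Z₁ x|) := by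
    simp [Prod.norm_def, Real.norm_eq_abs]
  rw [hNeq] at h1
  have : |Y x| ≤ 0 := le_trans (le_max_of_le_left (le_max_left _ _)) h1
  exact abs_nonpos_iff.1 this


/-- A nontrivial double zero at `a ∈ (0,1)` with `Z a ≥ 0` is impossible. -/
lemma no_pos_case {P Q Y Y₁ Z Z₁ : ℝ → ℝ}
    (hP : ∀ x ∈ Icc (0:ℝ) 1, 0 < P x) (hQ : ∀ x ∈ Icc (0:ℝ) 1, 0 ≤ Q x)
    (hY : ∀ x ∈ Icc (0:ℝ) 1, HasDerivWithinAt Y (Y₁ x) (Icc 0 1) x)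
    (hY₁ : ∀ x ∈ Icc (0:ℝ) 1, HasDerivWithinAt Y₁ (Z x / P x) (Icc 0 1) x)
    (hZ : ∀ x ∈ Icc (0:ℝ) 1, HasDerivWithinAt Z (Z₁ x) (Icc 0 1) x)
    (hZ₁ : ∀ x ∈ Icc (0:ℝ) 1, HasDerivWithinAt Z₁ (Q x * Y x) (Icc 0 1) x)
    {a : ℝ} (ha : a ∈ Ioo (0:ℝ) 1)
    (hY0 : Y 0 = 0) (hY₁1 : Y₁ 1 = 0)
    (hYa : Y a = 0) (hY₁a : Y₁ a = 0)
    (hZa : 0 ≤ Z a) (hne : Z a ≠ 0 ∨ Z₁ a ≠ 0) : False := by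
  rcases le_or_gt 0 (Z₁ a) with hZ₁a | hZ₁a
  · -- forward propagation contradicts `Y₁ 1 = 0`
    have hstr : 0 < Z a ∨ 0 < Z₁ a := by
      rcases hne with h | h
      · exact Or.inl (lt_of_le_of_ne hZa (Ne.symm h))
      · rcases lt_or_eq_of_le hZa with h' | h'
        · exact Or.inl h'
        · exact Or.inr (lt_of_le_of_ne hZ₁a (Ne.symm h))
    have hcon := pos_lemma hP hQ hY hY₁ hZ hZ₁ ha.1.le ha.2 hYa hY₁a hZa hZ₁a hstr
    have h1 := (hcon 1 ⟨ha.2, le_rfl⟩).2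
    rw [hY₁1] at h1
    exact lt_irrefl 0 h1
  · -- backward propagation contradicts `Y 0 = 0`
    have hmap : ∀ s ∈ Icc (a - 1) (a - 0), a - s ∈ Icc (0:ℝ) 1 := by
      intro s hs
      simp only [mem_Icc] at hs ⊢
      constructor <;> linarith [hs.1, hs.2]
    have hP' : ∀ s ∈ Icc (a - 1) (a - 0), 0 < P (a - s) :=
      fun s hs => hP _ (hmap s hs)
    have hQ' : ∀ s ∈ Icc (a - 1) (a - 0), 0 ≤ Q (a - s) :=
      fun s hs => hQ _ (hmap s hs)
    have hY' := reverse_deriv (a := a) rfl rfl hY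
    have hY₁' : ∀ s ∈ Icc (a - 1) (a - 0),
        HasDerivWithinAt (fun t => -Y₁ (a - t)) (Z (a - s) / P (a - s)) (Icc (a - 1) (a - 0)) s := by
      intro s hs
      have h := (reverse_deriv (a := a) rfl rfl hY₁ s hs).neg
      rw [neg_neg] at h
      exact h
    have hZ' := reverse_deriv (a := a) rfl rfl hZ
    have hZ₁' : ∀ s ∈ Icc (a - 1) (a - 0),
        HasDerivWithinAt (fun t => -Z₁ (a - t)) (Q (a - s) * Y (a - s)) (Icc (a - 1) (a - 0)) s := by
      intro s hs
      have h := (reverse_deriv (a := a) rfl rfl hZ₁ s hs).neg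
      rw [neg_neg] at h
      exact h
    have hcon := pos_lemma (P := fun s => P (a - s)) (Q := fun s => Q (a - s))
      (Y := fun s => Y (a - s)) (Y₁ := fun s => -Y₁ (a - s))
      (Z := fun s => Z (a - s)) (Z₁ := fun s => -Z₁ (a - s))
      (α := a - 1) (β := a - 0) (c := 0)
      hP' hQ' hY' hY₁' hZ' hZ₁'
      (by linarith [ha.2]) (by simpa using ha.1)
      (by simpa using hYa) (by simp [hY₁a]) (by simpa using hZa)
      (by simp; linarith) (Or.inr (by simp; linarith))
    have h1 : (0:ℝ) < Y (a - a) := (hcon a ⟨ha.1, by simp⟩).1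
    rw [sub_self, hY0] at h1
    exact lt_irrefl 0 h1

/-- If the whole quadruple vanishes at a point, `Y` vanishes identically. -/
lemma all_zero {P Q Y Y₁ Z Z₁ : ℝ → ℝ} {pδ qM : ℝ} (hpδ : 0 < pδ)
    (hPb : ∀ x ∈ Icc (0:ℝ) 1, pδ ≤ P x) (hQb : ∀ x ∈ Icc (0:ℝ) 1, |Q x| ≤ qM)
    (hY : ∀ x ∈ Icc (0:ℝ) 1, HasDerivWithinAt Y (Y₁ x) (Icc 0 1) x)
    (hY₁ : ∀ x ∈ Icc (0:ℝ) 1, HasDerivWithinAt Y₁ (Z x / P x) (Icc 0 1) x)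
    (hZ : ∀ x ∈ Icc (0:ℝ) 1, HasDerivWithinAt Z (Z₁ x) (Icc 0 1) x)
    (hZ₁ : ∀ x ∈ Icc (0:ℝ) 1, HasDerivWithinAt Z₁ (Q x * Y x) (Icc 0 1) x)
    {a : ℝ} (ha : a ∈ Icc (0:ℝ) 1)
    (hYa : Y a = 0) (hY₁a : Y₁ a = 0) (hZa : Z a = 0) (hZ₁a : Z₁ a = 0) :
    ∀ x ∈ Icc (0:ℝ) 1, Y x = 0 := by
  have hsub1 : Icc a 1 ⊆ Icc (0:ℝ) 1 := Icc_subset_Icc ha.1 le_rfl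
  have hsub0 : Icc (0:ℝ) a ⊆ Icc (0:ℝ) 1 := Icc_subset_Icc le_rfl ha.2
  -- forward on [a, 1]
  have hfwd : ∀ x ∈ Icc a 1, Y x = 0 := by
    refine zero_lemma hpδ (fun x hx => hPb x (hsub1 hx)) (fun x hx => hQb x (hsub1 hx))
      (fun x hx => (hY x (hsub1 hx)).mono hsub1)
      (fun x hx => (hY₁ x (hsub1 hx)).mono hsub1)
      (fun x hx => (hZ x (hsub1 hx)).mono hsub1)
      (fun x hx => (hZ₁ x (hsub1 hx)).mono hsub1)
      hYa hY₁a hZa hZ₁a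
  -- backward on [0, a] via time reversal
  have hmap : ∀ s ∈ Icc (a - a) (a - 0), a - s ∈ Icc (0:ℝ) a := by
    intro s hs
    simp only [mem_Icc] at hs ⊢
    constructor <;> linarith [hs.1, hs.2]
  have hY0a : ∀ x ∈ Icc (0:ℝ) a, HasDerivWithinAt Y (Y₁ x) (Icc 0 a) x :=
    fun x hx => (hY x (hsub0 hx)).mono hsub0
  have hY₁0a : ∀ x ∈ Icc (0:ℝ) a, HasDerivWithinAt Y₁ (Z x / P x) (Icc 0 a) x :=
    fun x hx => (hY₁ x (hsub0 hx)).mono hsub0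
  have hZ0a : ∀ x ∈ Icc (0:ℝ) a, HasDerivWithinAt Z (Z₁ x) (Icc 0 a) x :=
    fun x hx => (hZ x (hsub0 hx)).mono hsub0
  have hZ₁0a : ∀ x ∈ Icc (0:ℝ) a, HasDerivWithinAt Z₁ (Q x * Y x) (Icc 0 a) x :=
    fun x hx => (hZ₁ x (hsub0 hx)).mono hsub0
  have hY' := reverse_deriv (a := a) rfl rfl hY0a
  have hY₁' : ∀ s ∈ Icc (a - a) (a - 0),
      HasDerivWithinAt (fun t => -Y₁ (a - t)) (Z (a - s) / P (a - s)) (Icc (a - a) (a - 0)) s := by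
    intro s hs
    have h := (reverse_deriv (a := a) rfl rfl hY₁0a s hs).neg
    rw [neg_neg] at h
    exact h
  have hZ' := reverse_deriv (a := a) rfl rfl hZ0a
  have hZ₁' : ∀ s ∈ Icc (a - a) (a - 0),
      HasDerivWithinAt (fun t => -Z₁ (a - t)) (Q (a - s) * Y (a - s)) (Icc (a - a) (a - 0)) s := by
    intro s hs
    have h := (reverse_deriv (a := a) rfl rfl hZ₁0a s hs).neg
    rw [neg_neg] at h
    exact h
  have hbwd := zero_lemma (pδ := pδ) (qM := qM)
    (P := fun s => P (a - s)) (Q := fun s => Q (a - s))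
    (Y := fun s => Y (a - s)) (Y₁ := fun s => -Y₁ (a - s))
    (Z := fun s => Z (a - s)) (Z₁ := fun s => -Z₁ (a - s))
    hpδ (fun s hs => hPb _ (hsub0 (hmap s hs))) (fun s hs => hQb _ (hsub0 (hmap s hs)))
    hY' hY₁' hZ' hZ₁'
    (by simp [hYa]) (by simp [hY₁a]) (by simp [hZa]) (by simp [hZ₁a])
  intro x hx
  rcases le_or_gt x a with hxa | hxa
  · have hs : a - x ∈ Icc (a - a) (a - 0) := by
      simp only [mem_Icc]
      constructor <;> linarith [hx.1]
    have := hbwd (a - x) hs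
    simpa using this
  · exact hfwd x ⟨hxa.le, hx.2⟩


end Stmt5Aux

open Stmt5Aux in
theorem stmt_5 (p r : ℝ → ℝ) (lam : ℝ)
    (hpc : ContinuousOn p (Icc 0 1)) (hrc : ContinuousOn r (Icc 0 1))
    (hp : ∀ x ∈ Icc (0:ℝ) 1, 0 < p x) (hr : ∀ x ∈ Icc (0:ℝ) 1, 0 < r x)
    (hlam : 0 < lam) (y : ℝ → ℝ)
    (hy : SolS p r lam y) (hnt : Nontriv y)
    (hbc : y 0 = 0 ∧ Dv y 0 = 0 ∧ Dv y 1 = 0)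
    (a : ℝ) (ha : a ∈ Ioo (0:ℝ) 1) (hya : y a = 0) :
    Dv y a ≠ 0 := by
  intro hY₁a
  obtain ⟨h1, h2, h3⟩ := hy
  have hUD : UniqueDiffOn ℝ (Icc (0:ℝ) 1) := uniqueDiffOn_Icc zero_lt_one
  set Z : ℝ → ℝ := fun x => p x * Dv (Dv y) x with hZdef
  set Q : ℝ → ℝ := fun x => lam * r x with hQdef
  -- derivative facts
  have hYd : ∀ x ∈ Icc (0:ℝ) 1, HasDerivWithinAt y (Dv y x) (Icc 0 1) x := by
    intro x hx
    simp only [Dv]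
    exact ((h1.differentiableOn (by norm_num)) x hx).hasDerivWithinAt
  have h1' : ContDiffOn ℝ 1 (derivWithin y (Icc (0:ℝ) 1)) (Icc 0 1) :=
    h1.derivWithin hUD (by norm_num)
  have hY₁d : ∀ x ∈ Icc (0:ℝ) 1, HasDerivWithinAt (Dv y) (Dv (Dv y) x) (Icc 0 1) x := by
    intro x hx
    simp only [Dv]
    exact ((h1'.differentiableOn one_ne_zero) x hx).hasDerivWithinAt
  have hY₁d' : ∀ x ∈ Icc (0:ℝ) 1, HasDerivWithinAt (Dv y) (Z x / p x) (Icc 0 1) x := by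
    intro x hx
    have hpx : p x ≠ 0 := (hp x hx).ne'
    have heq : Z x / p x = Dv (Dv y) x := by
      rw [hZdef]
      field_simp
    rw [heq]
    exact hY₁d x hx
  have hZd : ∀ x ∈ Icc (0:ℝ) 1, HasDerivWithinAt Z (Dv Z x) (Icc 0 1) x := by
    intro x hx
    simp only [Dv]
    exact ((h2.differentiableOn (by norm_num)) x hx).hasDerivWithinAt
  have h2' : ContDiffOn ℝ 1 (derivWithin Z (Icc (0:ℝ) 1)) (Icc 0 1) :=
    h2.derivWithin hUD (by norm_num)
  have hZ₁d : ∀ x ∈ Icc (0:ℝ) 1, HasDerivWithinAt (Dv Z) (Dv (Dv Z) x) (Icc 0 1) x := by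
    intro x hx
    simp only [Dv]
    exact ((h2'.differentiableOn one_ne_zero) x hx).hasDerivWithinAt
  have hZ₁d' : ∀ x ∈ Icc (0:ℝ) 1, HasDerivWithinAt (Dv Z) (Q x * y x) (Icc 0 1) x := by
    intro x hx
    have h := hZ₁d x hx
    rw [h3 x hx] at h
    have heq : Q x * y x = lam * (r x * y x) := by
      rw [hQdef]
      ring
    rw [heq]
    exact h
  -- bounds
  have hQ0 : ∀ x ∈ Icc (0:ℝ) 1, 0 ≤ Q x := by
    intro x hx
    rw [hQdef]
    exact mul_nonneg hlam.le (hr x hx).le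
  obtain ⟨xm, hxmI, hxmin⟩ :=
    isCompact_Icc.exists_isMinOn (nonempty_Icc.2 zero_le_one) hpc
  have hpδ : 0 < p xm := hp xm hxmI
  have hPb : ∀ x ∈ Icc (0:ℝ) 1, p xm ≤ p x := fun x hx => isMinOn_iff.1 hxmin x hx
  have hQc : ContinuousOn Q (Icc (0:ℝ) 1) := continuousOn_const.mul hrc
  obtain ⟨xM, hxMI, hxmax⟩ :=
    isCompact_Icc.exists_isMaxOn (nonempty_Icc.2 zero_le_one) hQc
  have hQb : ∀ x ∈ Icc (0:ℝ) 1, |Q x| ≤ Q xM := by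
    intro x hx
    rw [abs_of_nonneg (hQ0 x hx)]
    exact isMaxOn_iff.1 hxmax x hx
  have haI : a ∈ Icc (0:ℝ) 1 := Ioo_subset_Icc_self ha
  by_cases hzero : Z a = 0 ∧ Dv Z a = 0
  · have hall := all_zero hpδ hPb hQb hYd hY₁d' hZd hZ₁d' haI hya hY₁a hzero.1 hzero.2
    obtain ⟨x₀, hx₀, hne⟩ := hnt
    exact hne (hall x₀ hx₀)
  · have hne' : Z a ≠ 0 ∨ Dv Z a ≠ 0 := by tauto
    rcases le_or_gt 0 (Z a) with hZa | hZa
    · exact no_pos_case hp hQ0 hYd hY₁d' hZd hZ₁d' ha hbc.1 hbc.2.2 hya hY₁a hZa hne'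
    · refine no_pos_case (P := p) (Q := Q) (Y := fun x => -y x) (Y₁ := fun x => -Dv y x)
        (Z := fun x => -Z x) (Z₁ := fun x => -Dv Z x) hp hQ0
        (fun x hx => (hYd x hx).neg)
        (fun x hx => by simpa [neg_div] using (hY₁d' x hx).fun_neg)
        (fun x hx => (hZd x hx).neg)
        (fun x hx => by simpa [mul_neg] using (hZ₁d' x hx).fun_neg)
        ha (by simp only [hbc.1, neg_zero]) (by simp only [hbc.2.2, neg_zero])
        (by simp only [hya, neg_zero]) (by simp only [hY₁a, neg_zero])
        (by simp; linarith) ?_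
      left
      simp only [neg_ne_zero]
      exact hZa.ne
end

section
/- Let p, r : [0,1] → ℝ be continuous with p(x) > 0 and r(x) > 0 for all x ∈ [0,1], and let f : [0,1] → ℝ be continuous. Let y ∈ C²([0,1],ℝ) with p·y'' ∈ C²([0,1],ℝ) satisfy (p·y'')''(x) = r(x)·f(x) for all x ∈ [0,1] and the boundary conditions y(0) = y'(0) = y(1) = y'(1) = 0. If y has at least n sign changes on (0,1), then f has at least n sign changes on (0,1). -/
open Set

/-- `g` has at least `n` sign changes on `(0,1)`: there exist points
`0 < x₁ < … < x_{n+1} < 1` with `g(x_k) * g(x_{k+1}) < 0` for all `k`. -/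
def SignChanges (g : ℝ → ℝ) (n : ℕ) : Prop :=
  ∃ x : Fin (n + 1) → ℝ, StrictMono x ∧ (∀ k, x k ∈ Set.Ioo (0:ℝ) 1) ∧
    ∀ k : Fin n, g (x k.castSucc) * g (x k.succ) < 0

/-- `g` takes values of alternating sign (pattern `ε, -ε, ε, …`) at `N` increasing
points of `(0,1)`. -/
def Alt (g : ℝ → ℝ) (N : ℕ) (ε : ℝ) : Prop :=
  ∃ x : ℕ → ℝ, (∀ k, k + 1 < N → x k < x (k+1)) ∧ (∀ k, k < N → x k ∈ Set.Ioo (0:ℝ) 1) ∧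
    (∀ k, k < N → 0 < ε * (-1)^k * g (x k))

/-- Core mean value step: if the increments of `g` along a monotone chain in `[0,1]`
alternate in sign, then `g'` alternates in sign at intermediate points. -/
lemma mvt_alt (g g' : ℝ → ℝ) (hc : ContinuousOn g (Icc 0 1))
    (hd : ∀ t ∈ Ioo (0:ℝ) 1, HasDerivAt g (g' t) t)
    (M : ℕ) (ε : ℝ) (X : ℕ → ℝ)
    (hX1 : ∀ k, k ≤ M → X k ∈ Icc (0:ℝ) 1)
    (hX2 : ∀ k, k < M → X k < X (k+1))
    (hsign : ∀ k, k < M → 0 < ε * (-1)^k * (g (X (k+1)) - g (X k))) :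
    Alt g' M ε := by
  have key : ∀ k, ∃ c, k < M → (c ∈ Ioo (X k) (X (k+1)) ∧ 0 < ε * (-1)^k * g' c) := by
    intro k
    by_cases hk : k < M
    · have h0 : (0:ℝ) ≤ X k := (hX1 k hk.le).1
      have h1 : X (k+1) ≤ 1 := (hX1 (k+1) hk).2
      obtain ⟨c, hcmem, hceq⟩ := exists_hasDerivAt_eq_slope g g' (hX2 k hk)
        (hc.mono (Icc_subset_Icc h0 h1))
        (fun t ht => hd t ⟨lt_of_le_of_lt h0 ht.1, lt_of_lt_of_le ht.2 h1⟩)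
      refine ⟨c, fun _ => ⟨hcmem, ?_⟩⟩
      rw [hceq]
      have hw : 0 < X (k+1) - X k := sub_pos.2 (hX2 k hk)
      rw [mul_div_assoc']
      exact div_pos (hsign k hk) hw
    · exact ⟨0, fun h => absurd h hk⟩
  choose c hc' using key
  refine ⟨c, fun k hk => ?_, fun k hk => ?_, fun k hk => (hc' k hk).2⟩
  · have h1 := (hc' k (by omega)).1
    have h2 := (hc' (k+1) hk).1
    exact h1.2.trans h2.1
  · have h1 := (hc' k hk).1
    have h0 : (0:ℝ) ≤ X k := (hX1 k hk.le).1
    have hl : X (k+1) ≤ 1 := (hX1 (k+1) hk).2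
    exact ⟨lt_of_le_of_lt h0 h1.1, lt_of_lt_of_le h1.2 hl⟩

/-- MVT alternation step without boundary conditions: lose one point, flip sign. -/
lemma altB {g g' : ℝ → ℝ} (hc : ContinuousOn g (Icc 0 1))
    (hd : ∀ t ∈ Ioo (0:ℝ) 1, HasDerivAt g (g' t) t)
    {m : ℕ} {ε : ℝ} (h : Alt g (m+1) ε) : Alt g' m (-ε) := by
  obtain ⟨x, hadj, hmem, hsgn⟩ := h
  refine mvt_alt g g' hc hd m (-ε) x
    (fun k hk => Ioo_subset_Icc_self (hmem k (by omega)))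
    (fun k hk => hadj k (by omega)) (fun k hk => ?_)
  have A := hsgn k (by omega)
  have B := hsgn (k+1) (by omega)
  have hp : (-1:ℝ)^(k+1) = -(-1)^k := by ring
  rw [hp] at B
  nlinarith [A, B]

/-- MVT alternation step with zero boundary values: gain one point, keep sign. -/
lemma altC {g g' : ℝ → ℝ} (hc : ContinuousOn g (Icc 0 1))
    (hd : ∀ t ∈ Ioo (0:ℝ) 1, HasDerivAt g (g' t) t)
    (h0 : g 0 = 0) (h1 : g 1 = 0)
    {m : ℕ} {ε : ℝ} (h : Alt g (m+1) ε) : Alt g' (m+2) ε := by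
  obtain ⟨x, hadj, hmem, hsgn⟩ := h
  set X : ℕ → ℝ := fun j => if j = 0 then 0 else if j < m + 2 then x (j - 1) else 1 with hX
  have hXmid : ∀ j, j < m + 1 → X (j+1) = x j := by
    intro j hj
    simp only [hX]
    rw [if_neg (by omega), if_pos (by omega)]
    norm_num
  have hX0 : X 0 = 0 := by simp [hX]
  have hXlast : X (m+2) = 1 := by simp only [hX]; rw [if_neg (by omega), if_neg (by omega)]
  refine mvt_alt g g' hc hd (m+2) ε X (fun k hk => ?_) (fun k hk => ?_) (fun k hk => ?_)
  · rcases Nat.eq_zero_or_pos k with rfl | hk0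
    · simp [hX0]
    · rcases Nat.lt_or_ge k (m+2) with h' | h'
      · obtain ⟨j, rfl⟩ : ∃ j, k = j + 1 := ⟨k - 1, by omega⟩
        rw [hXmid j (by omega)]
        exact Ioo_subset_Icc_self (hmem j (by omega))
      · have : k = m + 2 := by omega
        rw [this, hXlast]; exact ⟨zero_le_one, le_refl 1⟩
  · rcases Nat.eq_zero_or_pos k with rfl | hk0
    · rw [hX0, hXmid 0 (by omega)]
      exact (hmem 0 (by omega)).1
    · obtain ⟨j, rfl⟩ : ∃ j, k = j + 1 := ⟨k - 1, by omega⟩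
      rw [hXmid j (by omega)]
      rcases Nat.lt_or_ge (j+1) (m+1) with h' | h'
      · rw [hXmid (j+1) h']
        exact hadj j (by omega)
      · have hj : j = m := by omega
        rw [show j + 1 + 1 = m + 2 by omega, hXlast]
        exact (hmem j (by omega)).2
  · rcases Nat.eq_zero_or_pos k with rfl | hk0
    · rw [hX0, hXmid 0 (by omega), h0]
      simpa using hsgn 0 (by omega)
    · obtain ⟨j, rfl⟩ : ∃ j, k = j + 1 := ⟨k - 1, by omega⟩
      rw [hXmid j (by omega)]
      rcases Nat.lt_or_ge (j+1) (m+1) with h' | h'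
      · rw [hXmid (j+1) h']
        have A := hsgn j (by omega)
        have B := hsgn (j+1) (by omega)
        have hp : (-1:ℝ)^(j+1) = -(-1)^j := by ring
        rw [hp] at B ⊢
        nlinarith [A, B]
      · have hj : j = m := by omega
        rw [show j + 1 + 1 = m + 2 by omega, hXlast, h1]
        have A := hsgn j (by omega)
        have hp : (-1:ℝ)^(j+1) = -(-1)^j := by ring
        rw [hp]
        nlinarith [A]

lemma mono_of_adj {x : ℕ → ℝ} {N : ℕ} (h : ∀ k, k + 1 < N → x k < x (k+1)) :
    ∀ i j, i < j → j < N → x i < x j := by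
  intro i j hij hj
  induction j with
  | zero => omega
  | succ m ih =>
    rcases Nat.lt_or_ge i m with h' | h'
    · exact (ih h' (by omega)).trans (h m hj)
    · have : i = m := by omega
      rw [this]
      exact h m hj

/-- From `Alt g (n+2) ε` (with `ε² = 1`) we get `n+1` sign changes. -/
lemma alt_to_signChanges {g : ℝ → ℝ} {n : ℕ} {ε : ℝ} (hε : ε * ε = 1)
    (h : Alt g (n + 2) ε) : SignChanges g (n + 1) := by
  obtain ⟨x, hadj, hmem, hsgn⟩ := h
  refine ⟨fun k => x k, ?_, fun k => hmem k k.isLt, fun k => ?_⟩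
  · intro a b hab
    exact mono_of_adj hadj a b hab b.isLt
  · have A := hsgn k (by omega)
    have B := hsgn ((k:ℕ)+1) (by omega)
    show g (x (k:ℕ)) * g (x ((k:ℕ)+1)) < 0
    have hp : (-1:ℝ)^((k:ℕ)+1) = -(-1)^(k:ℕ) := by ring
    rw [hp] at B
    have hsq : (-1:ℝ)^(k:ℕ) * (-1)^(k:ℕ) = 1 := by
      rw [← pow_add]
      exact Even.neg_one_pow ⟨(k:ℕ), rfl⟩
    have ha2 : (ε*(-1:ℝ)^(k:ℕ))*(ε*(-1)^(k:ℕ)) = 1 := by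
      rw [mul_mul_mul_comm, hε, hsq, one_mul]
    have key : g (x (k:ℕ)) * g (x ((k:ℕ)+1)) =
        -((ε*(-1)^(k:ℕ)*g (x (k:ℕ))) * (ε*(-(-1)^(k:ℕ))*g (x ((k:ℕ)+1)))) := by
      linear_combination (-(g (x (k:ℕ)) * g (x ((k:ℕ)+1)))) * ha2
    rw [key]
    exact neg_lt_zero.mpr (mul_pos A B)

/-- From `n+1 ≥ 1` sign changes we get an alternation with some sign `ε`, `ε² = 1`. -/
lemma signChanges_to_alt {g : ℝ → ℝ} {n : ℕ}
    (h : SignChanges g (n + 1)) : ∃ ε : ℝ, ε * ε = 1 ∧ Alt g (n + 2) ε := by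
  obtain ⟨x, hmono, hmem, hprod⟩ := h
  set xx : ℕ → ℝ := fun k => x ⟨min k (n+1), by omega⟩ with hxx
  have hxxeq : ∀ k : ℕ, (hk : k < n + 2) → xx k = x ⟨k, hk⟩ := by
    intro k hk
    simp only [hxx]
    congr 1
    exact Fin.ext (by simp; omega)
  have hprod' : ∀ k : ℕ, k < n + 1 → g (xx k) * g (xx (k+1)) < 0 := by
    intro k hk
    have := hprod ⟨k, hk⟩
    rw [hxxeq k (by omega), hxxeq (k+1) (by omega)]
    convert this using 3 <;> rfl
  set ε : ℝ := if 0 < g (xx 0) then 1 else -1 with hε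
  have hε2 : ε * ε = 1 := by
    rcases ite_eq_or_eq (0 < g (xx 0)) (1:ℝ) (-1) with h' | h' <;> rw [hε, h'] <;> norm_num
  refine ⟨ε, hε2, xx, ?_, ?_, ?_⟩
  · intro k hk
    rw [hxxeq k (by omega), hxxeq (k+1) (by omega)]
    exact hmono (by simp [Fin.lt_def])
  · intro k hk
    rw [hxxeq k hk]
    exact hmem _
  · intro k
    induction k with
    | zero =>
      intro _
      have hne : g (xx 0) ≠ 0 := by
        intro h0
        have := hprod' 0 (by omega)
        rw [h0] at this
        simp at this
      simp only [hε, pow_zero]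
      rcases lt_trichotomy 0 (g (xx 0)) with h' | h' | h'
      · rw [if_pos h']; linarith
      · exact absurd h'.symm hne
      · rw [if_neg (by linarith)]; nlinarith
    | succ m ih =>
      intro hm
      have A := ih (by omega)
      have B := hprod' m (by omega)
      have hp : (-1:ℝ)^(m+1) = -(-1)^m := by ring
      rw [hp]
      have hsq : (-1:ℝ)^m * (-1)^m = 1 := by
        rw [← pow_add]; exact Even.neg_one_pow ⟨m, rfl⟩
      have ha2 : (ε*(-1:ℝ)^m)*(ε*(-1)^m) = 1 := by
        rw [mul_mul_mul_comm, hε2, hsq, one_mul]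
      have key2 : (ε*(-1:ℝ)^m*g (xx m))*(ε*(-1)^m*g (xx m)) = g (xx m) * g (xx m) := by
        linear_combination (g (xx m) * g (xx m)) * ha2
      have hu2 : 0 < g (xx m) * g (xx m) := key2 ▸ mul_pos A A
      have key3 : (ε * -(-1:ℝ)^m * g (xx (m+1))) * (g (xx m) * g (xx m)) =
          (ε*(-1)^m*g (xx m)) * (-(g (xx m) * g (xx (m+1)))) := by ring
      have h4 : 0 < (ε * -(-1:ℝ)^m * g (xx (m+1))) * (g (xx m) * g (xx m)) :=
        key3 ▸ mul_pos A (by linarith : (0:ℝ) < -(g (xx m) * g (xx (m+1))))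
      nlinarith [h4, hu2]

theorem stmt_6 (p r f y : ℝ → ℝ) (n : ℕ)
    (hpc : ContinuousOn p (Icc 0 1)) (hrc : ContinuousOn r (Icc 0 1))
    (hp : ∀ x ∈ Icc (0:ℝ) 1, 0 < p x) (hr : ∀ x ∈ Icc (0:ℝ) 1, 0 < r x)
    (hfc : ContinuousOn f (Icc 0 1))
    (hy : ContDiffOn ℝ 2 y (Icc 0 1))
    (hpy : ContDiffOn ℝ 2 (fun x => p x * Dv (Dv y) x) (Icc 0 1))
    (heq : ∀ x ∈ Icc (0:ℝ) 1, Dv (Dv (fun t => p t * Dv (Dv y) t)) x = r x * f x)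
    (hbc : y 0 = 0 ∧ Dv y 0 = 0 ∧ y 1 = 0 ∧ Dv y 1 = 0)
    (hsc : SignChanges y n) :
    SignChanges f n := by
  rcases Nat.eq_zero_or_pos n with rfl | hn
  · exact ⟨fun _ => (1:ℝ)/2, fun a b hab => absurd hab (by omega),
      fun k => by norm_num, fun k => k.elim0⟩
  obtain ⟨m, rfl⟩ : ∃ m, n = m + 1 := ⟨n - 1, by omega⟩
  have uniq : UniqueDiffOn ℝ (Icc (0:ℝ) 1) := uniqueDiffOn_Icc zero_lt_one
  -- derivative plumbing
  have hy1 : ContDiffOn ℝ 1 (Dv y) (Icc 0 1) := hy.derivWithin uniq (by norm_num)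
  have hu1 : ContDiffOn ℝ 1 (Dv (fun t => p t * Dv (Dv y) t)) (Icc 0 1) :=
    hpy.derivWithin uniq (by norm_num)
  have hdy : ∀ t ∈ Ioo (0:ℝ) 1, HasDerivAt y (Dv y t) t := fun t ht =>
    ((hy.differentiableOn (by norm_num)) t (Ioo_subset_Icc_self ht)).hasDerivWithinAt.hasDerivAt
      (Icc_mem_nhds ht.1 ht.2)
  have hdy1 : ∀ t ∈ Ioo (0:ℝ) 1, HasDerivAt (Dv y) (Dv (Dv y) t) t := fun t ht =>
    ((hy1.differentiableOn one_ne_zero) t (Ioo_subset_Icc_self ht)).hasDerivWithinAt.hasDerivAt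
      (Icc_mem_nhds ht.1 ht.2)
  have hdu : ∀ t ∈ Ioo (0:ℝ) 1, HasDerivAt (fun t => p t * Dv (Dv y) t)
      (Dv (fun t => p t * Dv (Dv y) t) t) t := fun t ht =>
    ((hpy.differentiableOn (by norm_num)) t (Ioo_subset_Icc_self ht)).hasDerivWithinAt.hasDerivAt
      (Icc_mem_nhds ht.1 ht.2)
  have hdu1 : ∀ t ∈ Ioo (0:ℝ) 1, HasDerivAt (Dv (fun t => p t * Dv (Dv y) t))
      (Dv (Dv (fun t => p t * Dv (Dv y) t)) t) t := fun t ht =>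
    ((hu1.differentiableOn one_ne_zero) t (Ioo_subset_Icc_self ht)).hasDerivWithinAt.hasDerivAt
      (Icc_mem_nhds ht.1 ht.2)
  -- the alternation chain
  obtain ⟨ε, hε2, alty⟩ := signChanges_to_alt hsc
  have alty1 : Alt (Dv y) (m+3) ε := altC hy.continuousOn hdy hbc.1 hbc.2.2.1 alty
  have alty2 : Alt (Dv (Dv y)) (m+4) ε := altC hy1.continuousOn hdy1 hbc.2.1 hbc.2.2.2 alty1
  have altu : Alt (fun t => p t * Dv (Dv y) t) (m+4) ε := by
    obtain ⟨w, hadj, hmem, hsgn⟩ := alty2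
    refine ⟨w, hadj, hmem, fun k hk => ?_⟩
    have h1 := hsgn k hk
    have h2 := hp (w k) (Ioo_subset_Icc_self (hmem k hk))
    show 0 < ε * (-1)^k * (p (w k) * Dv (Dv y) (w k))
    have hre : ε * (-1:ℝ)^k * (p (w k) * Dv (Dv y) (w k)) =
        p (w k) * (ε * (-1)^k * Dv (Dv y) (w k)) := by ring
    rw [hre]
    exact mul_pos h2 h1
  have altu1 : Alt (Dv (fun t => p t * Dv (Dv y) t)) (m+3) (-ε) :=
    altB hpy.continuousOn hdu altu
  have altu2 : Alt (Dv (Dv (fun t => p t * Dv (Dv y) t))) (m+2) (-(-ε)) :=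
    altB hu1.continuousOn hdu1 altu1
  rw [neg_neg] at altu2
  have altf : Alt f (m+2) ε := by
    obtain ⟨w, hadj, hmem, hsgn⟩ := altu2
    refine ⟨w, hadj, hmem, fun k hk => ?_⟩
    have h1 := hsgn k hk
    rw [heq (w k) (Ioo_subset_Icc_self (hmem k hk))] at h1
    have h2 := hr (w k) (Ioo_subset_Icc_self (hmem k hk))
    nlinarith [h1, h2]
  exact alt_to_signChanges hε2 altf
end
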